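/- arXiv:2108.04054 — 6 statements merged into one kernel-verified Lean document; each statement's English description precedes it below -/
import Mathlib

section
/- Fix a constraint value C > 0. A bounded measurable strategy f with mca(f) ≤ C satisfies wp(f; g) ≥ 0 for every bounded measurable strategy g with mca(g) ≤ C if and only if there exists a constant c > 0 such that f is almost everywhere equal to c on [0, 2C] and almost everywhere equal to 0 on (2C, ∞). -/
open MeasureTheory Set Filter Topology

/-- Mean competitive ability of a function supported in `[0, ∞)`:
`mca f = (∫₀^∞ t f(t) dt) / (∫₀^∞ f(t) dt)`. -/
noncomputable def mca (f : ℝ → ℝ) : ℝ :=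
  (∫ t in Ioi (0:ℝ), t * f t) / (∫ t in Ioi (0:ℝ), f t)

/-- Payoff of `f` against `g`:
`wp f g = ∫₀^∞ f(x) (∫₀ˣ g(t) dt − ∫ₓ^∞ g(t) dt) dx`. -/
noncomputable def wp (f g : ℝ → ℝ) : ℝ :=
  ∫ x in Ioi (0:ℝ), f x * ((∫ t in Ioc (0:ℝ) x, g t) - ∫ t in Ioi x, g t)

/-- A bounded measurable strategy: measurable, bounded, nonnegative, compactly
supported in `[0, ∞)`, and not almost everywhere zero. -/
def IsStrategy (f : ℝ → ℝ) : Prop :=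
  Measurable f ∧ (∃ Cb : ℝ, ∀ x, f x ≤ Cb) ∧ (∀ x, 0 ≤ f x) ∧
  (∃ R : ℝ, Function.support f ⊆ Icc 0 R) ∧ ¬ f =ᵐ[volume] (0 : ℝ → ℝ)

lemma strat_integrable {f : ℝ → ℝ} (hm : Measurable f) {Cb R : ℝ}
    (hb : ∀ x, f x ≤ Cb) (h0 : ∀ x, 0 ≤ f x)
    (hsupp : Function.support f ⊆ Icc 0 R) : Integrable f := by
  rw [← MeasureTheory.integrableOn_iff_integrable_of_support_subset hsupp]
  refine Measure.integrableOn_of_bounded (M := Cb) (by simp) hm.aestronglyMeasurable ?_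
  exact ae_of_all _ fun x => by rw [Real.norm_eq_abs, abs_of_nonneg (h0 x)]; exact hb x

-- F is continuous
lemma strat_F_cont {f : ℝ → ℝ} (hint : Integrable f)
    (hsupp : ∀ x, x < 0 → f x = 0) :
    Continuous (fun x => ∫ t in Ioc (0:ℝ) x, f t) := by
  have h := hint.continuous_primitive (0:ℝ)
  convert h using 1
  funext x
  rcases le_or_gt 0 x with hx | hx
  · rw [intervalIntegral.integral_of_le hx]
  · rw [intervalIntegral.integral_of_ge hx.le, Ioc_eq_empty (by linarith)]
    have : ∫ t in Ioc x 0, f t = 0 := by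
      rw [integral_Ioc_eq_integral_Ioo]
      exact setIntegral_eq_zero_of_forall_eq_zero fun t ht => hsupp t ht.2
    simp [this]


section Basics
variable {f : ℝ → ℝ}

lemma F_nonneg (h0 : ∀ x, 0 ≤ f x) (x : ℝ) : 0 ≤ ∫ t in Ioc (0:ℝ) x, f t :=
  setIntegral_nonneg measurableSet_Ioc fun t _ => h0 t

lemma F_mono (hint : Integrable f) (h0 : ∀ x, 0 ≤ f x) {a b : ℝ} (hab : a ≤ b) :
    (∫ t in Ioc (0:ℝ) a, f t) ≤ ∫ t in Ioc (0:ℝ) b, f t := by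
  apply setIntegral_mono_set hint.integrableOn (ae_of_all _ h0)
  exact HasSubset.Subset.eventuallyLE (Ioc_subset_Ioc_right hab)

lemma F_le_M (hint : Integrable f) (h0 : ∀ x, 0 ≤ f x) (x : ℝ) :
    (∫ t in Ioc (0:ℝ) x, f t) ≤ ∫ t in Ioi (0:ℝ), f t := by
  apply setIntegral_mono_set hint.integrableOn (ae_of_all _ h0)
  exact HasSubset.Subset.eventuallyLE Ioc_subset_Ioi_self

lemma M_split (hint : Integrable f) {x : ℝ} (hx : 0 ≤ x) :
    (∫ t in Ioi (0:ℝ), f t) = (∫ t in Ioc (0:ℝ) x, f t) + ∫ t in Ioi x, f t := by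
  rw [← setIntegral_union (Ioc_disjoint_Ioi le_rfl) measurableSet_Ioi
    hint.integrableOn hint.integrableOn, Ioc_union_Ioi_eq_Ioi hx]

lemma tail_zero {R : ℝ} (hsupp : Function.support f ⊆ Icc 0 R) {x : ℝ} (hx : R ≤ x) :
    (∫ t in Ioi x, f t) = 0 := by
  apply setIntegral_eq_zero_of_forall_eq_zero
  intro t ht
  by_contra h
  have := hsupp h
  simp only [mem_Icc] at this
  simp only [mem_Ioi] at ht
  linarith [this.2]

lemma F_eq_M (hint : Integrable f) {R : ℝ} (hsupp : Function.support f ⊆ Icc 0 R)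
    {x : ℝ} (hx0 : 0 ≤ x) (hxR : R ≤ x) :
    (∫ t in Ioc (0:ℝ) x, f t) = ∫ t in Ioi (0:ℝ), f t := by
  rw [M_split hint hx0, tail_zero hsupp hxR, add_zero]

lemma supp_neg_zero {R : ℝ} (hsupp : Function.support f ⊆ Icc 0 R) :
    ∀ x, x < 0 → f x = 0 := by
  intro x hx
  by_contra h
  have := hsupp h
  simp only [mem_Icc] at this
  linarith [this.1]

lemma M_pos (hint : Integrable f) (h0 : ∀ x, 0 ≤ f x) {R : ℝ}
    (hsupp : Function.support f ⊆ Icc 0 R) (hne : ¬ f =ᵐ[volume] (0 : ℝ → ℝ)) :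
    0 < ∫ t in Ioi (0:ℝ), f t := by
  rcases lt_or_eq_of_le (setIntegral_nonneg measurableSet_Ioi fun t _ => h0 t) with h | h
  · exact h
  exfalso
  apply hne
  have h1 : f =ᵐ[volume.restrict (Ioi (0:ℝ))] 0 := by
    rw [← integral_eq_zero_iff_of_nonneg (fun t => h0 t) hint.integrableOn]
    exact h.symm
  have h2 : ∀ᵐ x ∂volume, x ∈ Ioi (0:ℝ) → f x = 0 :=
    (ae_restrict_iff' measurableSet_Ioi).mp h1
  have h3 : ∀ᵐ x : ℝ ∂volume, x ∉ ({0} : Set ℝ) :=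
    measure_eq_zero_iff_ae_notMem.mp (measure_singleton 0)
  filter_upwards [h2, h3] with x hx hx0
  rcases lt_trichotomy x 0 with h' | h' | h'
  · exact supp_neg_zero hsupp x h'
  · exact absurd h' hx0
  · exact hx h'

end Basics


lemma tmul_integrable {f : ℝ → ℝ} (hm : Measurable f) {Cb R : ℝ}
    (hb : ∀ x, f x ≤ Cb) (h0 : ∀ x, 0 ≤ f x)
    (hsupp : Function.support f ⊆ Icc 0 R) : Integrable (fun t => t * f t) := by
  have hm' : Measurable (fun t => t * f t) := measurable_id.mul hm
  have hb' : ∀ t, t * f t ≤ max R 0 * max Cb 0 := by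
    intro t
    by_cases h : f t = 0
    · simp [h]
      positivity
    · have ht := hsupp h
      simp only [mem_Icc] at ht
      have : 0 ≤ f t := h0 t
      calc t * f t ≤ max R 0 * f t := by
            apply mul_le_mul_of_nonneg_right _ this
            exact le_max_of_le_left ht.2
        _ ≤ max R 0 * max Cb 0 := by
            apply mul_le_mul_of_nonneg_left _ (le_max_right R 0)
            exact le_max_of_le_left (hb t)
  have h0' : ∀ t, 0 ≤ t * f t := by
    intro t
    by_cases h : f t = 0
    · simp [h]
    · have ht := hsupp h
      simp only [mem_Icc] at ht
      exact mul_nonneg ht.1 (h0 t)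
  have hs' : Function.support (fun t => t * f t) ⊆ Icc 0 R := by
    intro t ht
    apply hsupp
    intro h
    apply ht
    simp [h]
  exact strat_integrable hm' hb' h0' hs'

lemma swap_integrable {f : ℝ → ℝ} (hm : Measurable f) {Cb : ℝ} (hb : ∀ x, |f x| ≤ Cb)
    {s t : Set ℝ} (hs : MeasurableSet s) (ht : MeasurableSet t)
    [IsFiniteMeasure (volume.restrict s)] [IsFiniteMeasure (volume.restrict t)]
    {P : ℝ → ℝ → Prop} [∀ x y, Decidable (P x y)]
    (hP : MeasurableSet {p : ℝ × ℝ | P p.1 p.2}) :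
    Integrable (Function.uncurry fun x y => if P x y then f y else 0)
      ((volume.restrict s).prod (volume.restrict t)) := by
  constructor
  · apply Measurable.aestronglyMeasurable
    exact Measurable.ite hP (hm.comp measurable_snd) measurable_const
  · apply HasFiniteIntegral.of_bounded (C := Cb)
    apply ae_of_all
    rintro ⟨x, y⟩
    simp only [Function.uncurry, Real.norm_eq_abs]
    by_cases h : P x y
    · rw [if_pos h]; exact hb y
    · rw [if_neg h, abs_zero]
      exact le_trans (abs_nonneg (f y)) (hb y)

lemma fub1 {f : ℝ → ℝ} (hm : Measurable f) {Cb R : ℝ}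
    (hb : ∀ x, f x ≤ Cb) (h0 : ∀ x, 0 ≤ f x)
    (hsupp : Function.support f ⊆ Icc 0 R) {T : ℝ} (hT0 : 0 ≤ T) (hTR : R ≤ T) :
    (∫ t in Ioi (0:ℝ), t * f t)
      = ∫ x in Ioc (0:ℝ) T, ((∫ t in Ioi (0:ℝ), f t) - ∫ t in Ioc (0:ℝ) x, f t) := by
  have hint : Integrable f := strat_integrable hm hb h0 hsupp
  have habs : ∀ x, |f x| ≤ max Cb 0 := fun x => by
    rw [abs_of_nonneg (h0 x)]; exact le_max_of_le_left (hb x)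
  -- step A : rewrite RHS integrand
  have stepA : ∀ x ∈ Ioc (0:ℝ) T,
      ((∫ t in Ioi (0:ℝ), f t) - ∫ t in Ioc (0:ℝ) x, f t)
        = ∫ t in Ioc (0:ℝ) T, (if x < t then f t else 0) := by
    intro x hx
    simp only [mem_Ioc] at hx
    have e1 : (fun t => if x < t then f t else 0) = (Ioi x).indicator f := by
      funext t; simp [indicator, mem_Ioi]
    rw [e1, setIntegral_indicator measurableSet_Ioi]
    have e2 : Ioc (0:ℝ) T ∩ Ioi x = Ioc x T := by
      ext y; simp only [mem_inter_iff, mem_Ioc, mem_Ioi]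
      constructor
      · rintro ⟨⟨_, h2⟩, h3⟩; exact ⟨h3, h2⟩
      · rintro ⟨h1, h2⟩; exact ⟨⟨lt_of_le_of_lt hx.1.le h1, h2⟩, h1⟩
    rw [e2, M_split hint hx.1.le]
    have e3 : (∫ t in Ioi x, f t) = ∫ t in Ioc x T, f t := by
      rw [← Ioc_union_Ioi_eq_Ioi hx.2,
        setIntegral_union (Ioc_disjoint_Ioi le_rfl) measurableSet_Ioi
          hint.integrableOn hint.integrableOn, tail_zero hsupp hTR, add_zero]
    rw [e3]; ring
  rw [setIntegral_congr_fun measurableSet_Ioc stepA]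
  rw [integral_integral_swap (swap_integrable hm habs measurableSet_Ioc measurableSet_Ioc
    (measurableSet_lt measurable_fst measurable_snd))]
  -- now compute inner integral over x
  have stepD : ∀ t ∈ Ioc (0:ℝ) T,
      (∫ x in Ioc (0:ℝ) T, (if x < t then f t else 0)) = t * f t := by
    intro t ht
    simp only [mem_Ioc] at ht
    have e1 : (fun x => if x < t then f t else 0) = (Iio t).indicator (fun _ => f t) := by
      funext x; simp [indicator, mem_Iio]
    rw [e1, setIntegral_indicator measurableSet_Iio, setIntegral_const]
    have e2 : Ioc (0:ℝ) T ∩ Iio t = Ioo 0 t := by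
      ext y; simp only [mem_inter_iff, mem_Ioc, mem_Ioo, mem_Iio]
      constructor
      · rintro ⟨⟨h1, _⟩, h3⟩; exact ⟨h1, h3⟩
      · rintro ⟨h1, h2⟩; exact ⟨⟨h1, le_trans h2.le ht.2⟩, h2⟩
    rw [e2, Real.volume_real_Ioo_of_le (by linarith [ht.1]), smul_eq_mul,
      sub_zero]
  rw [setIntegral_congr_fun measurableSet_Ioc stepD]
  -- finally extend Ioc 0 T to Ioi 0
  have hint2 : Integrable (fun t => t * f t) := tmul_integrable hm hb h0 hsupp
  have hs2 : Function.support (fun t => t * f t) ⊆ Icc 0 R := fun t ht => by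
    apply hsupp; intro h; apply ht; simp [h]
  exact (F_eq_M hint2 hs2 hT0 hTR).symm

open MeasureTheory Set Filter Topology
section D
variable {g : ℝ → ℝ}

lemma wp_eq (f : ℝ → ℝ) (hint : Integrable g) :
    wp f g = ∫ x in Ioi (0:ℝ),
      f x * (2 * (∫ t in Ioc (0:ℝ) x, g t) - ∫ t in Ioi (0:ℝ), g t) := by
  unfold wp
  apply setIntegral_congr_fun measurableSet_Ioi
  intro x hx
  simp only [mem_Ioi] at hx
  have := M_split hint (f := g) hx.le
  have e : (∫ t in Ioi x, g t)
      = (∫ t in Ioi (0:ℝ), g t) - ∫ t in Ioc (0:ℝ) x, g t := by linarith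
  show f x * ((∫ t in Ioc (0:ℝ) x, g t) - ∫ t in Ioi x, g t) = _
  rw [e]; ring

lemma fub2 (hm : Measurable g) {Cb R : ℝ}
    (hb : ∀ x, g x ≤ Cb) (h0 : ∀ x, 0 ≤ g x)
    (hsupp : Function.support g ⊆ Icc 0 R) {D : ℝ} (hD : 0 < D) :
    D * (∫ t in Ioi (0:ℝ), g t) - (∫ t in Ioi (0:ℝ), t * g t)
      ≤ ∫ x in Ioc (0:ℝ) D, (∫ t in Ioc (0:ℝ) x, g t) := by
  set T := max R D with hTdef
  have hT0 : (0:ℝ) ≤ T := le_trans hD.le (le_max_right R D)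
  have hTR : R ≤ T := le_max_left R D
  have hDT : D ≤ T := le_max_right R D
  have hint : Integrable g := strat_integrable hm hb h0 hsupp
  have habs : ∀ x, |g x| ≤ max Cb 0 := fun x => by
    rw [abs_of_nonneg (h0 x)]; exact le_max_of_le_left (hb x)
  -- step A
  have stepA : ∀ x ∈ Ioc (0:ℝ) D,
      (∫ t in Ioc (0:ℝ) x, g t) = ∫ t in Ioc (0:ℝ) T, (if t ≤ x then g t else 0) := by
    intro x hx
    simp only [mem_Ioc] at hx
    have e1 : (fun t => if t ≤ x then g t else 0) = (Iic x).indicator g := by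
      funext u; simp [indicator, mem_Iic]
    rw [e1, setIntegral_indicator measurableSet_Iic]
    have e2 : Ioc (0:ℝ) T ∩ Iic x = Ioc (0:ℝ) x := by
      ext y; simp only [mem_inter_iff, mem_Ioc, mem_Iic]
      constructor
      · rintro ⟨⟨h1, _⟩, h3⟩; exact ⟨h1, h3⟩
      · rintro ⟨h1, h2⟩; exact ⟨⟨h1, le_trans h2 (le_trans hx.2 hDT)⟩, h2⟩
    rw [e2]
  rw [setIntegral_congr_fun measurableSet_Ioc stepA]
  rw [integral_integral_swap (swap_integrable (P := fun x t => t ≤ x) hm habs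
    measurableSet_Ioc measurableSet_Ioc (measurableSet_le measurable_snd measurable_fst))]
  -- step D : inner integral
  have stepD : ∀ t ∈ Ioc (0:ℝ) T,
      (∫ x in Ioc (0:ℝ) D, (if t ≤ x then g t else 0)) = g t * max (D - t) 0 := by
    intro t ht
    simp only [mem_Ioc] at ht
    have e1 : (fun x => if t ≤ x then g t else 0) = (Ici t).indicator (fun _ => g t) := by
      funext u; simp [indicator, mem_Ici]
    rw [e1, setIntegral_indicator measurableSet_Ici, setIntegral_const]
    have e2 : Ioc (0:ℝ) D ∩ Ici t = Icc t D := by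
      ext y; simp only [mem_inter_iff, mem_Ioc, mem_Icc, mem_Ici]
      constructor
      · rintro ⟨⟨_, h2⟩, h3⟩; exact ⟨h3, h2⟩
      · rintro ⟨h1, h2⟩; exact ⟨⟨lt_of_lt_of_le ht.1 h1, h2⟩, h1⟩
    rw [e2, Real.volume_real_Icc, smul_eq_mul, mul_comm]
  rw [setIntegral_congr_fun measurableSet_Ioc stepD]
  -- now the inequality
  have hintt : Integrable (fun t => t * g t) := tmul_integrable hm hb h0 hsupp
  have hrhsint : IntegrableOn (fun t => D * g t - t * g t) (Ioc (0:ℝ) T) :=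
    ((hint.const_mul D).sub hintt).integrableOn
  have hlhsint : IntegrableOn (fun t => g t * max (D - t) 0) (Ioc (0:ℝ) T) := by
    apply Measure.integrableOn_of_bounded (M := max Cb 0 * max D 0) (by simp)
    · exact (hm.mul ((measurable_const.sub measurable_id).max measurable_const)).aestronglyMeasurable
    · filter_upwards [ae_restrict_mem measurableSet_Ioc] with t ht
      simp only [mem_Ioc] at ht
      rw [Real.norm_eq_abs, abs_of_nonneg (mul_nonneg (h0 t) (le_max_right _ _))]
      exact mul_le_mul (le_max_of_le_left (hb t)) (max_le_max (by linarith) le_rfl)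
        (le_max_right _ _) (le_max_right Cb 0)
  have hmono : ∫ t in Ioc (0:ℝ) T, (D * g t - t * g t)
      ≤ ∫ t in Ioc (0:ℝ) T, g t * max (D - t) 0 := by
    apply setIntegral_mono_on hrhsint hlhsint measurableSet_Ioc
    intro t _
    have : D * g t - t * g t = g t * (D - t) := by ring
    rw [this]
    exact mul_le_mul_of_nonneg_left (le_max_left _ _) (h0 t)
  refine le_trans ?_ hmono
  rw [integral_sub (hint.const_mul D).integrableOn hintt.integrableOn,
    integral_const_mul]
  have e3 : (∫ t in Ioc (0:ℝ) T, g t) = ∫ t in Ioi (0:ℝ), g t :=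
    F_eq_M hint hsupp hT0 hTR
  have hs2 : Function.support (fun t => t * g t) ⊆ Icc 0 R := fun t ht => by
    apply hsupp; intro h; apply ht; simp [h]
  have e4 : (∫ t in Ioc (0:ℝ) T, t * g t) = ∫ t in Ioi (0:ℝ), t * g t :=
    F_eq_M hintt hs2 hT0 hTR
  rw [e3, e4]
end D

section E

lemma reverse_dir (C : ℝ) (hC : 0 < C) (f : ℝ → ℝ) (hf : IsStrategy f)
    (c : ℝ) (hc : 0 < c)
    (h1 : ∀ᵐ x ∂(volume.restrict (Icc (0:ℝ) (2*C))), f x = c)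
    (h2 : ∀ᵐ x ∂(volume.restrict (Ioi (2*C))), f x = 0)
    (g : ℝ → ℝ) (hg : IsStrategy g) (hgC : mca g ≤ C) : 0 ≤ wp f g := by
  obtain ⟨hmg, ⟨Cbg, hbg⟩, h0g, ⟨Rg, hsg⟩, hneg⟩ := hg
  obtain ⟨hmf, ⟨Cbf, hbf⟩, h0f, ⟨Rf, hsf⟩, hnef⟩ := hf
  have hintg : Integrable g := strat_integrable hmg hbg h0g hsg
  have hintf : Integrable f := strat_integrable hmf hbf h0f hsf
  set Mg := ∫ t in Ioi (0:ℝ), g t with hMgdef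
  have hMg : 0 < Mg := M_pos hintg h0g hsg hneg
  have htg : (∫ t in Ioi (0:ℝ), t * g t) ≤ C * Mg := by
    rw [mca] at hgC
    exact (div_le_iff₀ hMg).mp hgC
  set G := fun x => ∫ t in Ioc (0:ℝ) x, g t with hGdef
  have hGcont : Continuous G := strat_F_cont hintg (supp_neg_zero hsg)
  have hGbd : ∀ x, |2 * G x - Mg| ≤ Mg := by
    intro x
    rw [abs_le]
    constructor
    · have := F_nonneg h0g x; simp only [hGdef]; linarith [F_nonneg h0g x]
    · linarith [F_le_M hintg h0g x]
  have hintprod : Integrable (fun x => f x * (2 * G x - Mg)) := by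
    have h := hintf.bdd_mul (f := fun x => 2 * G x - Mg)
      ((((continuous_const.mul hGcont).sub continuous_const).aestronglyMeasurable : AEStronglyMeasurable (fun x => 2 * G x - Mg) volume)) (ae_of_all _ fun x => by rw [Real.norm_eq_abs]; exact hGbd x)
    simpa [mul_comm] using h
  rw [wp_eq f hintg]
  have hsplit := M_split hintprod (x := 2*C) (by linarith)
  have hzero : (∫ x in Ioi (2*C), f x * (2 * G x - Mg)) = 0 := by
    rw [integral_congr_ae (g := fun _ => (0:ℝ))]
    · simp
    · filter_upwards [h2] with x hx; rw [hx, zero_mul]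
  have h1' : ∀ᵐ x ∂(volume.restrict (Ioc (0:ℝ) (2*C))), f x = c :=
    ae_restrict_of_ae_restrict_of_subset Ioc_subset_Icc_self h1
  have hmain : (∫ x in Ioc (0:ℝ) (2*C), f x * (2 * G x - Mg))
      = ∫ x in Ioc (0:ℝ) (2*C), c * (2 * G x - Mg) := by
    apply integral_congr_ae
    filter_upwards [h1'] with x hx
    rw [hx]
  have hGint : IntegrableOn G (Ioc (0:ℝ) (2*C)) := hGcont.integrableOn_Ioc
  have hexp : (∫ x in Ioc (0:ℝ) (2*C), c * (2 * G x - Mg))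
      = c * (2 * (∫ x in Ioc (0:ℝ) (2*C), G x) - 2*C*Mg) := by
    rw [integral_const_mul]
    congr 1
    rw [integral_sub ((hGint.const_mul 2)) (integrableOn_const (by simp [ENNReal.mul_eq_top]))]
    rw [integral_const_mul, setIntegral_const, smul_eq_mul, Real.volume_real_Ioc_of_le (by linarith)]
    ring
  have hfub := fub2 hmg hbg h0g hsg (D := 2*C) (by linarith)
  have hGlb : C * Mg ≤ ∫ x in Ioc (0:ℝ) (2*C), G x := by
    calc C * Mg = 2*C*Mg - C*Mg := by ring
      _ ≤ 2*C*Mg - ∫ t in Ioi (0:ℝ), t * g t := by linarith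
      _ ≤ _ := by exact le_trans (le_of_eq (by rw [hMgdef])) hfub
  rw [hsplit, hzero, hmain, hexp, add_zero]
  nlinarith
end E

section F

lemma ind_bounds (A : Set ℝ) (c : ℝ) (hc : 0 ≤ c) (y : ℝ) :
    0 ≤ A.indicator (fun _ => c) y ∧ A.indicator (fun _ => c) y ≤ c := by
  by_cases h : y ∈ A <;> simp [h, hc]

lemma ind_mass {s ε c : ℝ} (hs : 0 ≤ s) (hε : 0 < ε) :
    (∫ y in Ioi (0:ℝ), (Ioc s (s+ε)).indicator (fun _ => c) y) = c * ε := by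
  rw [setIntegral_indicator measurableSet_Ioc, setIntegral_const]
  have e : Ioi (0:ℝ) ∩ Ioc s (s+ε) = Ioc s (s+ε) :=
    inter_eq_self_of_subset_right (fun y hy => lt_of_le_of_lt hs hy.1)
  rw [e, Real.volume_real_Ioc_of_le (by linarith), smul_eq_mul]
  ring

lemma ind_moment {s ε c : ℝ} (hs : 0 ≤ s) (hε : 0 < ε) :
    (∫ y in Ioi (0:ℝ), y * (Ioc s (s+ε)).indicator (fun _ => c) y)
      = c * ε * (s + ε/2) := by
  have e : (fun y => y * (Ioc s (s+ε)).indicator (fun _ => c) y)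
      = (Ioc s (s+ε)).indicator (fun y => y * c) := by
    funext y; by_cases h : y ∈ Ioc s (s+ε) <;> simp [indicator, h]
  rw [e, setIntegral_indicator measurableSet_Ioc]
  have e2 : Ioi (0:ℝ) ∩ Ioc s (s+ε) = Ioc s (s+ε) :=
    inter_eq_self_of_subset_right (fun y hy => lt_of_le_of_lt hs hy.1)
  rw [e2, ← intervalIntegral.integral_of_le (by linarith : s ≤ s + ε)]
  rw [intervalIntegral.integral_mul_const, integral_id]
  ring

lemma ind_G_le {s ε c : ℝ} (hc : 0 ≤ c) (hε : 0 < ε) (x : ℝ) :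
    (∫ y in Ioc (0:ℝ) x, (Ioc s (s+ε)).indicator (fun _ => c) y)
      ≤ (Ioi s).indicator (fun _ => c * ε) x := by
  rw [setIntegral_indicator measurableSet_Ioc, setIntegral_const, smul_eq_mul]
  by_cases h : s < x
  · have hx : x ∈ Ioi s := h
    rw [indicator_of_mem hx]
    have hle : volume (Ioc (0:ℝ) x ∩ Ioc s (s+ε)) ≤ volume (Ioc s (s+ε)) :=
      measure_mono inter_subset_right
    have : (volume (Ioc (0:ℝ) x ∩ Ioc s (s+ε))).toReal ≤ ε := by
      refine le_trans (ENNReal.toReal_mono ?_ hle) ?_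
      · simp [Real.volume_Ioc]
      · rw [Real.volume_Ioc, ENNReal.toReal_ofReal (by linarith)]; linarith
    calc (volume (Ioc (0:ℝ) x ∩ Ioc s (s+ε))).toReal * c ≤ ε * c :=
          mul_le_mul_of_nonneg_right this hc
      _ = c * ε := by ring
  · have hx : x ∉ Ioi s := h
    rw [indicator_of_notMem hx]
    have : Ioc (0:ℝ) x ∩ Ioc s (s+ε) = ∅ := by
      ext y; simp only [mem_inter_iff, mem_Ioc, mem_empty_iff_false, iff_false]
      rintro ⟨⟨_, h2⟩, h3, _⟩
      push_neg at h
      linarith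
    simp [this]

lemma ind_G_nonneg {s ε c : ℝ} (hc : 0 ≤ c) (x : ℝ) :
    0 ≤ ∫ y in Ioc (0:ℝ) x, (Ioc s (s+ε)).indicator (fun _ => c) y :=
  setIntegral_nonneg measurableSet_Ioc fun y _ => (ind_bounds _ c hc y).1

lemma keyeps (C : ℝ) (hC : 0 < C) (f : ℝ → ℝ) (hmf : Measurable f) {Cbf Rf : ℝ}
    (hbf : ∀ x, f x ≤ Cbf) (h0f : ∀ x, 0 ≤ f x) (hsf : Function.support f ⊆ Icc 0 Rf)
    (H : ∀ g : ℝ → ℝ, IsStrategy g → mca g ≤ C → 0 ≤ wp f g)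
    {s t w ε : ℝ} (hs : 0 ≤ s) (hst : s ≤ t) (hw0 : 0 ≤ w) (hw1 : w ≤ 1) (hε : 0 < ε)
    (hmean : w*s + (1-w)*t + ε/2 ≤ C) :
    w * (∫ u in Ioc (0:ℝ) s, f u) + (1-w) * (∫ u in Ioc (0:ℝ) t, f u)
      ≤ (∫ u in Ioi (0:ℝ), f u) / 2 := by
  have hintf : Integrable f := strat_integrable hmf hbf h0f hsf
  have ht0 : 0 ≤ t := le_trans hs hst
  have hw0' : 0 ≤ w/ε := div_nonneg hw0 hε.le
  have hw1' : 0 ≤ (1-w)/ε := div_nonneg (by linarith) hε.le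
  set g := fun y => (Ioc s (s+ε)).indicator (fun _ => w/ε) y
      + (Ioc t (t+ε)).indicator (fun _ => (1-w)/ε) y with hgdef
  have hmg : Measurable g :=
    (measurable_const.indicator measurableSet_Ioc).add
      (measurable_const.indicator measurableSet_Ioc)
  have hbg : ∀ y, g y ≤ w/ε + (1-w)/ε := fun y =>
    add_le_add (ind_bounds _ _ hw0' y).2 (ind_bounds _ _ hw1' y).2
  have h0g : ∀ y, 0 ≤ g y := fun y =>
    add_nonneg (ind_bounds _ _ hw0' y).1 (ind_bounds _ _ hw1' y).1
  have hsg : Function.support g ⊆ Icc 0 (t+ε) := by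
    intro y hy
    simp only [Function.mem_support, hgdef] at hy
    by_cases h1 : y ∈ Ioc s (s+ε)
    · exact ⟨le_trans hs h1.1.le, le_trans h1.2 (by linarith)⟩
    by_cases h2 : y ∈ Ioc t (t+ε)
    · exact ⟨le_trans ht0 h2.1.le, h2.2⟩
    exact absurd (by simp [indicator_of_notMem h1, indicator_of_notMem h2]) hy
  have hintg : Integrable g := strat_integrable hmg hbg h0g hsg
  have hint1 : IntegrableOn (fun y => (Ioc s (s+ε)).indicator (fun _ : ℝ => w/ε) y)
      (Ioi (0:ℝ)) := by
    apply Integrable.integrableOn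
    rw [integrable_indicator_iff measurableSet_Ioc]
    exact integrableOn_const (by simp [Real.volume_Ioc])
  have hint2 : IntegrableOn (fun y => (Ioc t (t+ε)).indicator (fun _ : ℝ => (1-w)/ε) y)
      (Ioi (0:ℝ)) := by
    apply Integrable.integrableOn
    rw [integrable_indicator_iff measurableSet_Ioc]
    exact integrableOn_const (by simp [Real.volume_Ioc])
  have hMg : (∫ y in Ioi (0:ℝ), g y) = 1 := by
    rw [hgdef]
    rw [integral_add hint1 hint2, ind_mass hs hε, ind_mass ht0 hε]
    field_simp
    ring
  have hgstrat : IsStrategy g := by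
    refine ⟨hmg, ⟨w/ε + (1-w)/ε, hbg⟩, h0g, ⟨t+ε, hsg⟩, ?_⟩
    intro hae
    have : (∫ y in Ioi (0:ℝ), g y) = 0 := by
      rw [integral_congr_ae (ae_restrict_of_ae hae)]
      simp
    rw [hMg] at this
    norm_num at this
  have hmcag : mca g ≤ C := by
    rw [mca, hMg, div_one]
    have hmom1 : IntegrableOn (fun y => y * (Ioc s (s+ε)).indicator (fun _ : ℝ => w/ε) y)
        (Ioi (0:ℝ)) := by
      apply Integrable.integrableOn
      have e : (fun y => y * (Ioc s (s+ε)).indicator (fun _ : ℝ => w/ε) y)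
          = (Ioc s (s+ε)).indicator (fun y => y * (w/ε)) := by
        funext y; by_cases h : y ∈ Ioc s (s+ε) <;> simp [indicator, h]
      rw [e, integrable_indicator_iff measurableSet_Ioc]
      exact (continuous_id.mul continuous_const).integrableOn_Ioc
    have hmom2 : IntegrableOn (fun y => y * (Ioc t (t+ε)).indicator (fun _ : ℝ => (1-w)/ε) y)
        (Ioi (0:ℝ)) := by
      apply Integrable.integrableOn
      have e : (fun y => y * (Ioc t (t+ε)).indicator (fun _ : ℝ => (1-w)/ε) y)
          = (Ioc t (t+ε)).indicator (fun y => y * ((1-w)/ε)) := by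
        funext y; by_cases h : y ∈ Ioc t (t+ε) <;> simp [indicator, h]
      rw [e, integrable_indicator_iff measurableSet_Ioc]
      exact (continuous_id.mul continuous_const).integrableOn_Ioc
    have e : (fun y => y * g y) = fun y => y * (Ioc s (s+ε)).indicator (fun _ => w/ε) y
        + y * (Ioc t (t+ε)).indicator (fun _ => (1-w)/ε) y := by
      funext y; rw [hgdef]; ring
    rw [e, integral_add hmom1 hmom2, ind_moment hs hε, ind_moment ht0 hε]
    have e2 : w / ε * ε * (s + ε / 2) + (1 - w) / ε * ε * (t + ε / 2)
        = w*s + (1-w)*t + ε/2 := by field_simp; ring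
    rw [e2]; exact hmean
  -- apply the hypothesis
  have hwp := H g hgstrat hmcag
  rw [wp_eq f hintg, hMg] at hwp
  -- bound wp from above
  set G := fun x => ∫ u in Ioc (0:ℝ) x, g u with hGdef
  have hGcont : Continuous G := strat_F_cont hintg (supp_neg_zero hsg)
  have hG01 : ∀ x, 0 ≤ G x ∧ G x ≤ 1 := fun x =>
    ⟨F_nonneg h0g x, hMg ▸ F_le_M hintg h0g x⟩
  set Hh := fun x => (Ioi s).indicator (fun _ : ℝ => w) x
      + (Ioi t).indicator (fun _ : ℝ => 1-w) x with hHdef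
  have hGH : ∀ x, G x ≤ Hh x := by
    intro x
    simp only [hGdef, hHdef]
    have split : (∫ u in Ioc (0:ℝ) x, g u)
        = (∫ u in Ioc (0:ℝ) x, (Ioc s (s+ε)).indicator (fun _ => w/ε) u)
          + ∫ u in Ioc (0:ℝ) x, (Ioc t (t+ε)).indicator (fun _ => (1-w)/ε) u := by
      rw [hgdef]
      exact integral_add (hint1.mono_set Ioc_subset_Ioi_self)
        (hint2.mono_set Ioc_subset_Ioi_self)
    rw [split]
    have b1 := ind_G_le hw0' hε x (s := s)
    have b2 := ind_G_le hw1' hε x (s := t)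
    have e1 : w / ε * ε = w := by field_simp
    have e2 : (1-w) / ε * ε = 1-w := by field_simp
    rw [e1] at b1; rw [e2] at b2
    exact add_le_add b1 b2
  have hH01 : ∀ x, 0 ≤ Hh x ∧ Hh x ≤ 1 := by
    intro x
    constructor
    · exact add_nonneg (ind_bounds _ _ hw0 x).1 (ind_bounds _ _ (by linarith) x).1
    · have := (ind_bounds (Ioi s) _ hw0 x).2
      have := (ind_bounds (Ioi t) _ (by linarith : (0:ℝ) ≤ 1-w) x).2
      rw [hHdef]; dsimp only; linarith
  have hmHh : Measurable Hh :=
    (measurable_const.indicator measurableSet_Ioi).add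
      (measurable_const.indicator measurableSet_Ioi)
  have hintG : Integrable (fun x => f x * (2 * G x - 1)) := by
    have h := hintf.bdd_mul (f := fun x => 2 * G x - 1) (c := 1)
      (((continuous_const.mul hGcont).sub continuous_const).aestronglyMeasurable
        : AEStronglyMeasurable (fun x => 2 * G x - 1) volume)
      (ae_of_all _ fun x => by
        rw [Real.norm_eq_abs, abs_le]; constructor <;> [linarith [(hG01 x).1]; linarith [(hG01 x).2]])
    simpa [mul_comm] using h
  have hintH : Integrable (fun x => f x * (2 * Hh x - 1)) := by
    have h := hintf.bdd_mul (f := fun x => 2 * Hh x - 1) (c := 1)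
      ((((measurable_const.mul hmHh).sub measurable_const).aestronglyMeasurable)
        : AEStronglyMeasurable (fun x => 2 * Hh x - 1) volume)
      (ae_of_all _ fun x => by
        rw [Real.norm_eq_abs, abs_le]; constructor <;> [linarith [(hH01 x).1]; linarith [(hH01 x).2]])
    simpa [mul_comm] using h
  have hmono : (∫ x in Ioi (0:ℝ), f x * (2 * G x - 1))
      ≤ ∫ x in Ioi (0:ℝ), f x * (2 * Hh x - 1) := by
    apply setIntegral_mono_on hintG.integrableOn hintH.integrableOn measurableSet_Ioi
    intro x _
    have := hGH x
    have := h0f x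
    nlinarith
  -- compute the RHS
  have hindint : ∀ a : ℝ, 0 ≤ a → (∫ x in Ioi (0:ℝ), (Ioi a).indicator f x)
      = (∫ u in Ioi (0:ℝ), f u) - ∫ u in Ioc (0:ℝ) a, f u := by
    intro a ha
    rw [setIntegral_indicator measurableSet_Ioi, Ioi_inter_Ioi, max_eq_right ha]
    have := M_split hintf (x := a) ha
    linarith
  have hexp : (∫ x in Ioi (0:ℝ), f x * (2 * Hh x - 1))
      = 2*w*((∫ u in Ioi (0:ℝ), f u) - ∫ u in Ioc (0:ℝ) s, f u)
        + 2*(1-w)*((∫ u in Ioi (0:ℝ), f u) - ∫ u in Ioc (0:ℝ) t, f u)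
        - (∫ u in Ioi (0:ℝ), f u) := by
    have e : (fun x => f x * (2 * Hh x - 1))
        = fun x => 2*w*((Ioi s).indicator f x) + 2*(1-w)*((Ioi t).indicator f x) - f x := by
      funext x
      rw [hHdef]
      by_cases h1 : x ∈ Ioi s <;> by_cases h2 : x ∈ Ioi t <;>
        simp [indicator, h1, h2] <;> ring
    rw [e]
    have i1 : IntegrableOn (fun x => 2*w*((Ioi s).indicator f x)) (Ioi (0:ℝ)) :=
      ((hintf.indicator measurableSet_Ioi).const_mul _).integrableOn
    have i2 : IntegrableOn (fun x => 2*(1-w)*((Ioi t).indicator f x)) (Ioi (0:ℝ)) :=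
      ((hintf.indicator measurableSet_Ioi).const_mul _).integrableOn
    have i12 : IntegrableOn (fun x => 2*w*((Ioi s).indicator f x)
        + 2*(1-w)*((Ioi t).indicator f x)) (Ioi (0:ℝ)) := i1.add i2
    rw [integral_sub i12 hintf.integrableOn, integral_add i1 i2,
      integral_const_mul, integral_const_mul, hindint s hs, hindint t ht0]
  rw [hexp] at hmono
  have := le_trans hwp hmono
  linarith
end F

section G

lemma zero_of_nonneg_cont {h : ℝ → ℝ} (hcont : Continuous h) {a b : ℝ} (hab : a < b)
    (h0 : ∀ x ∈ Icc a b, 0 ≤ h x) (hI : (∫ x in Ioc a b, h x) = 0) :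
    ∀ x ∈ Icc a b, h x = 0 := by
  have hint : IntegrableOn h (Ioc a b) := hcont.integrableOn_Ioc
  have h0' : 0 ≤ᵐ[volume.restrict (Ioc a b)] h := by
    filter_upwards [ae_restrict_mem measurableSet_Ioc] with x hx
    exact h0 x ⟨hx.1.le, hx.2⟩
  have hae : h =ᵐ[volume.restrict (Ioc a b)] 0 :=
    (integral_eq_zero_iff_of_nonneg_ae h0' hint).mp hI
  have hms : MeasurableSet {x : ℝ | h x ≠ 0} :=
    (hcont.measurable (measurableSet_singleton 0)).compl
  have hnull : volume ({x | h x ≠ 0} ∩ Ioc a b) = 0 := by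
    have h2 := ae_iff.mp hae
    simp only [Pi.zero_apply] at h2
    rwa [Measure.restrict_apply hms] at h2
  have hU : IsOpen ({x | h x ≠ 0} ∩ Ioo a b) :=
    (isOpen_ne_fun hcont continuous_const).inter isOpen_Ioo
  have hUnull : volume ({x | h x ≠ 0} ∩ Ioo a b) = 0 :=
    measure_mono_null (inter_subset_inter_right _ Ioo_subset_Ioc_self) hnull
  have hUempty := hU.eq_empty_of_measure_zero hUnull
  have heq : EqOn h 0 (Ioo a b) := by
    intro x hx
    by_contra hne
    exact eq_empty_iff_forall_notMem.mp hUempty x ⟨hne, hx⟩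
  have := heq.closure hcont continuous_const
  rw [closure_Ioo hab.ne] at this
  exact fun x hx => this hx

lemma star_lemma (C : ℝ) (hC : 0 < C) (f : ℝ → ℝ) (hmf : Measurable f) {Cbf Rf : ℝ}
    (hbf : ∀ x, f x ≤ Cbf) (h0f : ∀ x, 0 ≤ f x) (hsf : Function.support f ⊆ Icc 0 Rf)
    (H : ∀ g : ℝ → ℝ, IsStrategy g → mca g ≤ C → 0 ≤ wp f g)
    {a b : ℝ} (ha0 : 0 < a) (haC : a ≤ C) (hb0 : 0 < b) :
    b * (∫ u in Ioc (0:ℝ) (C-a), f u) + a * (∫ u in Ioc (0:ℝ) (C+b), f u)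
      ≤ (a+b) * ((∫ u in Ioi (0:ℝ), f u) / 2) := by
  have hintf : Integrable f := strat_integrable hmf hbf h0f hsf
  have hFcont : Continuous (fun x => ∫ u in Ioc (0:ℝ) x, f u) :=
    strat_F_cont hintf (supp_neg_zero hsf)
  have hab : 0 < a + b := by linarith
  have key : ∀ δ ∈ Ioo (0:ℝ) (a+b),
      b * (∫ u in Ioc (0:ℝ) (C-a), f u) + a * (∫ u in Ioc (0:ℝ) (C+b-δ), f u)
        ≤ (a+b) * ((∫ u in Ioi (0:ℝ), f u) / 2) := by
    intro δ hδ
    obtain ⟨hδ0, hδab⟩ := hδ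
    have hmean : b/(a+b)*(C-a) + (1 - b/(a+b))*(C+b-δ) + (a*δ/(a+b))/2 ≤ C := by
      have e : b/(a+b)*(C-a) + (1 - b/(a+b))*(C+b-δ) + (a*δ/(a+b))/2
          = C - a*δ/(2*(a+b)) := by field_simp; ring
      rw [e]
      have hpos : 0 < a*δ/(2*(a+b)) := by positivity
      linarith
    have hk := keyeps C hC f hmf hbf h0f hsf H
      (s := C - a) (t := C + b - δ) (w := b/(a+b)) (ε := a*δ/(a+b))
      (by linarith) (by linarith) (div_nonneg hb0.le hab.le)
      (by rw [div_le_one hab]; linarith) (by positivity) hmean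
    have hmul := mul_le_mul_of_nonneg_left hk hab.le
    have e1 : (a+b) * (b/(a+b) * (∫ u in Ioc (0:ℝ) (C-a), f u)
        + (1 - b/(a+b)) * (∫ u in Ioc (0:ℝ) (C+b-δ), f u))
        = b * (∫ u in Ioc (0:ℝ) (C-a), f u) + a * (∫ u in Ioc (0:ℝ) (C+b-δ), f u) := by
      field_simp
      try ring
    rw [e1] at hmul
    exact hmul
  have htd : Tendsto (fun δ : ℝ => b * (∫ u in Ioc (0:ℝ) (C-a), f u)
      + a * (∫ u in Ioc (0:ℝ) (C+b-δ), f u)) (𝓝[>] 0)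
      (𝓝 (b * (∫ u in Ioc (0:ℝ) (C-a), f u) + a * (∫ u in Ioc (0:ℝ) (C+b), f u))) := by
    apply Tendsto.mono_left _ nhdsWithin_le_nhds
    have : Continuous (fun δ : ℝ => b * (∫ u in Ioc (0:ℝ) (C-a), f u)
        + a * (∫ u in Ioc (0:ℝ) (C+b-δ), f u)) := by
      apply continuous_const.add
      exact continuous_const.mul (hFcont.comp (continuous_const.sub continuous_id))
    simpa using this.tendsto 0
  apply le_of_tendsto htd
  filter_upwards [Ioo_mem_nhdsGT_of_mem (left_mem_Ico.2 hab)] with δ hδ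
  exact key δ hδ

lemma FC_le (C : ℝ) (hC : 0 < C) (f : ℝ → ℝ) (hmf : Measurable f) {Cbf Rf : ℝ}
    (hbf : ∀ x, f x ≤ Cbf) (h0f : ∀ x, 0 ≤ f x) (hsf : Function.support f ⊆ Icc 0 Rf)
    (H : ∀ g : ℝ → ℝ, IsStrategy g → mca g ≤ C → 0 ≤ wp f g) :
    (∫ u in Ioc (0:ℝ) C, f u) ≤ (∫ u in Ioi (0:ℝ), f u) / 2 := by
  have hintf : Integrable f := strat_integrable hmf hbf h0f hsf
  have hFcont : Continuous (fun x => ∫ u in Ioc (0:ℝ) x, f u) :=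
    strat_F_cont hintf (supp_neg_zero hsf)
  have hF0 : (∫ u in Ioc (0:ℝ) (C-C), f u) = 0 := by
    rw [sub_self]; simp
  have key : ∀ b : ℝ, 0 < b → C * (∫ u in Ioc (0:ℝ) (C+b), f u)
      ≤ (C+b) * ((∫ u in Ioi (0:ℝ), f u) / 2) := by
    intro b hb
    have h := star_lemma C hC f hmf hbf h0f hsf H hC le_rfl hb
    rw [hF0] at h
    linarith
  have h1 : Tendsto (fun b : ℝ => C * (∫ u in Ioc (0:ℝ) (C+b), f u)) (𝓝[>] 0)
      (𝓝 (C * (∫ u in Ioc (0:ℝ) C, f u))) := by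
    apply Tendsto.mono_left _ nhdsWithin_le_nhds
    have : Continuous (fun b : ℝ => C * (∫ u in Ioc (0:ℝ) (C+b), f u)) :=
      continuous_const.mul (hFcont.comp (continuous_const.add continuous_id))
    simpa using this.tendsto 0
  have h2 : Tendsto (fun b : ℝ => (C+b) * ((∫ u in Ioi (0:ℝ), f u) / 2)) (𝓝[>] 0)
      (𝓝 (C * ((∫ u in Ioi (0:ℝ), f u) / 2))) := by
    apply Tendsto.mono_left _ nhdsWithin_le_nhds
    have : Continuous (fun b : ℝ => (C+b) * ((∫ u in Ioi (0:ℝ), f u) / 2)) :=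
      (continuous_const.add continuous_id).mul continuous_const
    simpa using this.tendsto 0
  have hle := le_of_tendsto_of_tendsto h1 h2 (by
    filter_upwards [self_mem_nhdsWithin] with b hb
    exact key b hb)
  exact le_of_mul_le_mul_left hle hC
end G

section H

lemma ae_const_of_linear {f : ℝ → ℝ} (hint : Integrable f) (c : ℝ) {D : ℝ} (hD : 0 < D)
    (hF : ∀ a b : ℝ, 0 ≤ a → a ≤ b → b ≤ D → (∫ y in Ioc a b, f y) = c * (b - a)) :
    ∀ᵐ x ∂volume, x ∈ Ioo 0 D → f x = c := by
  filter_upwards [IsUnifLocDoublingMeasure.ae_tendsto_average (μ := volume)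
    hint.locallyIntegrable 1] with x hx hmem
  obtain ⟨hx0, hxD⟩ := hmem
  have htd : Tendsto (fun r : ℝ => ⨍ y in Metric.closedBall x r, f y) (𝓝[>] 0) (𝓝 (f x)) := by
    apply hx (fun _ => x) id tendsto_id
    filter_upwards [self_mem_nhdsWithin] with r hr
    exact Metric.mem_closedBall_self (by simpa using le_of_lt hr)
  have hev : ∀ᶠ r in 𝓝[>] (0:ℝ), (fun r : ℝ => ⨍ y in Metric.closedBall x r, f y) r = c := by
    filter_upwards [Ioo_mem_nhdsGT_of_mem
      (left_mem_Ico.2 (show (0:ℝ) < min x (D - x) from lt_min hx0 (sub_pos.2 hxD)))] with r hr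
    obtain ⟨hr0, hrm⟩ := hr
    have hm := lt_min_iff.mp hrm
    have h1 : 0 ≤ x - r := by linarith [hm.1]
    have h2 : x + r ≤ D := by linarith [hm.2]
    have hIcc : Metric.closedBall x r = Icc (x-r) (x+r) := Real.closedBall_eq_Icc
    rw [hIcc, setAverage_eq]
    have hIoc : (∫ y in Icc (x-r) (x+r), f y) = ∫ y in Ioc (x-r) (x+r), f y :=
      integral_Icc_eq_integral_Ioc
    rw [hIoc, hF (x-r) (x+r) h1 (by linarith) h2, Real.volume_real_Icc_of_le (by linarith), smul_eq_mul]
    have e : x + r - (x - r) = 2*r := by ring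
    rw [e]
    field_simp
  exact tendsto_nhds_unique htd ((tendsto_congr' hev).mpr tendsto_const_nhds)

lemma forward_dir (C : ℝ) (hC : 0 < C) (f : ℝ → ℝ) (hf : IsStrategy f) (hfC : mca f ≤ C)
    (H : ∀ g : ℝ → ℝ, IsStrategy g → mca g ≤ C → 0 ≤ wp f g) :
    ∃ c : ℝ, 0 < c ∧
      (∀ᵐ x ∂(volume.restrict (Icc (0:ℝ) (2*C))), f x = c) ∧
      (∀ᵐ x ∂(volume.restrict (Ioi (2*C))), f x = 0) := by
  obtain ⟨hmf, ⟨Cbf, hbf⟩, h0f, ⟨Rf, hsf⟩, hnef⟩ := hf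
  have hintf : Integrable f := strat_integrable hmf hbf h0f hsf
  set M := ∫ u in Ioi (0:ℝ), f u with hMdef
  set F := fun x : ℝ => ∫ u in Ioc (0:ℝ) x, f u with hFdef
  have hM : 0 < M := M_pos hintf h0f hsf hnef
  have hFcont : Continuous F := strat_F_cont hintf (supp_neg_zero hsf)
  have hF0le : ∀ x, 0 ≤ F x := fun x => F_nonneg h0f x
  have hFleM : ∀ x, F x ≤ M := fun x => F_le_M hintf h0f x
  have hF00 : F 0 = 0 := by simp [hFdef]
  have hstar : ∀ a b : ℝ, 0 < a → a ≤ C → 0 < b →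
      b * F (C-a) + a * F (C+b) ≤ (a+b)*(M/2) := fun a b ha hac hb => by
    have h := star_lemma C hC f hmf hbf h0f hsf H ha hac hb
    calc b * F (C-a) + a * F (C+b)
        = b * (∫ u in Ioc (0:ℝ) (C-a), f u) + a * (∫ u in Ioc (0:ℝ) (C+b), f u) := rfl
      _ ≤ (a+b) * (M/2) := h
  have hFC : F C ≤ M/2 := FC_le C hC f hmf hbf h0f hsf H
  set T := max Rf (2*C) with hTdef
  have hT2C : 2*C ≤ T := le_max_right _ _
  have hTR : Rf ≤ T := le_max_left _ _
  have hT0 : 0 ≤ T := le_trans (by linarith) hT2C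
  have hmcaM : (∫ u in Ioi (0:ℝ), u * f u) ≤ C * M := by
    rw [mca] at hfC
    exact (div_le_iff₀ hM).mp hfC
  have htot : (∫ x in Ioc (0:ℝ) T, (M - F x)) ≤ C * M := by
    have h := fub1 hmf hbf h0f hsf hT0 hTR
    calc (∫ x in Ioc (0:ℝ) T, (M - F x)) = ∫ u in Ioi (0:ℝ), u * f u := h.symm
      _ ≤ C * M := hmcaM
  clear_value M F T
  -- pairing
  have hFint : ∀ a b : ℝ, IntegrableOn F (Ioc a b) := fun a b => hFcont.integrableOn_Ioc
  have hFcomp : Continuous (fun x : ℝ => F (2*C - x)) :=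
    hFcont.comp (continuous_const.sub continuous_id)
  have hsub : (∫ x in Ioc C (2*C), F (2*C - x)) = ∫ x in Ioc (0:ℝ) C, F x := by
    have h1 : (∫ x in C..(2*C), F (2*C - x)) = ∫ x in (2*C - 2*C)..(2*C - C), F x :=
      intervalIntegral.integral_comp_sub_left F (2*C)
    have e1 : 2*C - 2*C = (0:ℝ) := by ring
    have e2 : 2*C - C = C := by ring
    rw [e1, e2] at h1
    rw [← intervalIntegral.integral_of_le (by linarith : C ≤ 2*C), h1,
      intervalIntegral.integral_of_le hC.le]
  have hpair : ∀ x ∈ Ioc C (2*C), F x + F (2*C - x) ≤ M := by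
    intro x hx
    obtain ⟨hx1, hx2⟩ := hx
    have ha : 0 < x - C := by linarith
    have h := hstar (x-C) (x-C) ha (by linarith) ha
    have e1 : C - (x - C) = 2*C - x := by ring
    have e2 : C + (x - C) = x := by ring
    rw [e1, e2] at h
    nlinarith
  have hImid : (∫ x in Ioc C (2*C), (F x + F (2*C - x))) ≤ C * M := by
    have hmono : (∫ x in Ioc C (2*C), (F x + F (2*C - x)))
        ≤ ∫ _x in Ioc C (2*C), M := by
      apply setIntegral_mono_on
        ((hFint C (2*C)).add hFcomp.integrableOn_Ioc)
        (integrableOn_const (by simp))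
        measurableSet_Ioc hpair
    calc (∫ x in Ioc C (2*C), (F x + F (2*C - x))) ≤ ∫ _x in Ioc C (2*C), M := hmono
      _ = C * M := by
          rw [setIntegral_const, Real.volume_real_Ioc_of_le (by linarith), smul_eq_mul]
          ring_nf
  have hIaddmid : (∫ x in Ioc C (2*C), (F x + F (2*C - x)))
      = (∫ x in Ioc C (2*C), F x) + ∫ x in Ioc C (2*C), F (2*C - x) :=
    integral_add (hFint C (2*C)) hFcomp.integrableOn_Ioc
  have hsplitF : (∫ x in Ioc (0:ℝ) (2*C), F x)
      = (∫ x in Ioc (0:ℝ) C, F x) + ∫ x in Ioc C (2*C), F x := by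
    rw [← setIntegral_union (Ioc_disjoint_Ioc_of_le le_rfl) measurableSet_Ioc
      (hFint 0 C) (hFint C (2*C)), Ioc_union_Ioc_eq_Ioc hC.le (by linarith)]
  have hheadF : (∫ x in Ioc (0:ℝ) (2*C), F x) ≤ C * M := by
    rw [hsplitF, ← hsub]
    linarith [hIaddmid, hImid]
  -- M - F integrals
  have hMFint : ∀ a b : ℝ, IntegrableOn (fun x => M - F x) (Ioc a b) := fun a b =>
    (continuous_const.sub hFcont).integrableOn_Ioc
  have e0 : (∫ x in Ioc (0:ℝ) (2*C), (M - F x))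
      = 2*C*M - ∫ x in Ioc (0:ℝ) (2*C), F x := by
    rw [integral_sub (μ := volume.restrict (Ioc (0:ℝ) (2*C))) (f := fun _ => M) (g := F) (integrableOn_const (by simp [ENNReal.mul_eq_top])) (hFint 0 (2*C)),
      setIntegral_const, Real.volume_real_Ioc_of_le (by linarith), smul_eq_mul]
    ring_nf
  have hge : C * M ≤ ∫ x in Ioc (0:ℝ) (2*C), (M - F x) := by
    rw [e0]; linarith
  have htotsplit : (∫ x in Ioc (0:ℝ) T, (M - F x))
      = (∫ x in Ioc (0:ℝ) (2*C), (M - F x)) + ∫ x in Ioc (2*C) T, (M - F x) := by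
    rw [← setIntegral_union (Ioc_disjoint_Ioc_of_le le_rfl) measurableSet_Ioc
      (hMFint 0 (2*C)) (hMFint (2*C) T), Ioc_union_Ioc_eq_Ioc (by linarith) hT2C]
  have htail0 : (∫ x in Ioc (2*C) T, (M - F x)) = 0 := by
    have h1 : 0 ≤ ∫ x in Ioc (2*C) T, (M - F x) :=
      setIntegral_nonneg measurableSet_Ioc fun x _ => by linarith [hFleM x]
    linarith [htotsplit, htot, hge]
  have hF2C : F (2*C) = M := by
    rcases lt_or_ge (2*C) T with hlt | hle
    · have hz := zero_of_nonneg_cont (continuous_const.sub hFcont) hlt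
        (fun x _ => by simpa using hFleM x) htail0
      have h2 := hz (2*C) (left_mem_Icc.mpr hlt.le)
      have h3 : M - F (2*C) = 0 := h2
      linarith
    · have hR2C : Rf ≤ 2*C := le_trans hTR hle
      rw [hFdef, hMdef]
      exact F_eq_M hintf hsf (by linarith) hR2C
  have hheadeq : (∫ x in Ioc (0:ℝ) (2*C), (M - F x)) = C * M := by
    have := htotsplit
    rw [htail0, add_zero] at this
    linarith [htot, hge]
  have hintF2C : (∫ x in Ioc (0:ℝ) (2*C), F x) = C * M := by
    rw [e0] at hheadeq; linarith
  -- the upper bound F x ≤ x * c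
  set c := M / (2*C) with hcdef
  have hcpos : 0 < c := by rw [hcdef]; positivity
  have hcM : M = 2*C*c := by rw [hcdef]; field_simp
  clear_value c
  have hUB : ∀ x ∈ Icc (0:ℝ) (2*C), F x ≤ x * c := by
    rintro x ⟨hx0, hx2⟩
    rcases lt_trichotomy x C with hlt | heq | hgt
    · have h := hstar (C - x) C (by linarith) (by linarith) hC
      have e1 : C - (C - x) = x := by ring
      have e2 : C + C = 2*C := by ring
      rw [e1, e2, hF2C] at h
      have hmul : C * F x ≤ C * (x * c) := by nlinarith
      exact le_of_mul_le_mul_left hmul hC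
    · subst heq
      calc F x ≤ M/2 := hFC
        _ = x * c := by rw [hcM]; ring
    · have h := hstar C (x - C) hC le_rfl (by linarith)
      have e1 : C - C = (0:ℝ) := by ring
      have e2 : C + (x - C) = x := by ring
      rw [e1, e2, hF00] at h
      have hmul : C * F x ≤ C * (x * c) := by nlinarith
      exact le_of_mul_le_mul_left hmul hC
  -- linear part integral
  have hlinint : (∫ x in Ioc (0:ℝ) (2*C), x * c) = C * M := by
    rw [← intervalIntegral.integral_of_le (by linarith : (0:ℝ) ≤ 2*C),
      intervalIntegral.integral_mul_const, integral_id]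
    rw [hcM]; ring
  have hccont : Continuous (fun x : ℝ => x * c) := continuous_id.mul continuous_const
  have hψ : ∀ x ∈ Icc (0:ℝ) (2*C), x * c - F x = 0 := by
    apply zero_of_nonneg_cont (h := fun x => x * c - F x) (hccont.sub hFcont)
      (by linarith : (0:ℝ) < 2*C) (fun x hx => by show (0:ℝ) ≤ x * c - F x; linarith [hUB x hx])
    rw [integral_sub hccont.integrableOn_Ioc (hFint 0 (2*C)),
      hlinint, hintF2C, sub_self]
  have hFlin : ∀ x ∈ Icc (0:ℝ) (2*C), F x = x * c := fun x hx => by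
    have := hψ x hx; linarith
  refine ⟨c, hcpos, ?_, ?_⟩
  · -- constant on Icc 0 2C
    have hFab : ∀ a b : ℝ, 0 ≤ a → a ≤ b → b ≤ 2*C → (∫ y in Ioc a b, f y) = c * (b - a) := by
      intro a b ha hab hb2
      have hFa : F a = a * c := hFlin a ⟨ha, by linarith⟩
      have hFb : F b = b * c := hFlin b ⟨by linarith, hb2⟩
      have hsplit : F b = F a + ∫ y in Ioc a b, f y := by
        rw [hFdef]
        simp only
        rw [← setIntegral_union (Ioc_disjoint_Ioc_of_le le_rfl) measurableSet_Ioc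
          hintf.integrableOn hintf.integrableOn, Ioc_union_Ioc_eq_Ioc ha hab]
      rw [hFa, hFb] at hsplit
      linarith
    have hae := ae_const_of_linear hintf c (by linarith : (0:ℝ) < 2*C) hFab
    have hres := ae_restrict_of_ae (μ := volume) (s := Icc (0:ℝ) (2*C)) hae
    have hmem := ae_restrict_mem (μ := volume) (s := Icc (0:ℝ) (2*C)) measurableSet_Icc
    have hends : ∀ᵐ x ∂volume.restrict (Icc (0:ℝ) (2*C)), x ∉ ({0, 2*C} : Set ℝ) := by
      apply measure_eq_zero_iff_ae_notMem.mp
      apply le_antisymm _ (by simp)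
      calc volume.restrict (Icc (0:ℝ) (2*C)) {0, 2*C} ≤ volume {0, 2*C} :=
            Measure.le_iff'.mp Measure.restrict_le_self _
        _ = 0 := ((finite_singleton (2*C)).insert 0).measure_zero _
    filter_upwards [hres, hmem, hends] with x hx hxIcc hxe
    simp only [mem_insert_iff, mem_singleton_iff, not_or] at hxe
    apply hx
    constructor
    · rcases lt_or_eq_of_le hxIcc.1 with h | h
      · exact h
      · exact absurd h.symm hxe.1
    · rcases lt_or_eq_of_le hxIcc.2 with h | h
      · exact h
      · exact absurd h hxe.2
  · -- zero on Ioi 2C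
    have htail : (∫ u in Ioi (2*C), f u) = 0 := by
      have h := M_split hintf (f := f) (x := 2*C) (by linarith)
      have he : F (2*C) = ∫ u in Ioc (0:ℝ) (2*C), f u := by rw [hFdef]
      rw [← hMdef, ← he, hF2C] at h
      linarith
    have hae := (integral_eq_zero_iff_of_nonneg (fun x => h0f x)
      hintf.integrableOn).mp htail
    filter_upwards [hae] with x hx using hx
end H

theorem stmt0 (C : ℝ) (hC : 0 < C) (f : ℝ → ℝ) (hf : IsStrategy f) (hfC : mca f ≤ C) :
    (∀ g : ℝ → ℝ, IsStrategy g → mca g ≤ C → 0 ≤ wp f g) ↔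
      ∃ c : ℝ, 0 < c ∧
        (∀ᵐ x ∂(volume.restrict (Icc (0:ℝ) (2*C))), f x = c) ∧
        (∀ᵐ x ∂(volume.restrict (Ioi (2*C))), f x = 0) := by
  constructor
  · intro H
    exact forward_dir C hC f hf hfC H
  · rintro ⟨c, hc, h1, h2⟩ g hg hgC
    exact reverse_dir C hC f hf c hc h1 h2 g hg hgC
end

section
/- Fix a constraint value C > 0 and let n ≥ 2. If f₁, …, fₙ are bounded measurable strategies such that for each k there is a constant cₖ > 0 with fₖ almost everywhere equal to cₖ on [0, 2C] and almost everywhere equal to 0 on (2C, ∞), then each fₖ is admissible and (f₁, …, fₙ) is an equilibrium point of the bounded measurable game; moreover the sum of any two such strategies is again a strategy of the same form. -/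
open MeasureTheory Set

section Aux

lemma integrable_of_bdd_supp {f : ℝ → ℝ} (hm : Measurable f) {R M : ℝ}
    (hb : ∀ x ∈ Icc (0:ℝ) R, |f x| ≤ M) (hs : Function.support f ⊆ Icc 0 R) :
    Integrable f := by
  rw [← integrableOn_iff_integrable_of_support_subset hs]
  refine Measure.integrableOn_of_bounded (M := M) (by simp) hm.aestronglyMeasurable ?_
  refine (ae_restrict_iff' measurableSet_Icc).2 (ae_of_all _ fun x hx => ?_)
  simpa [Real.norm_eq_abs] using hb x hx

lemma form_ae (C : ℝ) (hC : 0 < C) {f : ℝ → ℝ} {c : ℝ}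
    (h1 : ∀ᵐ x ∂(volume.restrict (Icc (0:ℝ) (2*C))), f x = c)
    (h2 : ∀ᵐ x ∂(volume.restrict (Ioi (2*C))), f x = 0) :
    f =ᵐ[volume.restrict (Ioi (0:ℝ))] (Ioc (0:ℝ) (2*C)).indicator (fun _ => c) := by
  have hsplit : Ioi (0:ℝ) = Ioc 0 (2*C) ∪ Ioi (2*C) := (Ioc_union_Ioi_eq_Ioi (by linarith)).symm
  rw [Filter.EventuallyEq, hsplit,
    Measure.restrict_union (Ioc_disjoint_Ioi le_rfl) measurableSet_Ioi, ae_add_measure_iff]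
  constructor
  · have h1' := ae_restrict_of_ae_restrict_of_subset Ioc_subset_Icc_self h1
    filter_upwards [h1', ae_restrict_mem measurableSet_Ioc] with x hx hmem
    simp [hx, indicator_of_mem hmem]
  · filter_upwards [h2, ae_restrict_mem measurableSet_Ioi] with x hx hmem
    rw [hx, indicator_of_notMem]
    exact fun h => absurd h.2 (not_le.2 hmem)

lemma HT (C : ℝ) (hC : 0 < C) {h : ℝ → ℝ} {c : ℝ}
    (hae : h =ᵐ[volume.restrict (Ioi (0:ℝ))] (Ioc (0:ℝ) (2*C)).indicator (fun _ => c))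
    {x : ℝ} (hx : 0 < x) :
    (∫ t in Ioc (0:ℝ) x, h t) - ∫ t in Ioi x, h t = 2*c*(min x (2*C)) - 2*c*C := by
  have e1 : (∫ t in Ioc (0:ℝ) x, h t) = c * min x (2*C) := by
    rw [integral_congr_ae (ae_restrict_of_ae_restrict_of_subset Ioc_subset_Ioi_self hae),
      setIntegral_indicator measurableSet_Ioc, Ioc_inter_Ioc, setIntegral_const]
    simp only [measureReal_def, Real.volume_Ioc, ENNReal.toReal_ofReal', smul_eq_mul, sup_idem, sub_zero]
    rw [max_eq_left (le_min hx.le (by linarith : (0:ℝ) ≤ 2*C)), mul_comm]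
  have e2 : (∫ t in Ioi x, h t) = c * (2*C - min x (2*C)) := by
    have hsub : Ioi x ⊆ Ioi (0:ℝ) := Ioi_subset_Ioi hx.le
    rw [integral_congr_ae (ae_restrict_of_ae_restrict_of_subset hsub hae),
      setIntegral_indicator measurableSet_Ioc]
    have : Ioi x ∩ Ioc 0 (2*C) = Ioc x (2*C) := by
      ext t
      simp only [mem_inter_iff, mem_Ioi, mem_Ioc]
      exact ⟨fun ⟨a, _, b⟩ => ⟨a, b⟩, fun ⟨a, b⟩ => ⟨a, lt_trans hx a, b⟩⟩
    rw [this, setIntegral_const, measureReal_def, Real.volume_Ioc, smul_eq_mul, ENNReal.toReal_ofReal', mul_comm]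
    congr 1
    rcases le_total x (2*C) with hle | hle
    · simp [min_eq_left hle, max_eq_left (by linarith : (0:ℝ) ≤ 2*C - x)]
    · simp [min_eq_right hle, max_eq_right (by linarith : 2*C - x ≤ (0:ℝ))]
  rw [e1, e2]; ring

lemma integral_phi (C : ℝ) (hC : 0 < C) (c : ℝ) :
    ∫ x in Ioi (0:ℝ), (Ioc (0:ℝ) (2*C)).indicator (fun _ => c) x = 2*C*c := by
  rw [setIntegral_indicator measurableSet_Ioc, inter_eq_right.2 Ioc_subset_Ioi_self,
    setIntegral_const, measureReal_def, Real.volume_Ioc, smul_eq_mul, ENNReal.toReal_ofReal (by linarith)]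
  ring

lemma integral_t_phi (C : ℝ) (hC : 0 < C) (c : ℝ) :
    ∫ x in Ioi (0:ℝ), x * (Ioc (0:ℝ) (2*C)).indicator (fun _ => c) x = 2*C^2*c := by
  have : ∀ x : ℝ, x * (Ioc (0:ℝ) (2*C)).indicator (fun _ => c) x
      = (Ioc (0:ℝ) (2*C)).indicator (fun t => t * c) x := fun x =>
    (indicator_mul_right (i := x) (Ioc (0:ℝ) (2*C)) (fun t => t) (fun _ => c)).symm
  simp only [this]
  rw [setIntegral_indicator measurableSet_Ioc, inter_eq_right.2 Ioc_subset_Ioi_self,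
    ← intervalIntegral.integral_of_le (by linarith : (0:ℝ) ≤ 2*C),
    intervalIntegral.integral_mul_const, integral_id]
  ring

lemma integral_pos_of_strategy {g : ℝ → ℝ} (hm : Measurable g) {Cb : ℝ} (hb : ∀ x, g x ≤ Cb)
    (hpos : ∀ x, 0 ≤ g x) {R : ℝ} (hsupp : Function.support g ⊆ Icc 0 R)
    (hne : ¬ g =ᵐ[volume] (0 : ℝ → ℝ)) : 0 < ∫ x in Ioi (0:ℝ), g x := by
  have habs : ∀ x ∈ Icc (0:ℝ) R, |g x| ≤ Cb := fun x _ => by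
    rw [abs_of_nonneg (hpos x)]; exact hb x
  have hint : Integrable g := integrable_of_bdd_supp hm habs hsupp
  rw [setIntegral_pos_iff_support_of_nonneg_ae (ae_of_all _ hpos) hint.integrableOn]
  by_contra hcon
  push_neg at hcon
  have h0 : volume (Function.support g ∩ Ioi 0) = 0 := le_antisymm hcon (zero_le)
  apply hne
  rw [Filter.EventuallyEq, ae_iff]
  simp only [Pi.zero_apply]
  have : {x | ¬ g x = (0:ℝ)} = Function.support g := rfl
  rw [this]
  have hsub : Function.support g ⊆ (Function.support g ∩ Ioi 0) ∪ {0} := by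
    intro x hx
    rcases lt_or_ge 0 x with h | h
    · exact Or.inl ⟨hx, h⟩
    · have := hsupp hx
      exact Or.inr (le_antisymm h this.1)
  refine le_antisymm ?_ (zero_le)
  calc volume (Function.support g) ≤ volume ((Function.support g ∩ Ioi 0) ∪ {0}) :=
        measure_mono hsub
    _ ≤ volume (Function.support g ∩ Ioi 0) + volume {0} := measure_union_le _ _
    _ = 0 := by rw [h0, Real.volume_singleton, add_zero]

lemma mca_form (C : ℝ) (hC : 0 < C) {f : ℝ → ℝ} {c : ℝ} (hc : 0 < c)
    (hae : f =ᵐ[volume.restrict (Ioi (0:ℝ))] (Ioc (0:ℝ) (2*C)).indicator (fun _ => c)) :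
    mca f = C := by
  unfold mca
  rw [integral_congr_ae hae,
    integral_congr_ae (f := fun t => t * f t) (g := fun t => t * (Ioc (0:ℝ) (2*C)).indicator (fun _ => c) t) (Filter.EventuallyEq.mul
      (Filter.EventuallyEq.refl _ (fun t : ℝ => t)) hae),
    integral_phi C hC c, integral_t_phi C hC c,
    div_eq_iff (by positivity : 2*C*c ≠ 0)]
  ring

lemma wp_le_zero (C : ℝ) (hC : 0 < C) {g h : ℝ → ℝ} {c : ℝ} (hc : 0 < c)
    (hgm : Measurable g) {Cb : ℝ} (hgb : ∀ x, g x ≤ Cb) (hgpos : ∀ x, 0 ≤ g x)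
    {R : ℝ} (hgsupp : Function.support g ⊆ Icc 0 R) (hgne : ¬ g =ᵐ[volume] (0 : ℝ → ℝ))
    (hmca : mca g ≤ C)
    (hae : h =ᵐ[volume.restrict (Ioi (0:ℝ))] (Ioc (0:ℝ) (2*C)).indicator (fun _ => c)) :
    wp g h ≤ 0 := by
  have hCb0 : 0 ≤ Cb := le_trans (hgpos 0) (hgb 0)
  have habs : ∀ x ∈ Icc (0:ℝ) R, |g x| ≤ Cb := fun x _ => by
    rw [abs_of_nonneg (hgpos x)]; exact hgb x
  have hgint : Integrable g := integrable_of_bdd_supp hgm habs hgsupp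
  have hxg_supp : Function.support (fun x => x * g x) ⊆ Icc 0 R := fun x hx => by
    apply hgsupp
    simp only [Function.mem_support] at hx ⊢
    exact fun h0 => hx (by rw [h0, mul_zero])
  have hxgint : Integrable (fun x => x * g x) := by
    refine integrable_of_bdd_supp (measurable_id.mul hgm) (M := |R| * Cb) (fun x hx => ?_) hxg_supp
    rw [abs_mul]
    refine mul_le_mul ?_ (habs x hx) (abs_nonneg _) (abs_nonneg _)
    rw [abs_of_nonneg hx.1]
    exact le_trans hx.2 (le_abs_self R)
  have hw : wp g h = ∫ x in Ioi (0:ℝ), g x * (2*c*(min x (2*C)) - 2*c*C) := by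
    unfold wp
    exact setIntegral_congr_fun measurableSet_Ioi fun x hx => by rw [HT C hC hae hx]
  have hint1 : Integrable (fun x => g x * (2*c*(min x (2*C)) - 2*c*C)) := by
    refine integrable_of_bdd_supp
      (hgm.mul ((measurable_const.mul (measurable_id.min measurable_const)).sub measurable_const))
      (M := Cb * (2*c*(2*C) + 2*c*C)) (R := R) (fun x hx => ?_) ?_
    · rw [abs_mul]
      refine mul_le_mul (habs x hx) ?_ (abs_nonneg _) hCb0
      have h1 : 0 ≤ min x (2*C) := le_min hx.1 (by linarith)
      have h2 : min x (2*C) ≤ 2*C := min_le_right _ _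
      rw [abs_le]; constructor <;> nlinarith
    · intro x hx
      apply hgsupp
      simp only [Function.mem_support] at hx ⊢
      exact fun h0 => hx (by rw [h0, zero_mul])
  have hint2 : Integrable (fun x => g x * (2*c*x - 2*c*C)) := by
    refine integrable_of_bdd_supp
      (hgm.mul ((measurable_const.mul measurable_id).sub measurable_const))
      (M := Cb * (2*c*|R| + 2*c*C)) (R := R) (fun x hx => ?_) ?_
    · rw [abs_mul]
      refine mul_le_mul (habs x hx) ?_ (abs_nonneg _) hCb0
      have h1 : 0 ≤ x := hx.1
      have h2 : x ≤ |R| := le_trans hx.2 (le_abs_self R)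
      have h3 : (0:ℝ) ≤ |R| := abs_nonneg _
      rw [abs_le]; constructor <;> nlinarith
    · intro x hx
      apply hgsupp
      simp only [Function.mem_support] at hx ⊢
      exact fun h0 => hx (by rw [h0, zero_mul])
  have hmono : wp g h ≤ ∫ x in Ioi (0:ℝ), g x * (2*c*x - 2*c*C) := by
    rw [hw]
    refine setIntegral_mono_on hint1.integrableOn hint2.integrableOn measurableSet_Ioi
      fun x _ => ?_
    refine mul_le_mul_of_nonneg_left ?_ (hgpos x)
    have : min x (2*C) ≤ x := min_le_left _ _
    nlinarith
  have heval : ∫ x in Ioi (0:ℝ), g x * (2*c*x - 2*c*C)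
      = 2*c*(∫ x in Ioi (0:ℝ), x * g x) - 2*c*C*(∫ x in Ioi (0:ℝ), g x) := by
    have e : (fun x => g x * (2*c*x - 2*c*C))
        = fun x => 2*c*(x * g x) - (2*c*C)*(g x) := funext fun x => by ring
    rw [e, integral_sub ((hxgint.integrableOn).const_mul _) ((hgint.integrableOn).const_mul _),
      integral_const_mul, integral_const_mul]
  have hB : 0 < ∫ x in Ioi (0:ℝ), g x :=
    integral_pos_of_strategy hgm hgb hgpos hgsupp hgne
  have hA : (∫ x in Ioi (0:ℝ), x * g x) ≤ C * ∫ x in Ioi (0:ℝ), g x := by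
    have := hmca
    unfold mca at this
    exact (div_le_iff₀ hB).1 this
  calc wp g h ≤ _ := hmono
    _ = _ := heval
    _ ≤ 0 := by nlinarith

lemma wp_form_eq_zero (C : ℝ) (hC : 0 < C) {f h : ℝ → ℝ} {c c' : ℝ}
    (haef : f =ᵐ[volume.restrict (Ioi (0:ℝ))] (Ioc (0:ℝ) (2*C)).indicator (fun _ => c'))
    (hae : h =ᵐ[volume.restrict (Ioi (0:ℝ))] (Ioc (0:ℝ) (2*C)).indicator (fun _ => c)) :
    wp f h = 0 := by
  have hw : wp f h = ∫ x in Ioi (0:ℝ), f x * (2*c*(min x (2*C)) - 2*c*C) := by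
    unfold wp
    exact setIntegral_congr_fun measurableSet_Ioi fun x hx => by rw [HT C hC hae hx]
  rw [hw, integral_congr_ae (f := fun x => f x * (2*c*(min x (2*C)) - 2*c*C)) (g := fun x => (Ioc (0:ℝ) (2*C)).indicator (fun _ => c') x * (2*c*(min x (2*C)) - 2*c*C)) (haef.mul Filter.EventuallyEq.rfl)]
  have e : ∀ x : ℝ, (Ioc (0:ℝ) (2*C)).indicator (fun _ => c') x * (2*c*(min x (2*C)) - 2*c*C)
      = (Ioc (0:ℝ) (2*C)).indicator (fun t => c' * (2*c*(min t (2*C)) - 2*c*C)) x := fun x =>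
    (indicator_mul_left (i := x) _ (fun _ => c') (fun t => 2*c*(min t (2*C)) - 2*c*C)).symm
  simp only [e]
  rw [setIntegral_indicator measurableSet_Ioc, inter_eq_right.2 Ioc_subset_Ioi_self]
  have e2 : ∫ x in Ioc (0:ℝ) (2*C), c' * (2*c*(min x (2*C)) - 2*c*C)
      = ∫ x in Ioc (0:ℝ) (2*C), ((2*c*c') * x - 2*c*C*c') :=
    setIntegral_congr_fun measurableSet_Ioc fun x hx => by
      rw [min_eq_left hx.2]; ring
  rw [e2, ← intervalIntegral.integral_of_le (by linarith : (0:ℝ) ≤ 2*C),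
    intervalIntegral.integral_sub ((intervalIntegral.intervalIntegrable_id).const_mul _)
      (intervalIntegrable_const),
    intervalIntegral.integral_const_mul, integral_id, intervalIntegral.integral_const]
  simp only [smul_eq_mul]
  ring

end Aux

theorem stmt1 (C : ℝ) (hC : 0 < C) (n : ℕ) (hn : 2 ≤ n) (f : Fin n → ℝ → ℝ)
    (hstrat : ∀ k, IsStrategy (f k))
    (hform : ∀ k, ∃ c : ℝ, 0 < c ∧
      (∀ᵐ x ∂(volume.restrict (Icc (0:ℝ) (2*C))), f k x = c) ∧
      (∀ᵐ x ∂(volume.restrict (Ioi (2*C))), f k x = 0)) :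
    (∀ k, mca (f k) ≤ C) ∧
    (∀ k, ∀ g : ℝ → ℝ, IsStrategy g → mca g ≤ C →
      wp g (fun x => ∑ ℓ ∈ Finset.univ.erase k, f ℓ x) ≤
        wp (f k) (fun x => ∑ ℓ ∈ Finset.univ.erase k, f ℓ x)) ∧
    (∀ j k, IsStrategy (f j + f k) ∧ ∃ c : ℝ, 0 < c ∧
      (∀ᵐ x ∂(volume.restrict (Icc (0:ℝ) (2*C))), (f j + f k) x = c) ∧
      (∀ᵐ x ∂(volume.restrict (Ioi (2*C))), (f j + f k) x = 0)) := by
  choose c hcpos hc1 hc2 using hform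
  have haef : ∀ k, f k =ᵐ[volume.restrict (Ioi (0:ℝ))]
      (Ioc (0:ℝ) (2*C)).indicator (fun _ => c k) := fun k => form_ae C hC (hc1 k) (hc2 k)
  -- a.e. description of the sum over `erase k`
  have hsum_ae : ∀ k : Fin n, (fun x => ∑ ℓ ∈ Finset.univ.erase k, f ℓ x)
      =ᵐ[volume.restrict (Ioi (0:ℝ))]
      (Ioc (0:ℝ) (2*C)).indicator (fun _ => ∑ ℓ ∈ Finset.univ.erase k, c ℓ) := by
    intro k
    have hall : ∀ᵐ x ∂(volume.restrict (Ioi (0:ℝ))), ∀ ℓ : Fin n,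
        f ℓ x = (Ioc (0:ℝ) (2*C)).indicator (fun _ => c ℓ) x := ae_all_iff.2 haef
    filter_upwards [hall] with x hx
    rw [Finset.sum_congr rfl fun ℓ _ => hx ℓ]
    by_cases hmem : x ∈ Ioc (0:ℝ) (2*C)
    · simp [indicator_of_mem hmem]
    · simp [indicator_of_notMem hmem]
  have herase_ne : ∀ k : Fin n, (Finset.univ.erase k).Nonempty := by
    intro k
    rw [← Finset.card_pos, Finset.card_erase_of_mem (Finset.mem_univ k), Finset.card_univ,
      Fintype.card_fin]
    omega
  have hcsum_pos : ∀ k : Fin n, 0 < ∑ ℓ ∈ Finset.univ.erase k, c ℓ := fun k =>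
    Finset.sum_pos (fun ℓ _ => hcpos ℓ) (herase_ne k)
  refine ⟨fun k => le_of_eq (mca_form C hC (hcpos k) (haef k)), fun k g hg hmca => ?_,
    fun j k => ?_⟩
  · obtain ⟨hgm, ⟨Cb, hgb⟩, hgpos, ⟨R, hgsupp⟩, hgne⟩ := hg
    have h1 : wp g (fun x => ∑ ℓ ∈ Finset.univ.erase k, f ℓ x) ≤ 0 :=
      wp_le_zero C hC (hcsum_pos k) hgm hgb hgpos hgsupp hgne hmca (hsum_ae k)
    have h2 : wp (f k) (fun x => ∑ ℓ ∈ Finset.univ.erase k, f ℓ x) = 0 :=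
      wp_form_eq_zero C hC (haef k) (hsum_ae k)
    rw [h2]; exact h1
  · obtain ⟨hjm, ⟨Cbj, hjb⟩, hjpos, ⟨Rj, hjsupp⟩, hjne⟩ := hstrat j
    obtain ⟨hkm, ⟨Cbk, hkb⟩, hkpos, ⟨Rk, hksupp⟩, _⟩ := hstrat k
    refine ⟨⟨hjm.add hkm, ⟨Cbj + Cbk, fun x => add_le_add (hjb x) (hkb x)⟩,
      fun x => add_nonneg (hjpos x) (hkpos x), ⟨max Rj Rk, ?_⟩, ?_⟩,
      c j + c k, add_pos (hcpos j) (hcpos k), ?_, ?_⟩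
    · intro x hx
      have : x ∈ Function.support (f j) ∪ Function.support (f k) :=
        Function.support_add _ _ hx
      rcases this with h | h
      · exact ⟨(hjsupp h).1, le_trans (hjsupp h).2 (le_max_left _ _)⟩
      · exact ⟨(hksupp h).1, le_trans (hksupp h).2 (le_max_right _ _)⟩
    · intro hz
      apply hjne
      filter_upwards [hz] with x hx
      simp only [Pi.add_apply, Pi.zero_apply] at hx ⊢
      have := hjpos x
      have := hkpos x
      linarith
    · filter_upwards [hc1 j, hc1 k] with x hxj hxk
      simp [Pi.add_apply, hxj, hxk]
    · filter_upwards [hc2 j, hc2 k] with x hxj hxk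
      simp [Pi.add_apply, hxj, hxk]
end

section
/- Fix a constraint value C > 0 and let n ≥ 2. No n-tuple (f₁, …, fₙ) of admissible continuous strategies is an equilibrium point of the continuous game; that is, the continuous game has no equilibrium points and hence no equilibrium strategies. -/
open MeasureTheory Set

/-- A continuous strategy: continuous on `[0, ∞)`, nonnegative there,
compactly supported, and not identically zero. -/
def IsCStrategy (f : ℝ → ℝ) : Prop :=
  ContinuousOn f (Ici 0) ∧ (∀ x ∈ Ici (0:ℝ), 0 ≤ f x) ∧
  (∃ R : ℝ, ∀ x ∈ Ici (0:ℝ), R < x → f x = 0) ∧ (∃ x ∈ Ici (0:ℝ), f x ≠ 0)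

/-! ### Auxiliary integration lemmas -/

lemma aux_disj (a b : ℝ) : Disjoint (Ioc a b) (Ioi b) := by
  rw [Set.disjoint_left]; rintro x ⟨_, h1⟩ h2; exact absurd h1 (not_le.mpr h2)

lemma integrableOn_of_vanish {h : ℝ → ℝ} {R : ℝ}
    (hc : ContinuousOn h (Ici 0)) (hv : ∀ x ∈ Ici (0:ℝ), R < x → h x = 0) :
    IntegrableOn h (Ioi 0) := by
  set R' := max R 0 + 1 with hR'def
  have hR0 : (0:ℝ) ≤ R' := by
    have := le_max_right R 0; linarith
  have h1 : IntegrableOn h (Ioc 0 R') :=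
    (hc.mono (Icc_subset_Ici_self : Icc (0:ℝ) R' ⊆ Ici 0)).integrableOn_Icc.mono_set
      Ioc_subset_Icc_self
  have h2 : IntegrableOn h (Ioi R') := by
    have : EqOn h 0 (Ioi R') := by
      intro x hx
      have hx' : R' < x := hx
      have : R < x := by have := le_max_left R 0; linarith
      exact hv x (le_of_lt (lt_of_le_of_lt hR0 hx')) this
    exact (integrableOn_congr_fun this measurableSet_Ioi).mpr (integrableOn_zero)
  have := h1.union h2
  rwa [Ioc_union_Ioi_eq_Ioi hR0] at this

lemma split_integral {h : ℝ → ℝ} (hi : IntegrableOn h (Ioi 0)) {x : ℝ} (hx : 0 ≤ x) :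
    ∫ t in Ioi (0:ℝ), h t = (∫ t in Ioc 0 x, h t) + ∫ t in Ioi x, h t := by
  rw [← setIntegral_union (aux_disj 0 x) measurableSet_Ioi
    (hi.mono_set Ioc_subset_Ioi_self) (hi.mono_set (Ioi_subset_Ioi hx)),
    Ioc_union_Ioi_eq_Ioi hx]

lemma split_integral2 {h : ℝ → ℝ} (hi : IntegrableOn h (Ioi 0)) {x y : ℝ} (hx : 0 ≤ x) (hxy : x ≤ y) :
    ∫ t in Ioc (0:ℝ) y, h t = (∫ t in Ioc 0 x, h t) + ∫ t in Ioc x y, h t := by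
  rw [← setIntegral_union (by rw [Set.disjoint_left]; rintro a ⟨_, h1⟩ ⟨h2, _⟩; exact absurd h1 (not_le.mpr h2))
    measurableSet_Ioc (hi.mono_set Ioc_subset_Ioi_self)
    (hi.mono_set (fun t ht => lt_of_le_of_lt hx ht.1)),
    Ioc_union_Ioc_eq_Ioc hx hxy]

lemma const_le_setIntegral {h : ℝ → ℝ} {a b c : ℝ} (hab : a ≤ b)
    (hi : IntegrableOn h (Ioc a b)) (hc : ∀ x ∈ Ioc a b, c ≤ h x) :
    c * (b - a) ≤ ∫ t in Ioc a b, h t := by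
  have h1 : ∫ t in Ioc a b, (c:ℝ) ≤ ∫ t in Ioc a b, h t := by
    apply setIntegral_mono_on ((integrableOn_const_iff (C := c)).mpr (Or.inr (by rw [Real.volume_Ioc]; exact ENNReal.ofReal_lt_top)))
      hi measurableSet_Ioc hc
  rwa [setIntegral_const, Real.volume_real_Ioc_of_le hab, smul_eq_mul, mul_comm] at h1

lemma setIntegral_le_const {h : ℝ → ℝ} {a b c : ℝ} (hab : a ≤ b)
    (hi : IntegrableOn h (Ioc a b)) (hc : ∀ x ∈ Ioc a b, h x ≤ c) :
    ∫ t in Ioc a b, h t ≤ c * (b - a) := by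
  have h1 : ∫ t in Ioc a b, h t ≤ ∫ t in Ioc a b, (c:ℝ) := by
    apply setIntegral_mono_on hi ((integrableOn_const_iff (C := c)).mpr (Or.inr (by rw [Real.volume_Ioc]; exact ENNReal.ofReal_lt_top)))
      measurableSet_Ioc hc
  rwa [setIntegral_const, Real.volume_real_Ioc_of_le hab, smul_eq_mul, mul_comm] at h1

lemma pos_integral {h : ℝ → ℝ} (hc : ContinuousOn h (Ici 0)) (hi : IntegrableOn h (Ioi 0))
    (h0 : ∀ x ∈ Ioi (0:ℝ), 0 ≤ h x) {x0 : ℝ} (hx0 : 0 < x0) (hpos : 0 < h x0) :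
    0 < ∫ t in Ioi (0:ℝ), h t := by
  have hca : ContinuousAt h x0 := hc.continuousAt (Ici_mem_nhds hx0)
  rw [Metric.continuousAt_iff] at hca
  obtain ⟨δ, hδ, hball⟩ := hca (h x0 / 2) (by linarith)
  set a := max (x0 - δ/2) (x0/2) with ha
  have hax : a < x0 := by apply max_lt <;> linarith
  have ha0 : 0 < a := lt_of_lt_of_le (by linarith) (le_max_right _ _)
  have hsub : Ioc a x0 ⊆ Ioi (0:ℝ) := fun t ht => lt_trans ha0 ht.1
  have hlow : ∀ t ∈ Ioc a x0, h x0 / 2 ≤ h t := by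
    intro t ht
    have hd : dist t x0 < δ := by
      rw [Real.dist_eq, abs_lt]
      constructor
      · have := le_max_left (x0 - δ/2) (x0/2); have := ht.1; linarith
      · have := ht.2; linarith
    have := hball hd
    rw [Real.dist_eq, abs_lt] at this
    linarith
  have h1 : h x0 / 2 * (x0 - a) ≤ ∫ t in Ioc a x0, h t :=
    const_le_setIntegral (le_of_lt hax) (hi.mono_set hsub) hlow
  have h2 : ∫ t in Ioc a x0, h t ≤ ∫ t in Ioi (0:ℝ), h t :=
    setIntegral_mono_set hi ((ae_restrict_iff' measurableSet_Ioi).mpr (ae_of_all _ h0))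
      (ae_of_all _ hsub)
  nlinarith

/-! ### Triangle bumps -/

noncomputable def tri (p η x : ℝ) : ℝ := max 0 (η - |x - p|)

lemma tri_nonneg (p η x : ℝ) : 0 ≤ tri p η x := le_max_left _ _

lemma tri_self {p η : ℝ} (hη : 0 ≤ η) : tri p η p = η := by
  simp [tri, abs_of_nonneg, hη]

lemma tri_cont (p η : ℝ) : Continuous (tri p η) :=
  continuous_const.max (continuous_const.sub (continuous_id.sub continuous_const).abs)

lemma tri_eq_zero {p η x : ℝ} (h : η ≤ |x - p|) : tri p η x = 0 :=
  max_eq_left (by linarith)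

lemma tri_int (p η : ℝ) : IntegrableOn (tri p η) (Ioi 0) := by
  apply integrableOn_of_vanish (R := p + η) (tri_cont p η).continuousOn
  intro x _ hx
  exact tri_eq_zero (le_trans (by linarith) (le_abs_self _))

lemma tri_t_int (p η : ℝ) : IntegrableOn (fun t => t * tri p η t) (Ioi 0) := by
  apply integrableOn_of_vanish (R := p + η) (continuousOn_id.mul (tri_cont p η).continuousOn)
  intro x _ hx
  show x * tri p η x = 0
  rw [tri_eq_zero (le_trans (by linarith) (le_abs_self _)), mul_zero]

lemma tri_mass_pos {p η : ℝ} (hp : 0 < p) (hη : 0 < η) :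
    0 < ∫ t in Ioi (0:ℝ), tri p η t :=
  pos_integral (tri_cont p η).continuousOn (tri_int p η)
    (fun x _ => tri_nonneg p η x) hp (by rw [tri_self (le_of_lt hη)]; exact hη)

lemma tri_moment (p η : ℝ) :
    ∫ t in Ioi (0:ℝ), t * tri p η t ≤ (p + η) * ∫ t in Ioi (0:ℝ), tri p η t := by
  rw [← MeasureTheory.integral_const_mul _ _]
  apply setIntegral_mono_on (tri_t_int p η) ((tri_int p η).const_mul _) measurableSet_Ioi
  intro x _
  rcases le_or_gt x (p + η) with h | h
  · exact mul_le_mul_of_nonneg_right h (tri_nonneg p η x)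
  · rw [tri_eq_zero (le_trans (by linarith) (le_abs_self _)), mul_zero, mul_zero]

lemma tri_weight_lb {p η c : ℝ} {ψ : ℝ → ℝ}
    (hψint : IntegrableOn (fun x => tri p η x * ψ x) (Ioi 0))
    (hlow : ∀ x, |x - p| ≤ η → c ≤ ψ x) :
    c * (∫ t in Ioi (0:ℝ), tri p η t) ≤ ∫ x in Ioi (0:ℝ), tri p η x * ψ x := by
  rw [← MeasureTheory.integral_const_mul _ _]
  apply setIntegral_mono_on ((tri_int p η).const_mul _) hψint measurableSet_Ioi
  intro x _
  rcases le_or_gt (|x - p|) η with h | h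
  · calc c * tri p η x ≤ ψ x * tri p η x :=
          mul_le_mul_of_nonneg_right (hlow x h) (tri_nonneg p η x)
      _ = tri p η x * ψ x := mul_comm _ _
  · rw [tri_eq_zero (le_of_lt h), mul_zero, zero_mul]

/-! ### The ψ function -/

noncomputable def psi (G : ℝ → ℝ) (x : ℝ) : ℝ :=
  (∫ t in Ioc (0:ℝ) x, G t) - ∫ t in Ioi x, G t

lemma wp_eq_s2 (f G : ℝ → ℝ) : wp f G = ∫ x in Ioi (0:ℝ), f x * psi G x := rfl

lemma psi_eq {G : ℝ → ℝ} (hGi : IntegrableOn G (Ioi 0)) {x : ℝ} (hx : 0 ≤ x) :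
    psi G x = 2 * (∫ t in Ioc (0:ℝ) x, G t) - ∫ t in Ioi (0:ℝ), G t := by
  rw [psi, split_integral hGi hx]; ring

lemma psi_diff {G : ℝ → ℝ} (hGi : IntegrableOn G (Ioi 0)) {x y : ℝ}
    (hx : 0 ≤ x) (hxy : x ≤ y) :
    psi G y - psi G x = 2 * ∫ t in Ioc x y, G t := by
  rw [psi_eq hGi hx, psi_eq hGi (le_trans hx hxy), split_integral2 hGi hx hxy]; ring

lemma psi_mono {G : ℝ → ℝ} (hGi : IntegrableOn G (Ioi 0))
    (hG0 : ∀ x ∈ Ici (0:ℝ), 0 ≤ G x) {x y : ℝ} (hx : 0 ≤ x) (hxy : x ≤ y) :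
    psi G x ≤ psi G y := by
  have h1 : 0 ≤ ∫ t in Ioc x y, G t :=
    setIntegral_nonneg measurableSet_Ioc (fun t ht => hG0 t (le_trans hx (le_of_lt ht.1)))
  have := psi_diff hGi hx hxy
  linarith

lemma psi_lb {G : ℝ → ℝ} (hGi : IntegrableOn G (Ioi 0))
    (hG0 : ∀ x ∈ Ici (0:ℝ), 0 ≤ G x) {x : ℝ} (hx : 0 ≤ x) :
    -(∫ t in Ioi (0:ℝ), G t) ≤ psi G x := by
  have h1 : 0 ≤ ∫ t in Ioc (0:ℝ) x, G t :=
    setIntegral_nonneg measurableSet_Ioc (fun t ht => hG0 t (le_of_lt ht.1))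
  have := psi_eq hGi hx
  linarith

lemma psi_cont {G : ℝ → ℝ} {R : ℝ} (hGc : ContinuousOn G (Ici 0))
    (hGR : ∀ x ∈ Ici (0:ℝ), R < x → G x = 0) :
    ContinuousOn (psi G) (Ici 0) := by
  have hGi : IntegrableOn G (Ioi 0) := integrableOn_of_vanish hGc hGR
  -- bound on G
  obtain ⟨K, hK⟩ : ∃ K, ∀ x ∈ Icc (0:ℝ) (max R 0), |G x| ≤ K := by
    obtain ⟨K, hK⟩ := (isCompact_Icc (a := (0:ℝ)) (b := max R 0)).exists_bound_of_continuousOn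
      (hGc.mono (Icc_subset_Ici_self))
    exact ⟨K, fun x hx => hK x hx⟩
  set K' := max K 0 with hK'def
  have hKb : ∀ x ∈ Ici (0:ℝ), |G x| ≤ K' := by
    intro x hx
    rcases le_or_gt x (max R 0) with h | h
    · exact le_trans (hK x ⟨hx, h⟩) (le_max_left _ _)
    · rw [hGR x hx (lt_of_le_of_lt (le_max_left R 0) h), abs_zero]; exact le_max_right _ _
  have hK'0 : 0 ≤ K' := le_max_right _ _
  -- Lipschitz-type bound
  have hlip : ∀ x ∈ Ici (0:ℝ), ∀ y ∈ Ici (0:ℝ), x ≤ y → |psi G y - psi G x| ≤ 2 * K' * (y - x) := by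
    intro x hx y _ hxy
    rw [psi_diff hGi hx hxy]
    have h1 : ∫ t in Ioc x y, G t ≤ K' * (y - x) :=
      setIntegral_le_const hxy (hGi.mono_set (fun t ht => lt_of_le_of_lt hx ht.1))
        (fun t ht => le_trans (le_abs_self _) (hKb t (le_trans hx (le_of_lt ht.1))))
    have h2 : -K' * (y - x) ≤ ∫ t in Ioc x y, G t := by
      apply const_le_setIntegral hxy (hGi.mono_set (fun t ht => lt_of_le_of_lt hx ht.1))
      intro t ht
      have h3 := hKb t (le_trans hx (le_of_lt ht.1))
      rw [abs_le] at h3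
      linarith [h3.1]
    rw [abs_le]; constructor <;> nlinarith
  intro x hx
  rw [Metric.continuousWithinAt_iff]
  intro ε hε
  refine ⟨ε / (2 * K' + 1), by positivity, ?_⟩
  intro y hy hd
  rw [Real.dist_eq] at hd ⊢
  rcases le_total x y with h | h
  · have := hlip x hx y hy h
    have hyx : |y - x| = y - x := abs_of_nonneg (by linarith)
    rw [hyx] at hd
    rw [lt_div_iff₀ (by positivity)] at hd
    calc |psi G y - psi G x| ≤ 2 * K' * (y - x) := this
      _ < ε := by nlinarith
  · have := hlip y hy x hx h
    have hyx : |y - x| = x - y := by rw [abs_sub_comm]; exact abs_of_nonneg (by linarith)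
    rw [hyx] at hd
    rw [lt_div_iff₀ (by positivity)] at hd
    calc |psi G y - psi G x| = |psi G x - psi G y| := by rw [abs_sub_comm]
      _ ≤ 2 * K' * (x - y) := this
      _ < ε := by nlinarith

lemma int3 {μ : Measure ℝ} {f1 f2 f3 : ℝ → ℝ} (h1 : Integrable f1 μ)
    (h2 : Integrable f2 μ) (h3 : Integrable f3 μ) :
    ∫ x, f1 x + (f2 x + f3 x) ∂μ
      = (∫ x, f1 x ∂μ) + ((∫ x, f2 x ∂μ) + ∫ x, f3 x ∂μ) := by
  calc ∫ x, f1 x + (f2 x + f3 x) ∂μ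
      = (∫ x, f1 x ∂μ) + (∫ x, f2 x + f3 x ∂μ) := integral_add h1 (h2.add h3)
    _ = (∫ x, f1 x ∂μ) + ((∫ x, f2 x ∂μ) + ∫ x, f3 x ∂μ) := by rw [integral_add h2 h3]

lemma intsub3 {μ : Measure ℝ} {f1 f2 f3 : ℝ → ℝ} (h1 : Integrable f1 μ)
    (h2 : Integrable f2 μ) (h3 : Integrable f3 μ) :
    ∫ x, f1 x - f2 x - f3 x ∂μ
      = (∫ x, f1 x ∂μ) - (∫ x, f2 x ∂μ) - ∫ x, f3 x ∂μ := by
  calc ∫ x, f1 x - f2 x - f3 x ∂μ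
      = (∫ x, f1 x - f2 x ∂μ) - ∫ x, f3 x ∂μ := integral_sub (h1.sub h2) h3
    _ = (∫ x, f1 x ∂μ) - (∫ x, f2 x ∂μ) - ∫ x, f3 x ∂μ := by rw [integral_sub h1 h2]


set_option maxHeartbeats 2000000 in
lemma no_eq_aux {C : ℝ} (hC : 0 < C) {f G : ℝ → ℝ} {R xs : ℝ}
    (hfc : ContinuousOn f (Ici 0)) (hf0 : ∀ x ∈ Ici (0:ℝ), 0 ≤ f x)
    (hfR : ∀ x ∈ Ici (0:ℝ), R < x → f x = 0)
    (hGc : ContinuousOn G (Ici 0)) (hG0 : ∀ x ∈ Ici (0:ℝ), 0 ≤ G x)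
    (hGR : ∀ x ∈ Ici (0:ℝ), R < x → G x = 0)
    (hM : 0 < ∫ t in Ioi (0:ℝ), G t)
    (hmca : mca f ≤ C)
    (hxs : 0 < xs) (hGtail : ∀ x ∈ Ici (0:ℝ), xs ≤ x → G x = 0)
    (hacc : ∀ δ, 0 < δ → ∃ p q, xs - δ < p ∧ p < q ∧ q < xs ∧ 0 < f p ∧ 0 < f q)
    (hbest : ∀ g, IsCStrategy g → mca g ≤ C → wp g G ≤ wp f G) : False := by
  have hfi : IntegrableOn f (Ioi 0) := integrableOn_of_vanish hfc hfR
  have hGi : IntegrableOn G (Ioi 0) := integrableOn_of_vanish hGc hGR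
  have htfi : IntegrableOn (fun t => t * f t) (Ioi 0) :=
    integrableOn_of_vanish (continuousOn_id.mul hfc)
      (fun x hx h => by rw [hfR x hx h, mul_zero])
  set M := ∫ t in Ioi (0:ℝ), G t with hMdef
  set m := ∫ t in Ioi (0:ℝ), f t with hmdef
  set T := ∫ t in Ioi (0:ℝ), t * f t with hTdef
  obtain ⟨p0, q0, hp0a, hpq0, hq0a, hfp0, hfq0⟩ := hacc xs hxs
  have hp0pos : 0 < p0 := by linarith
  have hm : 0 < m := pos_integral hfc hfi (fun x hx => hf0 x (mem_Ici.mpr (le_of_lt hx))) hp0pos hfp0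
  have hTm : T ≤ C * m := by
    have h1 := hmca
    rw [mca] at h1
    exact (div_le_iff₀ hm).mp h1
  -- ψ facts
  have hψc : ContinuousOn (psi G) (Ici 0) := psi_cont hGc hGR
  have hψxs : psi G xs = M := by
    have h0 : ∫ t in Ioi xs, G t = 0 := by
      rw [setIntegral_congr_fun measurableSet_Ioi
        (fun x hx => hGtail x (le_of_lt (lt_trans hxs hx)) (le_of_lt hx))]
      simp
    have h1 := split_integral hGi (le_of_lt hxs)
    rw [psi, h0, sub_zero, hMdef]
    linarith
  -- f is a strategy
  have hfstrat : IsCStrategy f :=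
    ⟨hfc, hf0, ⟨R, hfR⟩, ⟨p0, le_of_lt hp0pos, ne_of_gt hfp0⟩⟩
  -- scaling: wp f G = 0
  have hscale : ∀ c : ℝ, wp (fun x => c * f x) G = c * wp f G := by
    intro c
    rw [wp_eq_s2, wp_eq_s2, ← MeasureTheory.integral_const_mul]
    apply setIntegral_congr_fun measurableSet_Ioi
    intro x _
    ring
  have hscalemca : ∀ c : ℝ, 0 < c → mca (fun x => c * f x) = mca f := by
    intro c hc'
    rw [mca, mca]
    have h1 : ∫ t in Ioi (0:ℝ), t * (c * f t) = c * T := by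
      rw [← MeasureTheory.integral_const_mul]
      apply setIntegral_congr_fun measurableSet_Ioi
      intro x _
      ring
    have h2 : ∫ t in Ioi (0:ℝ), c * f t = c * m := MeasureTheory.integral_const_mul _ _
    rw [h1, h2, hTdef, hmdef, mul_div_mul_left _ _ (ne_of_gt hc')]
  have hscalestrat : ∀ c : ℝ, 0 < c → IsCStrategy (fun x => c * f x) := by
    intro c hc'
    refine ⟨continuousOn_const.mul hfc,
      fun x hx => mul_nonneg (le_of_lt hc') (hf0 x hx),
      ⟨R, fun x hx h => by show c * f x = 0; rw [hfR x hx h, mul_zero]⟩,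
      ⟨p0, le_of_lt hp0pos, ne_of_gt (mul_pos hc' hfp0)⟩⟩
  have hW : wp f G = 0 := by
    have h2 := hbest _ (hscalestrat 2 two_pos)
      (by rw [hscalemca 2 two_pos]; exact hmca)
    rw [hscale 2] at h2
    have h3 := hbest _ (hscalestrat (1/2) (by norm_num))
      (by rw [hscalemca (1/2) (by norm_num)]; exact hmca)
    rw [hscale (1/2)] at h3
    linarith
  have hWf : ∫ x in Ioi (0:ℝ), f x * psi G x = 0 := by rw [← wp_eq_s2]; exact hW
  have hbest0 : ∀ g, IsCStrategy g → mca g ≤ C →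
      ∫ x in Ioi (0:ℝ), g x * psi G x ≤ 0 := by
    intro g h1 h2
    calc ∫ x in Ioi (0:ℝ), g x * psi G x = wp g G := (wp_eq_s2 g G).symm
      _ ≤ wp f G := hbest g h1 h2
      _ = 0 := hW
  -- integrability of products with ψ
  have htriψint : ∀ p η : ℝ, IntegrableOn (fun x => tri p η x * psi G x) (Ioi 0) := by
    intro p η
    apply integrableOn_of_vanish (R := p + η) (((tri_cont p η).continuousOn).mul hψc)
    intro x _ h
    show tri p η x * psi G x = 0
    rw [tri_eq_zero (le_trans (by linarith) (le_abs_self _)), zero_mul]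
  have hfψint : IntegrableOn (fun x => f x * psi G x) (Ioi 0) := by
    apply integrableOn_of_vanish (R := R) (hfc.mul hψc)
    intro x hx h
    show f x * psi G x = 0
    rw [hfR x hx h, zero_mul]
  -- the master inequality via two-bump deviations
  have master : ∀ u v, 0 < u → u < C → C ≤ v →
      (v - C) * psi G u + (C - u) * psi G v ≤ 0 := by
    intro u v hu huC hCv
    have hv0 : 0 < v := lt_of_lt_of_le hC hCv
    have huv : u < v := lt_of_lt_of_le huC hCv
    have hgoal : ∀ ε, 0 < ε → (v - C) * psi G u + (C - u) * psi G v ≤ 0 + ε := by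
      intro ε hε
      obtain ⟨A, hA0, hA⟩ : ∃ A : ℝ, 0 < A ∧ A = |psi G u| + |psi G v| + 1 :=
        ⟨_, by positivity, rfl⟩
      obtain ⟨ε', hε', hε'def⟩ : ∃ e : ℝ, 0 < e ∧ e = ε / (2 * (v - u + 1)) :=
        ⟨_, div_pos hε (by linarith only [huv]), rfl⟩
      obtain ⟨η1, hη1, hcu⟩ := (Metric.continuousWithinAt_iff.mp (hψc u (le_of_lt hu))) ε' hε'
      obtain ⟨η2, hη2, hcv⟩ := (Metric.continuousWithinAt_iff.mp (hψc v (le_of_lt hv0))) ε' hε'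
      obtain ⟨η, hη, hηu, hηC, hη1', hη2', hηε⟩ :
          ∃ η : ℝ, 0 < η ∧ η < u ∧ η < C - u ∧ η < η1 ∧ η < η2 ∧ η ≤ ε/(2*A) := by
        have hq : (0:ℝ) < ε/(2*A) := by positivity
        refine ⟨min (min (u/2) ((C-u)/2)) (min (min (η1/2) (η2/2)) (ε/(2*A))), ?_, ?_, ?_, ?_, ?_, ?_⟩
        · exact lt_min (lt_min (by linarith) (by linarith))
            (lt_min (lt_min (by linarith) (by linarith)) hq)
        · have h1 := min_le_left (min (u/2) ((C-u)/2)) (min (min (η1/2) (η2/2)) (ε/(2*A)))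
          have h2 := min_le_left (u/2) ((C-u)/2)
          linarith
        · have h1 := min_le_left (min (u/2) ((C-u)/2)) (min (min (η1/2) (η2/2)) (ε/(2*A)))
          have h2 := min_le_right (u/2) ((C-u)/2)
          linarith
        · have h1 := min_le_right (min (u/2) ((C-u)/2)) (min (min (η1/2) (η2/2)) (ε/(2*A)))
          have h2 := min_le_left (min (η1/2) (η2/2)) (ε/(2*A))
          have h3 := min_le_left (η1/2) (η2/2)
          linarith
        · have h1 := min_le_right (min (u/2) ((C-u)/2)) (min (min (η1/2) (η2/2)) (ε/(2*A)))
          have h2 := min_le_left (min (η1/2) (η2/2)) (ε/(2*A))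
          have h3 := min_le_right (η1/2) (η2/2)
          linarith
        · have h1 := min_le_right (min (u/2) ((C-u)/2)) (min (min (η1/2) (η2/2)) (ε/(2*A)))
          have h2 := min_le_right (min (η1/2) (η2/2)) (ε/(2*A))
          linarith
      set mu := ∫ t in Ioi (0:ℝ), tri u η t with hmu_def
      set mv := ∫ t in Ioi (0:ℝ), tri v η t with hmv_def
      have hmu : 0 < mu := tri_mass_pos hu hη
      have hmv : 0 < mv := tri_mass_pos hv0 hη
      obtain ⟨a, ha, ha_def⟩ : ∃ a : ℝ, 0 < a ∧ a = v + η - C :=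
        ⟨_, by linarith only [hη, hCv], rfl⟩
      obtain ⟨b, hb, hb_def⟩ : ∃ b : ℝ, 0 < b ∧ b = C - u - η :=
        ⟨_, by linarith only [hηC], rfl⟩
      obtain ⟨a', ha', ha'_def⟩ : ∃ x : ℝ, 0 < x ∧ x = a / mu := ⟨_, div_pos ha hmu, rfl⟩
      obtain ⟨b', hb', hb'_def⟩ : ∃ x : ℝ, 0 < x ∧ x = b / mv := ⟨_, div_pos hb hmv, rfl⟩
      have ha'mu : a' * mu = a := by rw [ha'_def]; exact div_mul_cancel₀ a (ne_of_gt hmu)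
      have hb'mv : b' * mv = b := by rw [hb'_def]; exact div_mul_cancel₀ b (ne_of_gt hmv)
      set g := fun x => f x + (a' * tri u η x + b' * tri v η x) with hgdef
      have hgstrat : IsCStrategy g := by
        refine ⟨hfc.add ((((continuous_const.mul (tri_cont u η))).add
            ((continuous_const.mul (tri_cont v η)))).continuousOn), ?_, ⟨max R (v + η), ?_⟩,
            ⟨u, le_of_lt hu, ?_⟩⟩
        · intro x hx
          have h1 := hf0 x hx
          have h2 := tri_nonneg u η x
          have h3 := tri_nonneg v η x
          have := mul_nonneg (le_of_lt ha') h2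
          have := mul_nonneg (le_of_lt hb') h3
          simp only [hgdef]
          linarith
        · intro x hx h
          have hxR : R < x := lt_of_le_of_lt (le_max_left _ _) h
          have hxv : v + η < x := lt_of_le_of_lt (le_max_right _ _) h
          have e1 : tri u η x = 0 := tri_eq_zero (le_trans (by linarith) (le_abs_self _))
          have e2 : tri v η x = 0 := tri_eq_zero (le_trans (by linarith) (le_abs_self _))
          simp only [hgdef, hfR x hx hxR, e1, e2, mul_zero, add_zero, zero_add]
        · have h1 : tri u η u = η := tri_self (le_of_lt hη)
          have h2 := hf0 u (le_of_lt hu)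
          have h3 := tri_nonneg v η u
          have := mul_nonneg (le_of_lt hb') h3
          apply ne_of_gt
          simp only [hgdef, h1]
          have h4 : 0 < a' * η := mul_pos ha' hη
          have h5 : 0 ≤ b' * tri v η u := mul_nonneg (le_of_lt hb') h3
          linarith
      have hgmass : ∫ x in Ioi (0:ℝ), g x = m + (a' * mu + b' * mv) := by
        have e0 : ∀ x ∈ Ioi (0:ℝ), g x
            = f x + ((fun y => a' * tri u η y) x + (fun y => b' * tri v η y) x) := by
          intro x _
          simp only [hgdef]
        rw [setIntegral_congr_fun measurableSet_Ioi e0,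
          int3 hfi ((tri_int u η).const_mul a') ((tri_int v η).const_mul b'),
          MeasureTheory.integral_const_mul, MeasureTheory.integral_const_mul]
      have hgmom : ∫ x in Ioi (0:ℝ), x * g x ≤ T + (a' * ((u+η)*mu) + b' * ((v+η)*mv)) := by
        have e0 : ∀ x ∈ Ioi (0:ℝ), x * g x
            = x * f x + ((fun y => a' * (y * tri u η y)) x + (fun y => b' * (y * tri v η y)) x) := by
          intro x _
          simp only [hgdef]
          ring
        rw [setIntegral_congr_fun measurableSet_Ioi e0,
          int3 htfi ((tri_t_int u η).const_mul a') ((tri_t_int v η).const_mul b'),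
          MeasureTheory.integral_const_mul, MeasureTheory.integral_const_mul]
        have h1 := tri_moment u η
        have h2 := tri_moment v η
        have h3 := mul_le_mul_of_nonneg_left h1 (le_of_lt ha')
        have h4 := mul_le_mul_of_nonneg_left h2 (le_of_lt hb')
        rw [hTdef]
        linarith only [h3, h4]
      have hgden : (0:ℝ) < m + (a' * mu + b' * mv) := by
        linarith only [mul_pos ha' hmu, mul_pos hb' hmv, hm]
      have hgmca : mca g ≤ C := by
        rw [mca, div_le_iff₀ (by rw [hgmass]; exact hgden)]
        rw [hgmass]
        have hid : a * (u+η) + b * (v+η) = C * (a + b) := by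
          simp only [ha_def, hb_def]
          ring
        calc ∫ t in Ioi (0:ℝ), t * g t ≤ T + (a' * ((u+η)*mu) + b' * ((v+η)*mv)) := hgmom
          _ = T + (a * (u+η) + b * (v+η)) := by
              rw [show a' * ((u+η)*mu) = (a' * mu) * (u+η) by ring,
                show b' * ((v+η)*mv) = (b' * mv) * (v+η) by ring, ha'mu, hb'mv]
          _ = T + C * (a + b) := by rw [hid]
          _ ≤ C * m + C * (a + b) := by linarith only [hTm]
          _ = C * (m + (a' * mu + b' * mv)) := by rw [ha'mu, hb'mv]; ring
      have hpay := hbest0 g hgstrat hgmca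
      have hexp : ∫ x in Ioi (0:ℝ), g x * psi G x
          = (∫ x in Ioi (0:ℝ), f x * psi G x)
            + (a' * (∫ x in Ioi (0:ℝ), tri u η x * psi G x)
              + b' * (∫ x in Ioi (0:ℝ), tri v η x * psi G x)) := by
        have e0 : ∀ x ∈ Ioi (0:ℝ), g x * psi G x
            = f x * psi G x + ((fun y => a' * (tri u η y * psi G y)) x
              + (fun y => b' * (tri v η y * psi G y)) x) := by
          intro x _
          simp only [hgdef]
          ring
        rw [setIntegral_congr_fun measurableSet_Ioi e0,
          int3 hfψint ((htriψint u η).const_mul a') ((htriψint v η).const_mul b'),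
          MeasureTheory.integral_const_mul, MeasureTheory.integral_const_mul]
      have hIu : (psi G u - ε') * mu ≤ ∫ x in Ioi (0:ℝ), tri u η x * psi G x := by
        apply tri_weight_lb (htriψint u η)
        intro x hx
        rw [abs_le] at hx
        have hx0 : x ∈ Ici (0:ℝ) := by
          simp only [mem_Ici]
          linarith only [hx.1, hηu]
        have hd : dist x u < η1 := by
          rw [Real.dist_eq, abs_lt]
          exact ⟨by linarith only [hx.1, hη1'], by linarith only [hx.2, hη1']⟩
        have h15 := hcu hx0 hd
        rw [Real.dist_eq, abs_lt] at h15
        linarith only [h15.1]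
      have hIv : (psi G v - ε') * mv ≤ ∫ x in Ioi (0:ℝ), tri v η x * psi G x := by
        apply tri_weight_lb (htriψint v η)
        intro x hx
        rw [abs_le] at hx
        have hx0 : x ∈ Ici (0:ℝ) := by
          simp only [mem_Ici]
          linarith only [hx.1, hηu, huv]
        have hd : dist x v < η2 := by
          rw [Real.dist_eq, abs_lt]
          exact ⟨by linarith only [hx.1, hη2'], by linarith only [hx.2, hη2']⟩
        have h15 := hcv hx0 hd
        rw [Real.dist_eq, abs_lt] at h15
        linarith only [h15.1]
      -- combine
      have h5 := mul_le_mul_of_nonneg_left hIu (le_of_lt ha')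
      have h6 := mul_le_mul_of_nonneg_left hIv (le_of_lt hb')
      have h7 : a * (psi G u - ε') + b * (psi G v - ε') ≤ 0 := by
        have e5 : a' * ((psi G u - ε') * mu) = a * (psi G u - ε') := by
          rw [show a' * ((psi G u - ε') * mu) = (a' * mu) * (psi G u - ε') by ring, ha'mu]
        have e6 : b' * ((psi G v - ε') * mv) = b * (psi G v - ε') := by
          rw [show b' * ((psi G v - ε') * mv) = (b' * mv) * (psi G v - ε') by ring, hb'mv]
        rw [hexp, hWf] at hpay
        rw [← e5, ← e6]
        linarith only [hpay, h5, h6]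
      have h8 : (v - u) * ε' ≤ ε / 2 := by
        have hne : (v - u + 1) ≠ 0 := ne_of_gt (by linarith only [huv])
        have e8 : (v - u + 1) * ε' = ε / 2 := by
          rw [hε'def]
          field_simp
        have h8a : (v - u) * ε' ≤ (v - u + 1) * ε' :=
          mul_le_mul_of_nonneg_right (by linarith only []) (le_of_lt hε')
        linarith only [h8a, e8]
      have h9 : a + b = v - u := by simp only [ha_def, hb_def]; ring
      have h10 : psi G v - psi G u ≤ A := by
        simp only [hA]
        linarith only [le_abs_self (psi G v), neg_abs_le (psi G u)]
      have h11 : η * (psi G v - psi G u) ≤ η * A :=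
        mul_le_mul_of_nonneg_left h10 (le_of_lt hη)
      have h12 : η * A ≤ ε / 2 := by
        have h12a := mul_le_mul_of_nonneg_right hηε (le_of_lt hA0)
        have e12 : ε / (2*A) * A = ε / 2 := by
          have hAne : A ≠ 0 := ne_of_gt hA0
          field_simp
        linarith only [h12a, e12]
      have hgeq : (v - C) * psi G u + (C - u) * psi G v
          = (a * psi G u + b * psi G v) + η * (psi G v - psi G u) := by
        simp only [ha_def, hb_def]
        ring
      rw [hgeq]
      have h13 : a * psi G u + b * psi G v ≤ (a + b) * ε' := by
        linarith only [h7]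
      rw [h9] at h13
      linarith only [h13, h11, h12, h8]
    exact le_of_forall_pos_le_add hgoal
    -- ψ(C) ≤ 0
  have hψC : psi G C ≤ 0 := by
    have h1 := master (C/2) C (by linarith) (by linarith) le_rfl
    -- (C - C) * ψ(C/2) + (C - C/2) * ψ C ≤ 0
    have h2 : (C - C/2) > 0 := by linarith
    nlinarith [h1]
  -- C < xs
  have hCxs : C < xs := by
    by_contra hcon
    push_neg at hcon
    have h1 : psi G xs ≤ psi G C := psi_mono hGi hG0 (le_of_lt hxs) hcon
    rw [hψxs] at h1
    linarith
  -- the infimum L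
  set Q := (fun u => (-psi G u) / (C - u)) '' Ioo 0 C with hQdef
  have hQne : Q.Nonempty := ⟨_, ⟨C/2, ⟨by linarith, by linarith⟩, rfl⟩⟩
  obtain ⟨lam, hlam, hlamdef⟩ : ∃ l : ℝ, 0 < l ∧ l = M / (xs - C) :=
    ⟨_, div_pos hM (by linarith), rfl⟩
  have hQlb : ∀ y ∈ Q, lam ≤ y := by
    rintro y ⟨u, ⟨hu1, hu2⟩, rfl⟩
    have hmas := master u xs hu1 hu2 (le_of_lt hCxs)
    rw [hψxs] at hmas
    rw [hlamdef, div_le_div_iff₀ (by linarith) (by linarith)]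
    nlinarith [hmas]
  have hQbdd : BddBelow Q := ⟨lam, hQlb⟩
  set L := sInf Q with hLdef
  have hlamL : lam ≤ L := le_csInf hQne hQlb
  have hLpos : 0 < L := lt_of_lt_of_le hlam hlamL
  have hP1 : ∀ x, 0 < x → psi G x ≤ L * (x - C) := by
    intro x hx
    rcases lt_trichotomy x C with h | h | h
    · have hmem : (-psi G x) / (C - x) ∈ Q := ⟨x, ⟨hx, h⟩, rfl⟩
      have h1 := csInf_le hQbdd hmem
      rw [le_div_iff₀ (by linarith)] at h1
      nlinarith [h1]
    · rw [h, sub_self, mul_zero]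
      exact hψC
    · have hlb2 : ∀ y ∈ Q, psi G x / (x - C) ≤ y := by
        rintro y ⟨u, ⟨hu1, hu2⟩, rfl⟩
        have hmas := master u x hu1 hu2 (le_of_lt h)
        rw [div_le_div_iff₀ (by linarith) (by linarith)]
        nlinarith [hmas]
      have h1 := le_csInf hQne hlb2
      rw [div_le_iff₀ (by linarith)] at h1
      linarith [h1]
  -- equality on the support of f
  have hkey : ∀ x, 0 < x → f x = 0 ∨ psi G x = L * (x - C) := by
    have hh0 : ∀ x ∈ Ioi (0:ℝ), 0 ≤ f x * (L * (x - C) - psi G x) := by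
      intro x hx
      have := hP1 x hx
      exact mul_nonneg (hf0 x (mem_Ici.mpr (le_of_lt hx))) (by linarith)
    have hhc : ContinuousOn (fun x => f x * (L * (x - C) - psi G x)) (Ici 0) :=
      hfc.mul (((continuous_const.mul (continuous_id.sub continuous_const)).continuousOn).sub hψc)
    have hhi : IntegrableOn (fun x => f x * (L * (x - C) - psi G x)) (Ioi 0) := by
      apply integrableOn_of_vanish (R := R) hhc
      intro x hx hr
      rw [hfR x hx hr, zero_mul]
    have hint : ∫ x in Ioi (0:ℝ), f x * (L * (x - C) - psi G x) = L * T - L * C * m - 0 := by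
      have e0 : ∀ x ∈ Ioi (0:ℝ), f x * (L * (x - C) - psi G x)
          = (fun y => L * (y * f y)) x - (fun y => (L * C) * f y) x - (fun y => f y * psi G y) x := by
        intro x _
        ring
      rw [setIntegral_congr_fun measurableSet_Ioi e0,
        intsub3 (htfi.const_mul L) (hfi.const_mul (L*C)) hfψint,
        MeasureTheory.integral_const_mul, MeasureTheory.integral_const_mul, hWf,
        ← hTdef, ← hmdef]
    have hle : ∫ x in Ioi (0:ℝ), f x * (L * (x - C) - psi G x) ≤ 0 := by
      rw [hint]
      nlinarith [hTm, hLpos]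
    have hge : 0 ≤ ∫ x in Ioi (0:ℝ), f x * (L * (x - C) - psi G x) :=
      setIntegral_nonneg measurableSet_Ioi hh0
    have hzero : ∫ x in Ioi (0:ℝ), f x * (L * (x - C) - psi G x) = 0 :=
      le_antisymm hle hge
    intro x hx
    by_contra hcon
    push_neg at hcon
    obtain ⟨h1, h2⟩ := hcon
    have hfx : 0 < f x := lt_of_le_of_ne (hf0 x (le_of_lt hx)) (Ne.symm h1)
    have hψx : psi G x < L * (x - C) := lt_of_le_of_ne (hP1 x hx) h2
    have hpos : 0 < f x * (L * (x - C) - psi G x) := mul_pos hfx (by linarith)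
    have := pos_integral hhc hhi hh0 hx hpos
    linarith [hzero]
  -- final contradiction near xs
  have hGxs0 : G xs = 0 := hGtail xs (le_of_lt hxs) le_rfl
  have hGca : ContinuousAt G xs := hGc.continuousAt (Ici_mem_nhds hxs)
  rw [Metric.continuousAt_iff] at hGca
  obtain ⟨δ0, hδ0, hball⟩ := hGca (L/4) (by positivity)
  obtain ⟨p, q, hp1, hpq, hq1, hfp, hfq⟩ := hacc (min δ0 xs) (lt_min hδ0 hxs)
  have hp0 : 0 < p := by
    have := min_le_right δ0 xs
    linarith
  have hψp : psi G p = L * (p - C) := (hkey p hp0).resolve_left (ne_of_gt hfp)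
  have hψq : psi G q = L * (q - C) := (hkey q (lt_trans hp0 hpq)).resolve_left (ne_of_gt hfq)
  have hdiff := psi_diff hGi (le_of_lt hp0) (le_of_lt hpq)
  have hGsmall : ∀ t ∈ Ioc p q, G t ≤ L/4 := by
    intro t ht
    have hmin1 := min_le_left δ0 xs
    have hd : dist t xs < δ0 := by
      rw [Real.dist_eq, abs_lt]
      constructor
      · have := ht.1; linarith
      · have := ht.2; linarith
    have h3 := hball hd
    rw [Real.dist_eq, hGxs0, sub_zero] at h3
    exact le_trans (le_abs_self _) (le_of_lt h3)
  have hIle : ∫ t in Ioc p q, G t ≤ L/4 * (q - p) :=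
    setIntegral_le_const (le_of_lt hpq) (hGi.mono_set (fun t ht => lt_trans hp0 ht.1)) hGsmall
  rw [hψp, hψq] at hdiff
  nlinarith [hdiff, hIle, mul_pos hLpos (sub_pos.mpr hpq)]

lemma pos_integral' {h : ℝ → ℝ} (hc : ContinuousOn h (Ici 0)) (hi : IntegrableOn h (Ioi 0))
    (h0 : ∀ x ∈ Ici (0:ℝ), 0 ≤ h x) {x0 : ℝ} (hx0 : 0 ≤ x0) (hpos : 0 < h x0) :
    0 < ∫ t in Ioi (0:ℝ), h t := by
  rcases lt_or_eq_of_le hx0 with h1 | h1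
  · exact pos_integral hc hi (fun x hx => h0 x (mem_Ici.mpr (le_of_lt hx))) h1 hpos
  · -- x0 = 0
    have hca := hc x0 hx0
    rw [Metric.continuousWithinAt_iff] at hca
    obtain ⟨δ, hδ, hb⟩ := hca (h x0) hpos
    have hy : (x0 + δ/2) ∈ Ici (0:ℝ) := by simp only [mem_Ici]; linarith
    have hd : dist (x0 + δ/2) x0 < δ := by
      rw [Real.dist_eq]
      rw [abs_of_nonneg (by linarith : (0:ℝ) ≤ x0 + δ/2 - x0)]
      linarith
    have h2 := hb hy hd
    rw [Real.dist_eq, abs_lt] at h2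
    have h3 : 0 < h (x0 + δ/2) := by linarith [h2.1]
    exact pos_integral hc hi (fun x hx => h0 x (mem_Ici.mpr (le_of_lt hx))) (by linarith) h3

theorem stmt2 (C : ℝ) (hC : 0 < C) (n : ℕ) (hn : 2 ≤ n) :
    ¬ ∃ f : Fin n → ℝ → ℝ,
      (∀ k, IsCStrategy (f k) ∧ mca (f k) ≤ C) ∧
      (∀ k, ∀ g : ℝ → ℝ, IsCStrategy g → mca g ≤ C →
        wp g (fun x => ∑ ℓ ∈ Finset.univ.erase k, f ℓ x) ≤
          wp (f k) (fun x => ∑ ℓ ∈ Finset.univ.erase k, f ℓ x)) := by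
  rintro ⟨f, hf, heq⟩
  have hfc : ∀ k, ContinuousOn (f k) (Ici 0) := fun k => (hf k).1.1
  have hf0 : ∀ k, ∀ x ∈ Ici (0:ℝ), 0 ≤ f k x := fun k => (hf k).1.2.1
  choose Rk hRk using fun k => (hf k).1.2.2.1
  have hfnz : ∀ k, ∃ x ∈ Ici (0:ℝ), f k x ≠ 0 := fun k => (hf k).1.2.2.2
  have hmca : ∀ k, mca (f k) ≤ C := fun k => (hf k).2
  have hnetriv : (Finset.univ : Finset (Fin n)).Nonempty :=
    ⟨⟨0, by omega⟩, Finset.mem_univ _⟩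
  set R := Finset.univ.sup' hnetriv Rk with hRdef
  have hRk' : ∀ k, ∀ x ∈ Ici (0:ℝ), R < x → f k x = 0 := fun k x hx h =>
    hRk k x hx (lt_of_le_of_lt (Finset.le_sup' Rk (Finset.mem_univ k)) h)
  -- total population
  set Gt : ℝ → ℝ := fun x => ∑ ℓ, f ℓ x with hGtdef
  have hGtc : ContinuousOn Gt (Ici 0) :=
    continuousOn_finset_sum _ (fun ℓ _ => hfc ℓ)
  have hGt0 : ∀ x ∈ Ici (0:ℝ), 0 ≤ Gt x := fun x hx =>
    Finset.sum_nonneg (fun ℓ _ => hf0 ℓ x hx)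
  have hGtR : ∀ x ∈ Ici (0:ℝ), R < x → Gt x = 0 := fun x hx h =>
    Finset.sum_eq_zero (fun ℓ _ => hRk' ℓ x hx h)
  have hfleGt : ∀ k, ∀ x ∈ Ici (0:ℝ), f k x ≤ Gt x := fun k x hx =>
    Finset.single_le_sum (fun ℓ _ => hf0 ℓ x hx) (Finset.mem_univ k)
  -- a positive point of Gt
  obtain ⟨x0, hx00, hx0ne⟩ := hfnz ⟨0, by omega⟩
  have hfk0 : 0 < f ⟨0, by omega⟩ x0 := lt_of_le_of_ne (hf0 _ x0 hx00) (Ne.symm hx0ne)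
  have hGtx0 : 0 < Gt x0 := lt_of_lt_of_le hfk0 (hfleGt _ x0 hx00)
  -- the set S and its sup
  set S := {x : ℝ | x ∈ Ici (0:ℝ) ∧ Gt x ≠ 0} with hSdef
  have hSne : S.Nonempty := ⟨x0, hx00, ne_of_gt hGtx0⟩
  have hSbdd : BddAbove S := by
    refine ⟨R, fun x hx => ?_⟩
    by_contra hcon
    push_neg at hcon
    exact hx.2 (hGtR x hx.1 hcon)
  set xs := sSup S with hxsdef
  have hx0xs : x0 ≤ xs := le_csSup hSbdd ⟨hx00, ne_of_gt hGtx0⟩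
  have hGt_tail : ∀ x ∈ Ici (0:ℝ), xs < x → Gt x = 0 := by
    intro x hx h
    by_contra hne'
    have hmem : x ∈ S := ⟨hx, hne'⟩
    have := le_csSup hSbdd hmem
    linarith
  have hxs0 : 0 ≤ xs := le_trans hx00 hx0xs
  have hGtxs : Gt xs = 0 := by
    by_contra hne'
    have hca := hGtc xs hxs0
    rw [Metric.continuousWithinAt_iff] at hca
    obtain ⟨δ, hδ, hb⟩ := hca (|Gt xs|) (abs_pos.mpr hne')
    have hy : (xs + δ/2) ∈ Ici (0:ℝ) := by simp only [mem_Ici]; linarith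
    have hd : dist (xs + δ/2) xs < δ := by
      rw [Real.dist_eq, abs_of_nonneg (by linarith : (0:ℝ) ≤ xs + δ/2 - xs)]
      linarith
    have h2 := hb hy hd
    rw [Real.dist_eq, hGt_tail (xs + δ/2) hy (by linarith), zero_sub, abs_neg] at h2
    exact lt_irrefl _ h2
  have hxspos : 0 < xs := by
    rcases lt_or_eq_of_le hxs0 with h | h
    · exact h
    · exfalso
      have hx0eq : x0 = (0:ℝ) := le_antisymm (h ▸ hx0xs) hx00
      rw [← h] at hGtxs
      rw [hx0eq, hGtxs] at hGtx0
      exact lt_irrefl _ hGtx0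
  have hGt_tail' : ∀ x ∈ Ici (0:ℝ), xs ≤ x → Gt x = 0 := by
    intro x hx h
    rcases lt_or_eq_of_le h with h' | h'
    · exact hGt_tail x hx h'
    · rw [← h']
      exact hGtxs
  -- the opponents' aggregate
  have hGc : ∀ k, ContinuousOn (fun x => ∑ ℓ ∈ Finset.univ.erase k, f ℓ x) (Ici 0) :=
    fun k => continuousOn_finset_sum _ (fun ℓ _ => hfc ℓ)
  have hG0 : ∀ k, ∀ x ∈ Ici (0:ℝ), 0 ≤ ∑ ℓ ∈ Finset.univ.erase k, f ℓ x :=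
    fun k x hx => Finset.sum_nonneg (fun ℓ _ => hf0 ℓ x hx)
  have hGR : ∀ k, ∀ x ∈ Ici (0:ℝ), R < x → ∑ ℓ ∈ Finset.univ.erase k, f ℓ x = 0 :=
    fun k x hx h => Finset.sum_eq_zero (fun ℓ _ => hRk' ℓ x hx h)
  have hGleGt : ∀ k, ∀ x ∈ Ici (0:ℝ), (∑ ℓ ∈ Finset.univ.erase k, f ℓ x) ≤ Gt x :=
    fun k x hx => Finset.sum_le_sum_of_subset_of_nonneg (Finset.erase_subset _ _)
      (fun ℓ _ _ => hf0 ℓ x hx)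
  have hGtail : ∀ k, ∀ x ∈ Ici (0:ℝ), xs ≤ x → ∑ ℓ ∈ Finset.univ.erase k, f ℓ x = 0 := by
    intro k x hx h
    have h1 := hGleGt k x hx
    have h2 := hG0 k x hx
    rw [hGt_tail' x hx h] at h1
    linarith
  -- positivity of opponents' mass
  haveI : Nontrivial (Fin n) := by
    apply Fin.nontrivial_iff_two_le.mpr hn
  have hMk : ∀ k, 0 < ∫ t in Ioi (0:ℝ), (∑ ℓ ∈ Finset.univ.erase k, f ℓ t) := by
    intro k
    obtain ⟨ℓ, hℓ⟩ := exists_ne k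
    obtain ⟨y0, hy00, hy0ne⟩ := hfnz ℓ
    have hfl : 0 < f ℓ y0 := lt_of_le_of_ne (hf0 ℓ y0 hy00) (Ne.symm hy0ne)
    have hGpos : 0 < ∑ ℓ' ∈ Finset.univ.erase k, f ℓ' y0 :=
      lt_of_lt_of_le hfl (Finset.single_le_sum (fun j _ => hf0 j y0 hy00)
        (Finset.mem_erase.mpr ⟨hℓ, Finset.mem_univ ℓ⟩))
    exact pos_integral' (hGc k) (integrableOn_of_vanish (hGc k) (hGR k)) (hG0 k) hy00 hGpos
  -- accumulation of support at xs for some player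
  have hclaim : ∃ k, ∀ δ, 0 < δ →
      ∃ p q, xs - δ < p ∧ p < q ∧ q < xs ∧ 0 < f k p ∧ 0 < f k q := by
    by_contra hcon
    push_neg at hcon
    choose δf hδf hprop using hcon
    have hvan : ∀ k x, xs - δf k < x → 0 < x → x < xs → f k x = 0 := by
      intro k x h1 h2 h3
      by_contra hne'
      have hfx : 0 < f k x := lt_of_le_of_ne (hf0 k x (le_of_lt h2)) (Ne.symm hne')
      have hca : ContinuousAt (f k) x := (hfc k).continuousAt (Ici_mem_nhds h2)
      rw [Metric.continuousAt_iff] at hca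
      obtain ⟨ε, hε, hb⟩ := hca (f k x) hfx
      have hminpos : 0 < min ε (xs - x) := lt_min hε (by linarith)
      set q := x + (min ε (xs - x))/2 with hqdef
      have hq1 : x < q := by
        simp only [hqdef]
        linarith
      have hq2 : q < xs := by
        have := min_le_right ε (xs - x)
        simp only [hqdef]
        linarith
      have hq3 : dist q x < ε := by
        have := min_le_left ε (xs - x)
        rw [Real.dist_eq, abs_of_nonneg (by simp only [hqdef]; linarith : (0:ℝ) ≤ q - x)]
        simp only [hqdef]
        linarith
      have h4 := hb hq3
      rw [Real.dist_eq, abs_lt] at h4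
      have h5 : 0 < f k q := by linarith [h4.1]
      have h6 := hprop k x q h1 hq1 hq2 hfx
      linarith
    obtain ⟨s, hsS, hs⟩ := exists_lt_of_lt_csSup hSne
      (show xs - min (Finset.univ.inf' hnetriv δf) xs < xs by
        have h1 : 0 < min (Finset.univ.inf' hnetriv δf) xs :=
          lt_min (by rw [Finset.lt_inf'_iff]; exact fun i _ => hδf i) hxspos
        linarith)
    have hsle : s ≤ xs := le_csSup hSbdd hsS
    have hs_lt : s < xs := by
      rcases lt_or_eq_of_le hsle with h | h
      · exact h
      · exact absurd (h ▸ hGtxs) hsS.2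
    have hspos : 0 < s := by
      have := min_le_right (Finset.univ.inf' hnetriv δf) xs
      linarith
    apply hsS.2
    apply Finset.sum_eq_zero
    intro k _
    apply hvan k s _ hspos hs_lt
    have h7 : min (Finset.univ.inf' hnetriv δf) xs ≤ δf k :=
      le_trans (min_le_left _ _) (Finset.inf'_le δf (Finset.mem_univ k))
    linarith
  obtain ⟨k, hacc⟩ := hclaim
  exact no_eq_aux hC (hfc k) (hf0 k) (hRk' k) (hGc k) (hG0 k) (hGR k) (hMk k)
    (hmca k) hxspos (hGtail k) hacc (fun g hg hmg => heq k g hg hmg)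
end

section
/- Fix a positive integer M and an odd positive integer k, and let the constraint value be C = k/(2M). A discrete strategy B with mca(B) ≤ C satisfies wp(B; B') ≥ 0 for every discrete strategy B' with mca(B') ≤ C if and only if there exists a constant c > 0 such that B(j) = c for all 0 ≤ j ≤ k and B(j) = 0 for all j > k. -/
open Set

/-- A discrete strategy: a nonnegative finitely supported function on `ℕ`
with positive total mass `|A| = Σ_j A(j)`. -/
def IsDStrategy (A : ℕ → ℝ) : Prop :=
  (∀ j, 0 ≤ A j) ∧ (Function.support A).Finite ∧ 0 < ∑ᶠ j, A j

/-- Mean competitive ability on the grid `{j/M : j ∈ ℕ}`: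
`mcaD M A = (Σ_j (j/M) A(j)) / (Σ_j A(j))`. -/
noncomputable def mcaD (M : ℕ) (A : ℕ → ℝ) : ℝ :=
  (∑ᶠ j : ℕ, ((j : ℝ) / M) * A j) / (∑ᶠ j : ℕ, A j)

/-- Discrete payoff `wpD A B = Σ_j A(j) (Σ_{i<j} B(i) − Σ_{i>j} B(i))`. -/
noncomputable def wpD (A B : ℕ → ℝ) : ℝ :=
  ∑ᶠ j : ℕ, A j * ((∑ᶠ i ∈ Iio j, B i) - ∑ᶠ i ∈ Ioi j, B i)

/- ----------------- auxiliary lemmas ----------------- -/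

lemma wp3_finsum_eq_range (f : ℕ → ℝ) (n : ℕ) (h : ∀ j, n ≤ j → f j = 0) :
    ∑ᶠ j, f j = ∑ j ∈ Finset.range n, f j := by
  apply finsum_eq_finset_sum_of_support_subset
  intro x hx
  simp only [Function.mem_support] at hx
  simp only [Finset.coe_range, Set.mem_Iio]
  by_contra hc
  exact hx (h x (by omega))

lemma wp3_finsum_pair (φ : ℕ → ℝ) (j1 j2 : ℕ) (hne : j1 ≠ j2)
    (h : ∀ i, i ≠ j1 → i ≠ j2 → φ i = 0) : ∑ᶠ i, φ i = φ j1 + φ j2 := by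
  have hsub : Function.support φ ⊆ ({j1, j2} : Finset ℕ) := by
    intro x hx
    simp only [Function.mem_support] at hx
    simp only [Finset.coe_insert, Finset.coe_singleton, Set.mem_insert_iff,
      Set.mem_singleton_iff]
    by_contra hc
    push_neg at hc
    exact hx (h x hc.1 hc.2)
  rw [finsum_eq_finset_sum_of_support_subset φ hsub, Finset.sum_pair hne]

lemma wp3_finsum_Iio (B : ℕ → ℝ) (j : ℕ) :
    ∑ᶠ i ∈ Set.Iio j, B i = ∑ i ∈ Finset.range j, B i := by
  rw [← Finset.coe_range, finsum_mem_coe_finset]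

lemma wp3_finsum_Ioi (B : ℕ → ℝ) (n j : ℕ) (h : ∀ i, n ≤ i → B i = 0) (hj : j < n) :
    ∑ᶠ i ∈ Set.Ioi j, B i = ∑ i ∈ Finset.range n, B i - ∑ i ∈ Finset.range (j+1), B i := by
  rw [← Finset.sum_Ico_eq_sub _ (by omega : j + 1 ≤ n)]
  apply finsum_mem_eq_sum_of_inter_support_eq
  ext i
  simp only [Set.mem_inter_iff, Set.mem_Ioi, Function.mem_support, Finset.coe_Ico, Set.mem_Ico]
  constructor
  · rintro ⟨h1, h2⟩
    refine ⟨⟨by omega, ?_⟩, h2⟩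
    by_contra hc
    exact h2 (h i (by omega))
  · rintro ⟨⟨h1, _⟩, h2⟩
    exact ⟨by omega, h2⟩

lemma wp3_wpD_eq (A B : ℕ → ℝ) (n : ℕ) (hA : ∀ j, n ≤ j → A j = 0)
    (hB : ∀ j, n ≤ j → B j = 0) :
    wpD A B = ∑ j ∈ Finset.range n, A j *
      ((∑ i ∈ Finset.range j, B i) + (∑ i ∈ Finset.range (j+1), B i)
        - ∑ i ∈ Finset.range n, B i) := by
  rw [wpD, wp3_finsum_eq_range _ n (fun j hj => by rw [hA j hj, zero_mul])]
  refine Finset.sum_congr rfl fun j hj => ?_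
  rw [Finset.mem_range] at hj
  rw [wp3_finsum_Iio, wp3_finsum_Ioi B n j hB hj]
  ring

lemma wp3_antisymm (A B : ℕ → ℝ) (n : ℕ) (hA : ∀ j, n ≤ j → A j = 0)
    (hB : ∀ j, n ≤ j → B j = 0) : wpD A B = - wpD B A := by
  rw [wp3_wpD_eq A B n hA hB, wp3_wpD_eq B A n hB hA]
  have key : ∑ j ∈ Finset.range n, (A j *
      ((∑ i ∈ Finset.range j, B i) + (∑ i ∈ Finset.range (j+1), B i))
      + B j * ((∑ i ∈ Finset.range j, A i) + (∑ i ∈ Finset.range (j+1), A i)))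
      = 2 * ((∑ i ∈ Finset.range n, A i) * (∑ i ∈ Finset.range n, B i)) := by
    have hterm : ∀ j, A j * ((∑ i ∈ Finset.range j, B i) + (∑ i ∈ Finset.range (j+1), B i))
        + B j * ((∑ i ∈ Finset.range j, A i) + (∑ i ∈ Finset.range (j+1), A i))
        = 2 * ((fun j => (∑ i ∈ Finset.range j, A i) * (∑ i ∈ Finset.range j, B i)) (j+1)
          - (fun j => (∑ i ∈ Finset.range j, A i) * (∑ i ∈ Finset.range j, B i)) j) := by
      intro j
      simp only [Finset.sum_range_succ]
      ring
    rw [Finset.sum_congr rfl (fun j _ => hterm j), ← Finset.mul_sum,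
      Finset.sum_range_sub (fun j => (∑ i ∈ Finset.range j, A i) * (∑ i ∈ Finset.range j, B i))]
    simp
  have hTA : ∑ j ∈ Finset.range n, A j * (∑ i ∈ Finset.range n, B i)
      = (∑ i ∈ Finset.range n, A i) * (∑ i ∈ Finset.range n, B i) := by
    rw [← Finset.sum_mul]
  have hTB : ∑ j ∈ Finset.range n, B j * (∑ i ∈ Finset.range n, A i)
      = (∑ i ∈ Finset.range n, B i) * (∑ i ∈ Finset.range n, A i) := by
    rw [← Finset.sum_mul]
  have expand : ∀ (f g : ℕ → ℝ), ∑ j ∈ Finset.range n, f j * ((∑ i ∈ Finset.range j, g i)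
      + (∑ i ∈ Finset.range (j+1), g i) - ∑ i ∈ Finset.range n, g i)
      = ∑ j ∈ Finset.range n, (f j * ((∑ i ∈ Finset.range j, g i)
        + (∑ i ∈ Finset.range (j+1), g i)) - f j * (∑ i ∈ Finset.range n, g i)) := by
    intro f g
    exact Finset.sum_congr rfl fun j _ => by ring
  rw [expand A B, expand B A, Finset.sum_sub_distrib, Finset.sum_sub_distrib, hTA, hTB]
  have hsplit : ∑ j ∈ Finset.range n, (A j *
      ((∑ i ∈ Finset.range j, B i) + (∑ i ∈ Finset.range (j+1), B i)))
      + ∑ j ∈ Finset.range n, (B j * ((∑ i ∈ Finset.range j, A i)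
      + (∑ i ∈ Finset.range (j+1), A i)))
      = 2 * ((∑ i ∈ Finset.range n, A i) * (∑ i ∈ Finset.range n, B i)) := by
    rw [← Finset.sum_add_distrib]; exact key
  linarith

lemma wp3_sum_sum (B : ℕ → ℝ) : ∀ P : ℕ,
    ∑ j ∈ Finset.range P, ∑ i ∈ Finset.range j, B i
      = ∑ i ∈ Finset.range P, (((P:ℝ) - 1) - i) * B i := by
  intro P
  induction P with
  | zero => simp
  | succ P ih =>
    rw [Finset.sum_range_succ, ih, Finset.sum_range_succ]
    push_cast
    have : ∑ i ∈ Finset.range P, (((P:ℝ) + 1 - 1) - i) * B i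
        = ∑ i ∈ Finset.range P, ((((P:ℝ) - 1) - i) * B i + B i) :=
      Finset.sum_congr rfl fun i _ => by ring
    rw [this, Finset.sum_add_distrib]
    ring

lemma wp3_sum_lin (k : ℕ) : ∀ P : ℕ,
    ∑ j ∈ Finset.range P, (2*(j:ℝ) - k) = P * ((P:ℝ) - 1 - k) := by
  intro P
  induction P with
  | zero => simp
  | succ P ih =>
    rw [Finset.sum_range_succ, ih]
    push_cast
    ring

lemma wp3_sum_alt (k : ℕ) : ∀ t : ℕ,
    ∑ j ∈ Finset.range (2*t), (-1:ℝ)^j * (2*(j:ℝ) - k) = -2 * t := by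
  intro t
  induction t with
  | zero => simp
  | succ t ih =>
    have h1 : 2 * (t+1) = (2*t) + 1 + 1 := by ring
    rw [h1, Finset.sum_range_succ, Finset.sum_range_succ, ih]
    have he : (-1:ℝ)^(2*t) = 1 := by rw [pow_mul]; norm_num
    have ho : (-1:ℝ)^(2*t+1) = -1 := by rw [pow_succ, he]; norm_num
    rw [he, ho]
    push_cast
    ring

lemma wp3_sum_h (B : ℕ → ℝ) (k : ℕ) (lam T : ℝ) (N : ℕ)
    (hT : ∑ j ∈ Finset.range (N+1), B j = T)
    (hmean : ∑ j ∈ Finset.range (N+1), (2*(j:ℝ) - k) * B j = 0) :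
    ∑ j ∈ Finset.range (N+1),
        ((∑ i ∈ Finset.range j, B i) + (∑ i ∈ Finset.range (j+1), B i)
          - T - lam * (2*(j:ℝ) - k))
      = ((N:ℝ) - k) * (T - lam * ((N:ℝ) + 1)) := by
  have hiB : ∑ i ∈ Finset.range (N+1), (i:ℝ) * B i = k * T / 2 := by
    have hexp : ∑ j ∈ Finset.range (N+1), (2*(j:ℝ) - k) * B j
        = 2 * (∑ i ∈ Finset.range (N+1), (i:ℝ) * B i)
          - k * (∑ j ∈ Finset.range (N+1), B j) := by
      rw [Finset.mul_sum, Finset.mul_sum, ← Finset.sum_sub_distrib]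
      exact Finset.sum_congr rfl fun i _ => by ring
    rw [hexp, hT] at hmean
    linarith
  have hA1 : ∑ j ∈ Finset.range (N+1), ∑ i ∈ Finset.range j, B i
      = N * T - k * T / 2 := by
    rw [wp3_sum_sum B (N+1)]
    have h2 : ∑ i ∈ Finset.range (N+1), ((((N:ℕ)+1 : ℕ):ℝ) - 1 - i) * B i
        = ∑ i ∈ Finset.range (N+1), ((N:ℝ) * B i - (i:ℝ) * B i) :=
      Finset.sum_congr rfl fun i _ => by push_cast; ring
    rw [h2, Finset.sum_sub_distrib, ← Finset.mul_sum, hT, hiB]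
  have hA2 : ∑ j ∈ Finset.range (N+1), ∑ i ∈ Finset.range (j+1), B i
      = (N * T - k * T / 2) + T := by
    rw [← hA1, ← hT, ← Finset.sum_add_distrib]
    exact Finset.sum_congr rfl fun j _ => by rw [Finset.sum_range_succ]
  have hC : ∑ j ∈ Finset.range (N+1), lam * (2*(j:ℝ) - k)
      = lam * (((N:ℕ)+1 : ℕ) * ((((N:ℕ)+1 : ℕ):ℝ) - 1 - k)) := by
    rw [← Finset.mul_sum, wp3_sum_lin]
  have hL : ∑ j ∈ Finset.range (N+1),
      ((∑ i ∈ Finset.range j, B i) + (∑ i ∈ Finset.range (j+1), B i)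
        - T - lam * (2*(j:ℝ) - k))
      = (∑ j ∈ Finset.range (N+1), ∑ i ∈ Finset.range j, B i)
        + (∑ j ∈ Finset.range (N+1), ∑ i ∈ Finset.range (j+1), B i)
        - (((N:ℕ)+1 : ℕ) : ℝ) * T
        - ∑ j ∈ Finset.range (N+1), lam * (2*(j:ℝ) - k) := by
    rw [Finset.sum_sub_distrib, Finset.sum_sub_distrib, Finset.sum_add_distrib,
      Finset.sum_const, Finset.card_range, nsmul_eq_mul]
  rw [hL, hA1, hA2, hC]
  push_cast
  ring

lemma wp3_mca_le (M k : ℕ) (hM : 0 < M) (A : ℕ → ℝ) (n : ℕ)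
    (h0 : ∀ j, n ≤ j → A j = 0) (hT : 0 < ∑ j ∈ Finset.range n, A j)
    (h : mcaD M A ≤ (k:ℝ)/(2*M)) :
    ∑ j ∈ Finset.range n, (2*(j:ℝ) - k) * A j ≤ 0 := by
  have hM0 : (M:ℝ) ≠ 0 := Nat.cast_ne_zero.2 hM.ne'
  have hnum : ∑ᶠ j : ℕ, ((j : ℝ) / M) * A j
      = ∑ j ∈ Finset.range n, ((j : ℝ) / M) * A j :=
    wp3_finsum_eq_range _ n (fun j hj => by rw [h0 j hj, mul_zero])
  have hden : ∑ᶠ j : ℕ, A j = ∑ j ∈ Finset.range n, A j :=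
    wp3_finsum_eq_range _ n h0
  rw [mcaD, hnum, hden, div_le_div_iff₀ hT (by positivity)] at h
  have hrw : (∑ j ∈ Finset.range n, ((j : ℝ) / M) * A j) * (2 * M)
      = 2 * ∑ j ∈ Finset.range n, (j : ℝ) * A j := by
    rw [Finset.sum_mul, Finset.mul_sum]
    exact Finset.sum_congr rfl fun j _ => by field_simp
  rw [hrw] at h
  have hexp : ∑ j ∈ Finset.range n, (2*(j:ℝ) - k) * A j
      = 2 * (∑ j ∈ Finset.range n, (j:ℝ) * A j)
        - k * ∑ j ∈ Finset.range n, A j := by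
    rw [Finset.mul_sum, Finset.mul_sum, ← Finset.sum_sub_distrib]
    exact Finset.sum_congr rfl fun j _ => by ring
  rw [hexp]
  linarith

set_option maxHeartbeats 2000000 in
theorem stmt3 (M k : ℕ) (hM : 0 < M) (hk : 0 < k) (hodd : Odd k)
    (C : ℝ) (hC : C = (k : ℝ) / (2 * M))
    (B : ℕ → ℝ) (hB : IsDStrategy B) (hBC : mcaD M B ≤ C) :
    (∀ B' : ℕ → ℝ, IsDStrategy B' → mcaD M B' ≤ C → 0 ≤ wpD B B') ↔
      ∃ c : ℝ, 0 < c ∧ (∀ j ≤ k, B j = c) ∧ (∀ j > k, B j = 0) := by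
  subst hC
  constructor
  · -- unbeatable ⇒ uniform
    intro H
    obtain ⟨hBpos, hBfin, hT0⟩ := hB
    obtain ⟨u, hu⟩ := hBfin.bddAbove
    set n := max (k+2) (u+1) with hn
    have hnk : k + 2 ≤ n := le_max_left _ _
    have hBz : ∀ j, n ≤ j → B j = 0 := by
      intro j hj
      by_contra hcon
      have := hu (Function.mem_support.2 hcon)
      omega
    set T := ∑ j ∈ Finset.range n, B j with hT
    have hTpos : 0 < T := by
      rw [wp3_finsum_eq_range B n hBz] at hT0
      exact hT0
    set g : ℕ → ℝ := fun j => (∑ i ∈ Finset.range j, B i)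
      + (∑ i ∈ Finset.range (j+1), B i) - T with hg
    -- test lemma
    have htest : ∀ B' : ℕ → ℝ, IsDStrategy B' → mcaD M B' ≤ (k:ℝ)/(2*M) →
        ∑ᶠ j, B' j * g j ≤ 0 := by
      intro B' hB' hC'
      obtain ⟨hp, hf, ht⟩ := hB'
      obtain ⟨u', hu'⟩ := hf.bddAbove
      set n' := max n (u'+1) with hn'
      have hnn' : n ≤ n' := le_max_left _ _
      have hB'z : ∀ j, n' ≤ j → B' j = 0 := by
        intro j hj
        by_contra hcon
        have := hu' (Function.mem_support.2 hcon)
        omega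
      have hBz' : ∀ j, n' ≤ j → B j = 0 := fun j hj => hBz j (by omega)
      have h0 := H B' ⟨hp, hf, ht⟩ hC'
      rw [wp3_antisymm B B' n' hBz' hB'z, wp3_wpD_eq B' B n' hB'z hBz'] at h0
      have hTT : ∑ i ∈ Finset.range n', B i = T := by
        rw [hT]
        symm
        apply Finset.sum_subset (Finset.range_subset_range.2 hnn')
        intro x hx hnx
        simp only [Finset.mem_range] at hx hnx
        exact hBz x (by omega)
      rw [hTT] at h0
      rw [wp3_finsum_eq_range (fun j => B' j * g j) n'
        (fun j hj => by show B' j * g j = 0; rw [hB'z j hj, zero_mul])]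
      simp only [hg]
      linarith
    -- point tests
    have hg0 : ∀ j : ℕ, 2*j < k → g j ≤ 0 := by
      intro j hj
      set D : ℕ → ℝ := fun i => if i = j then 1 else 0 with hD
      have hDoff : ∀ i, i ≠ j → D i = 0 := fun i hi => by simp [hD, hi]
      have hDtot : ∑ᶠ i, D i = 1 := by
        rw [finsum_eq_single D j hDoff]
        simp [hD]
      have hDstr : IsDStrategy D := by
        refine ⟨fun i => ?_, ?_, ?_⟩
        · simp only [hD]; split <;> norm_num
        · exact Set.Finite.subset (Set.finite_singleton j)
            (fun x hx => by by_contra hc; exact hx (hDoff x hc))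
        · rw [hDtot]; norm_num
      have hDmca : mcaD M D ≤ (k:ℝ)/(2*M) := by
        rw [mcaD, hDtot, finsum_eq_single (fun i : ℕ => ((i:ℝ)/M) * D i) j
          (fun i hi => by show ((i:ℝ)/M) * D i = 0; rw [hDoff i hi, mul_zero])]
        have : D j = 1 := by simp [hD]
        rw [this, mul_one, div_one]
        rw [div_le_div_iff₀ (by positivity) (by positivity)]
        have h1 : (2:ℝ)*j ≤ k := by
          have : (2*j : ℕ) ≤ k := by omega
          exact_mod_cast this
        have hMpos : (0:ℝ) < M := by positivity
        nlinarith
      have := htest D hDstr hDmca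
      rw [finsum_eq_single (fun i => D i * g i) j
        (fun i hi => by show D i * g i = 0; rw [hDoff i hi, zero_mul])] at this
      have hDj : D j = 1 := by simp [hD]
      rw [hDj, one_mul] at this
      exact this
    -- pair tests
    have hpair : ∀ j1 j2 : ℕ, 2*j1 < k → k < 2*j2 →
        (2*(j2:ℝ) - k) * g j1 + ((k:ℝ) - 2*j1) * g j2 ≤ 0 := by
      intro j1 j2 h1 h2
      have hne : j1 ≠ j2 := by omega
      have hw1 : (0:ℝ) < 2*(j2:ℝ) - k := by
        have : (k:ℝ) < 2*j2 := by exact_mod_cast h2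
        linarith
      have hw2 : (0:ℝ) < (k:ℝ) - 2*j1 := by
        have : (2*j1 : ℕ) < k := h1
        have : (2*(j1:ℝ)) < k := by exact_mod_cast this
        linarith
      set D : ℕ → ℝ := fun i => if i = j1 then 2*(j2:ℝ) - k else
        if i = j2 then (k:ℝ) - 2*j1 else 0 with hD
      have hDoff : ∀ i, i ≠ j1 → i ≠ j2 → D i = 0 := fun i hi1 hi2 => by
        simp [hD, hi1, hi2]
      have hDj1 : D j1 = 2*(j2:ℝ) - k := by simp [hD]
      have hDj2 : D j2 = (k:ℝ) - 2*j1 := by simp [hD, hne.symm]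
      have hDtot : ∑ᶠ i, D i = (2*(j2:ℝ) - k) + ((k:ℝ) - 2*j1) := by
        rw [wp3_finsum_pair D j1 j2 hne hDoff, hDj1, hDj2]
      have hDstr : IsDStrategy D := by
        refine ⟨fun i => ?_, ?_, ?_⟩
        · simp only [hD]; split
          · linarith
          · split
            · linarith
            · exact le_rfl
        · apply Set.Finite.subset ((Set.finite_singleton j2).insert j1)
          intro x hx
          simp only [Set.mem_insert_iff, Set.mem_singleton_iff]
          by_contra hc
          push_neg at hc
          exact hx (hDoff x hc.1 hc.2)
        · rw [hDtot]; linarith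
      have hDmca : mcaD M D ≤ (k:ℝ)/(2*M) := by
        rw [mcaD, hDtot,
          wp3_finsum_pair (fun i : ℕ => ((i:ℝ)/M) * D i) j1 j2 hne
            (fun i hi1 hi2 => by show ((i:ℝ)/M) * D i = 0; rw [hDoff i hi1 hi2, mul_zero]),
          hDj1, hDj2]
        apply le_of_eq
        have hM0 : (M:ℝ) ≠ 0 := Nat.cast_ne_zero.2 hM.ne'
        rw [div_eq_div_iff (by linarith) (by positivity)]
        field_simp
        ring
      have := htest D hDstr hDmca
      rw [wp3_finsum_pair (fun i => D i * g i) j1 j2 hne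
        (fun i hi1 hi2 => by show D i * g i = 0; rw [hDoff i hi1 hi2, zero_mul]),
        hDj1, hDj2] at this
      linarith
    -- dual variable
    obtain ⟨m, hm⟩ := hodd
    obtain ⟨js, hjs_mem, hjs_min⟩ := Finset.exists_min_image (Finset.range (m+1))
      (fun j => (-(g j)) / ((k:ℝ) - 2*j)) ⟨0, Finset.mem_range.2 (Nat.succ_pos m)⟩
    have hjsm : js ≤ m := by
      have := Finset.mem_range.1 hjs_mem
      omega
    set lam := (-(g js)) / ((k:ℝ) - 2*js) with hlam
    have hjsk : 2*js < k := by omega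
    have hden : (0:ℝ) < (k:ℝ) - 2*js := by
      have : (2*(js:ℝ)) < k := by exact_mod_cast hjsk
      linarith
    have hgjs : g js ≤ 0 := hg0 js hjsk
    have hlam0 : 0 ≤ lam := div_nonneg (by linarith) (le_of_lt hden)
    have hEqjs : g js = lam * (2*(js:ℝ) - k) := by
      rw [hlam, div_mul_eq_mul_div, eq_comm, div_eq_iff hden.ne']
      ring
    clear_value lam
    have hh : ∀ j : ℕ, g j ≤ lam * (2*(j:ℝ) - k) := by
      intro j
      rcases lt_trichotomy (2*j) k with hlt | heq | hgt
      · have hjm : j < m+1 := by omega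
        have hmin := hjs_min j (Finset.mem_range.2 hjm)
        have hdj : (0:ℝ) < (k:ℝ) - 2*j := by
          have : (2*(j:ℝ)) < k := by exact_mod_cast hlt
          linarith
        have h2 := (le_div_iff₀ hdj).1 hmin
        have h3 : lam * (2*(j:ℝ) - k) = -(lam * ((k:ℝ) - 2*j)) := by ring
        rw [h3]
        linarith
      · exfalso; omega
      · have hp := hpair js j hjsk hgt
        rw [hEqjs] at hp
        by_contra hcon
        push_neg at hcon
        have h2 := mul_lt_mul_of_pos_left hcon hden
        have hring : (2*(j:ℝ) - k) * (lam * (2*(js:ℝ) - k))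
            = -(((k:ℝ) - 2*(js:ℝ)) * (lam * (2*(j:ℝ) - k))) := by ring
        rw [hring] at hp
        linarith
    have hlampos : 0 < lam := by
      have hgn : g n = T := by
        simp only [hg]
        rw [Finset.sum_range_succ, hBz n le_rfl, ← hT]
        ring
      have h2n : (0:ℝ) < 2*(n:ℝ) - k := by
        have : k < 2*n := by omega
        have : (k:ℝ) < 2*(n:ℝ) := by exact_mod_cast this
        linarith
      by_contra hcon
      push_neg at hcon
      have := hh n
      rw [hgn] at this
      nlinarith
    -- wpD B B = 0
    have hself : ∑ j ∈ Finset.range n, B j * g j = 0 := by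
      have h1 := wp3_antisymm B B n hBz hBz
      have h2 : wpD B B = 0 := by linarith
      have h3 := wp3_wpD_eq B B n hBz hBz
      rw [h2] at h3
      simp only [hg]
      rw [← hT] at h3
      linarith [h3]
    -- mean constraint
    have hEm : ∑ j ∈ Finset.range n, (2*(j:ℝ) - k) * B j ≤ 0 :=
      wp3_mca_le M k hM B n hBz (by rw [← hT]; exact hTpos) hBC
    have hsum_split : ∑ j ∈ Finset.range n, B j * g j
        = (∑ j ∈ Finset.range n, B j * (g j - lam * (2*(j:ℝ) - k)))
          + lam * (∑ j ∈ Finset.range n, (2*(j:ℝ) - k) * B j) := by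
      rw [Finset.mul_sum, ← Finset.sum_add_distrib]
      exact Finset.sum_congr rfl fun j _ => by ring
    have hpart1 : ∑ j ∈ Finset.range n, B j * (g j - lam * (2*(j:ℝ) - k)) ≤ 0 :=
      Finset.sum_nonpos fun j _ => by nlinarith [hBpos j, hh j]
    have e1 : (∑ j ∈ Finset.range n, B j * (g j - lam * (2*(j:ℝ) - k)))
        + lam * (∑ j ∈ Finset.range n, (2*(j:ℝ) - k) * B j) = 0 := by
      rw [← hsum_split]; exact hself
    have e3 : lam * (∑ j ∈ Finset.range n, (2*(j:ℝ) - k) * B j) ≤ 0 := by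
      nlinarith
    have e2 : 0 ≤ lam * (∑ j ∈ Finset.range n, (2*(j:ℝ) - k) * B j) := by linarith
    have hEm0 : ∑ j ∈ Finset.range n, (2*(j:ℝ) - k) * B j = 0 := by
      rcases mul_eq_zero.1 (le_antisymm e3 e2) with h | h
      · exact absurd h (ne_of_gt hlampos)
      · exact h
    have hP10 : ∑ j ∈ Finset.range n, B j * (g j - lam * (2*(j:ℝ) - k)) = 0 := by
      rw [hEm0, mul_zero, add_zero] at e1
      exact e1
    have hzero := (Finset.sum_eq_zero_iff_of_nonpos
      (fun j _ => by nlinarith [hBpos j, hh j] :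
        ∀ j ∈ Finset.range n, B j * (g j - lam * (2*(j:ℝ) - k)) ≤ 0)).1 hP10
    have hsupzero : ∀ j, B j ≠ 0 → g j = lam * (2*(j:ℝ) - k) := by
      intro j hj
      have hjn : j < n := by
        by_contra hc
        exact hj (hBz j (by omega))
      have := hzero j (Finset.mem_range.2 hjn)
      rcases mul_eq_zero.1 this with h | h
      · exact absurd h hj
      · linarith
    -- maximal support point b
    have hex : ∃ j, B j ≠ 0 := by
      by_contra h
      push_neg at h
      have : T = 0 := by
        rw [hT]
        exact Finset.sum_eq_zero fun j _ => h j
      linarith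
    have hne2 : hBfin.toFinset.Nonempty := by
      obtain ⟨j, hj⟩ := hex
      exact ⟨j, hBfin.mem_toFinset.2 hj⟩
    set b := hBfin.toFinset.max' hne2 with hb
    have hBb : B b ≠ 0 := hBfin.mem_toFinset.1 (hBfin.toFinset.max'_mem hne2)
    have hbmax : ∀ j, b < j → B j = 0 := by
      intro j hj
      by_contra hc
      have := hBfin.toFinset.le_max' j (hBfin.mem_toFinset.2 hc)
      omega
    have hbn : b < n := by
      by_contra hc
      exact hBb (hBz b (by omega))
    clear_value b
    have hTb1 : ∑ i ∈ Finset.range (b+1), B i = T := by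
      rw [hT]
      apply Finset.sum_subset (Finset.range_subset_range.2 (by omega))
      intro x hx hnx
      simp only [Finset.mem_range] at hx hnx
      exact hbmax x (by omega)
    have hBbval : B b = T - lam * (2*(b:ℝ) - k) := by
      have hgbv : g b = T - B b := by
        have h2 : ∑ i ∈ Finset.range b, B i = T - B b := by
          have h3 := hTb1
          rw [Finset.sum_range_succ] at h3
          linarith
        simp only [hg]
        rw [h2, hTb1]
        ring
      have := hsupzero b hBb
      rw [hgbv] at this
      linarith
    have hBbpos : 0 < B b := lt_of_le_of_ne (hBpos b) (Ne.symm hBb)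
    -- mean over any prefix containing the support
    have hmean_pref : ∀ P : ℕ, b < P → P ≤ n →
        ∑ j ∈ Finset.range P, (2*(j:ℝ) - k) * B j = 0 := by
      intro P h1 h2
      rw [← hEm0]
      apply Finset.sum_subset (Finset.range_subset_range.2 h2)
      intro x hx hnx
      simp only [Finset.mem_range] at hx hnx
      rw [hbmax x (by omega), mul_zero]
    have hTpref : ∀ P : ℕ, b < P → P ≤ n → ∑ i ∈ Finset.range P, B i = T := by
      intro P h1 h2
      rw [hT]
      apply Finset.sum_subset (Finset.range_subset_range.2 h2)
      intro x hx hnx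
      simp only [Finset.mem_range] at hx hnx
      exact hbmax x (by omega)
    -- b ≤ k
    have hbk : b ≤ k := by
      by_contra hc
      push_neg at hc  -- k < b
      have hid := wp3_sum_h B k lam T b (hTpref (b+1) (by omega) (by omega))
        (hmean_pref (b+1) (by omega) (by omega))
      have hsle : ∑ j ∈ Finset.range (b+1),
          ((∑ i ∈ Finset.range j, B i) + (∑ i ∈ Finset.range (j+1), B i)
            - T - lam * (2*(j:ℝ) - k)) ≤ 0 :=
        Finset.sum_nonpos fun j _ => by
          have := hh j
          simp only [hg] at this
          linarith
      rw [hid] at hsle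
      have hbk1 : ((k:ℝ)) + 1 ≤ (b:ℝ) := by
        have : k + 1 ≤ b := by omega
        exact_mod_cast this
      have c1 : T - lam * ((b:ℝ)+1) ≤ 0 := by
        by_contra hcc
        push_neg at hcc
        have : 0 < ((b:ℝ) - k) * (T - lam*((b:ℝ)+1)) := mul_pos (by linarith) hcc
        linarith
      have c2 : lam * ((b:ℝ)+1) ≤ lam * (2*(b:ℝ) - k) := by
        apply mul_le_mul_of_nonneg_left _ hlam0
        linarith
      linarith [hBbpos, hBbval]
    -- h vanishes on [0, k]
    have hidk := wp3_sum_h B k lam T k (hTpref (k+1) (by omega) (by omega))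
      (hmean_pref (k+1) (by omega) (by omega))
    have hidk0 : ∑ j ∈ Finset.range (k+1),
        ((∑ i ∈ Finset.range j, B i) + (∑ i ∈ Finset.range (j+1), B i)
          - T - lam * (2*(j:ℝ) - k)) = 0 := by
      rw [hidk]
      ring
    have hzk := (Finset.sum_eq_zero_iff_of_nonpos
      (fun j _ => by
        have := hh j
        simp only [hg] at this
        linarith : ∀ j ∈ Finset.range (k+1),
          (∑ i ∈ Finset.range j, B i) + (∑ i ∈ Finset.range (j+1), B i)
            - T - lam * (2*(j:ℝ) - k) ≤ 0)).1 hidk0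
    have hgeq : ∀ j, j ≤ k → g j = lam * (2*(j:ℝ) - k) := by
      intro j hj
      have := hzk j (Finset.mem_range.2 (by omega))
      simp only [hg]
      linarith
    -- recurrence B j + B (j+1) = 2 lam
    have hrec : ∀ j, j + 1 ≤ k → B j + B (j+1) = 2 * lam := by
      intro j hj
      have e1 := hgeq j (by omega)
      have e2 := hgeq (j+1) hj
      simp only [hg] at e1 e2
      rw [show j+1+1 = j+2 from rfl] at e2
      have s1 : ∑ i ∈ Finset.range (j+2), B i
          = ∑ i ∈ Finset.range (j+1), B i + B (j+1) := by
        rw [show j+2 = (j+1)+1 from rfl, Finset.sum_range_succ]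
      have s2 : ∑ i ∈ Finset.range (j+1), B i
          = ∑ i ∈ Finset.range j, B i + B j := Finset.sum_range_succ _ _
      rw [s1, s2] at e2
      rw [s2] at e1
      push_cast at e1 e2 ⊢
      linarith
    set ee := B 0 - lam with hee
    have hBform : ∀ j, j ≤ k → B j = lam + (-1:ℝ)^j * ee := by
      intro j
      induction j with
      | zero => intro _; simp only [pow_zero, one_mul, hee]; ring
      | succ j ih =>
        intro hj
        have h1 := ih (by omega)
        have h2 := hrec j hj
        have : B (j+1) = 2*lam - B j := by linarith
        rw [this, h1, pow_succ]
        ring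
    -- tight mean forces ee = 0
    have hee0 : ee = 0 := by
      have hmk := hmean_pref (k+1) (by omega) (by omega)
      have hsub : ∑ j ∈ Finset.range (k+1), (2*(j:ℝ) - k) * B j
          = ∑ j ∈ Finset.range (k+1), (2*(j:ℝ) - k) * (lam + (-1:ℝ)^j * ee) :=
        Finset.sum_congr rfl fun j hj => by
          rw [hBform j (by have := Finset.mem_range.1 hj; omega)]
      have hsplit2 : ∑ j ∈ Finset.range (k+1), (2*(j:ℝ) - k) * (lam + (-1:ℝ)^j * ee)
          = lam * (∑ j ∈ Finset.range (k+1), (2*(j:ℝ) - k))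
            + ee * (∑ j ∈ Finset.range (k+1), (-1:ℝ)^j * (2*(j:ℝ) - k)) := by
        rw [Finset.mul_sum, Finset.mul_sum, ← Finset.sum_add_distrib]
        exact Finset.sum_congr rfl fun j _ => by ring
      have hlin := wp3_sum_lin k (k+1)
      have hk1 : k+1 = 2*(m+1) := by omega
      have halt : ∑ j ∈ Finset.range (k+1), (-1:ℝ)^j * (2*(j:ℝ) - k)
          = -2*((m:ℝ)+1) := by
        rw [hk1]
        have := wp3_sum_alt k (m+1)
        push_cast at this ⊢
        exact this
      have hz1 : ((((k:ℕ)+1:ℕ)):ℝ) - 1 - k = 0 := by push_cast; ring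
      rw [hsub, hsplit2, hlin, hz1, halt, mul_zero, mul_zero, zero_add] at hmk
      have hmpos : (0:ℝ) < (m:ℝ) + 1 := by positivity
      nlinarith [hmk]
    refine ⟨lam, hlampos, fun j hj => ?_, fun j hj => hbmax j (by omega)⟩
    rw [hBform j hj, hee0]
    ring
  · -- uniform ⇒ unbeatable
    rintro ⟨c, hc, hle, hgt⟩ B' hB' hC'
    obtain ⟨hB'pos, hB'fin, hB'T⟩ := hB'
    obtain ⟨u, hu⟩ := hB'fin.bddAbove
    set n := max (k+2) (u+1) with hn
    have hnk : k + 2 ≤ n := le_max_left _ _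
    have hBz : ∀ j, n ≤ j → B j = 0 := fun j hj => hgt j (by omega)
    have hB'z : ∀ j, n ≤ j → B' j = 0 := by
      intro j hj
      by_contra hcon
      have := hu (Function.mem_support.2 hcon)
      omega
    rw [wp3_antisymm B B' n hBz hB'z, wp3_wpD_eq B' B n hB'z hBz]
    rw [neg_nonneg]
    -- partial sums of B
    have hs : ∀ j : ℕ, ∑ i ∈ Finset.range j, B i = c * (min j (k+1) : ℕ) := by
      intro j
      induction j with
      | zero => simp
      | succ j ih =>
        rw [Finset.sum_range_succ, ih]
        rcases le_or_gt (j+1) (k+1) with hj | hj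
        · have e1 : min j (k+1) = j := by omega
          have e2 : min (j+1) (k+1) = j+1 := by omega
          rw [e1, e2, hle j (by omega)]
          push_cast
          ring
        · have e1 : min j (k+1) = k+1 := by omega
          have e2 : min (j+1) (k+1) = k+1 := by omega
          rw [e1, e2, hgt j (by omega)]
          ring
    have hTb : ∑ i ∈ Finset.range n, B i = c * ((k:ℝ)+1) := by
      rw [hs n]
      have : min n (k+1) = k+1 := by omega
      rw [this]
      push_cast
      ring
    have hE : ∑ j ∈ Finset.range n, (2*(j:ℝ) - k) * B' j ≤ 0 := by
      apply wp3_mca_le M k hM B' n hB'z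
      · rw [← wp3_finsum_eq_range B' n hB'z]; exact hB'T
      · exact hC'
    have hstep : ∑ j ∈ Finset.range n, B' j *
        ((∑ i ∈ Finset.range j, B i) + (∑ i ∈ Finset.range (j+1), B i)
          - ∑ i ∈ Finset.range n, B i)
        ≤ ∑ j ∈ Finset.range n, c * ((2*(j:ℝ) - k) * B' j) := by
      apply Finset.sum_le_sum
      intro j _
      have hgB : (∑ i ∈ Finset.range j, B i) + (∑ i ∈ Finset.range (j+1), B i)
          - ∑ i ∈ Finset.range n, B i ≤ c * (2*(j:ℝ) - k) := by
        rw [hs j, hs (j+1), hTb]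
        rcases le_or_gt (j+1) (k+1) with hj | hj
        · have e1 : min j (k+1) = j := by omega
          have e2 : min (j+1) (k+1) = j+1 := by omega
          rw [e1, e2]
          push_cast
          apply le_of_eq
          ring
        · have e1 : min j (k+1) = k+1 := by omega
          have e2 : min (j+1) (k+1) = k+1 := by omega
          rw [e1, e2]
          have hj' : (k:ℝ) + 1 ≤ 2*(j:ℝ) - k := by
            have : k + 1 ≤ j := by omega
            have : ((k:ℝ)) + 1 ≤ (j:ℝ) := by exact_mod_cast this
            linarith
          push_cast
          nlinarith
      calc B' j * ((∑ i ∈ Finset.range j, B i) + (∑ i ∈ Finset.range (j+1), B i)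
          - ∑ i ∈ Finset.range n, B i) ≤ B' j * (c * (2*(j:ℝ) - k)) :=
            mul_le_mul_of_nonneg_left hgB (hB'pos j)
        _ = c * ((2*(j:ℝ) - k) * B' j) := by ring
    have hfin : ∑ j ∈ Finset.range n, c * ((2*(j:ℝ) - k) * B' j) ≤ 0 := by
      rw [← Finset.mul_sum]
      nlinarith
    linarith
end

section
/- Fix a positive integer M and an even positive integer k, and let the constraint value be C = k/(2M). A discrete strategy B with mca(B) ≤ C satisfies wp(B; B') ≥ 0 for every discrete strategy B' with mca(B') ≤ C if and only if mca(B) = C, B(j) = B(0) for every even j with 0 ≤ j ≤ k, B(j) = B(1) for every odd j with 0 ≤ j ≤ k, and B(j) = 0 for all j > k. -/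
open Set

open Finset

/-- Auxiliary: `gG N B i = Σ_{j>i, j<N} B j − Σ_{j<i, j<N} B j`. -/
noncomputable def gG (N : ℕ) (B : ℕ → ℝ) (i : ℕ) : ℝ :=
  (∑ j ∈ (range N).filter (fun x => i < x), B j) -
  ∑ j ∈ (range N).filter (fun x => x < i), B j

lemma finsum_range {f : ℕ → ℝ} {N : ℕ} (h : ∀ i, N ≤ i → f i = 0) :
    ∑ᶠ i, f i = ∑ i ∈ range N, f i := by
  apply finsum_eq_sum_of_support_subset
  intro x hx
  simp only [Function.mem_support] at hx
  simp only [coe_range, Set.mem_Iio]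
  by_contra hc
  exact hx (h x (le_of_not_gt hc))

lemma finsum_Iio {B : ℕ → ℝ} {N j : ℕ} (h : ∀ i, N ≤ i → B i = 0) :
    ∑ᶠ i ∈ Set.Iio j, B i = ∑ i ∈ (range N).filter (fun x => x < j), B i := by
  apply finsum_mem_eq_sum_of_inter_support_eq
  ext x
  simp only [Set.mem_inter_iff, Set.mem_Iio, Function.mem_support, coe_filter, coe_range,
    Set.mem_setOf_eq, Finset.mem_range, Finset.mem_coe, Finset.mem_filter]
  constructor
  · rintro ⟨hx, hs⟩
    exact ⟨⟨by by_contra hc; exact hs (h x (le_of_not_gt hc)), hx⟩, hs⟩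
  · rintro ⟨⟨_, hx⟩, hs⟩; exact ⟨hx, hs⟩

lemma finsum_Ioi {B : ℕ → ℝ} {N j : ℕ} (h : ∀ i, N ≤ i → B i = 0) :
    ∑ᶠ i ∈ Set.Ioi j, B i = ∑ i ∈ (range N).filter (fun x => j < x), B i := by
  apply finsum_mem_eq_sum_of_inter_support_eq
  ext x
  simp only [Set.mem_inter_iff, Set.mem_Ioi, Function.mem_support, coe_filter, coe_range,
    Set.mem_setOf_eq, Finset.mem_range, Finset.mem_coe, Finset.mem_filter]
  constructor
  · rintro ⟨hx, hs⟩
    exact ⟨⟨by by_contra hc; exact hs (h x (le_of_not_gt hc)), hx⟩, hs⟩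
  · rintro ⟨⟨_, hx⟩, hs⟩; exact ⟨hx, hs⟩

lemma wpD_eq_sum (A B : ℕ → ℝ) (N : ℕ) (hA : ∀ i, N ≤ i → A i = 0)
    (hB : ∀ i, N ≤ i → B i = 0) :
    wpD A B = ∑ i ∈ range N, B i * gG N A i := by
  have step1 : wpD A B = ∑ j ∈ range N, A j *
      ((∑ i ∈ (range N).filter (fun x => x < j), B i) -
        ∑ i ∈ (range N).filter (fun x => j < x), B i) := by
    unfold wpD
    rw [finsum_range (f := fun j => A j * ((∑ᶠ i ∈ Set.Iio j, B i) - ∑ᶠ i ∈ Set.Ioi j, B i))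
      (fun i hi => by simp only [hA i hi]; ring)]
    refine Finset.sum_congr rfl fun j _ => by
      rw [finsum_Iio hB, finsum_Ioi hB]
  rw [step1]
  have expand : ∀ (C D : ℕ → ℝ) (j : ℕ),
      C j * ((∑ i ∈ (range N).filter (fun x => x < j), D i) -
        ∑ i ∈ (range N).filter (fun x => j < x), D i)
      = ∑ i ∈ range N, (C j * (((if i < j then D i else 0)) - (if j < i then D i else 0))) := by
    intro C D j
    rw [Finset.sum_filter, Finset.sum_filter, ← Finset.sum_sub_distrib, Finset.mul_sum]
  calc ∑ j ∈ range N, A j * ((∑ i ∈ (range N).filter (fun x => x < j), B i) -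
        ∑ i ∈ (range N).filter (fun x => j < x), B i)
      = ∑ j ∈ range N, ∑ i ∈ range N,
          (A j * ((if i < j then B i else 0) - (if j < i then B i else 0))) := by
        refine Finset.sum_congr rfl fun j _ => ?_
        rw [expand]
    _ = ∑ i ∈ range N, ∑ j ∈ range N,
          (A j * ((if i < j then B i else 0) - (if j < i then B i else 0))) :=
        Finset.sum_comm
    _ = ∑ i ∈ range N, B i * gG N A i := by
        refine Finset.sum_congr rfl fun i _ => ?_
        unfold gG
        rw [Finset.sum_filter, Finset.sum_filter, ← Finset.sum_sub_distrib, Finset.mul_sum]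
        refine Finset.sum_congr rfl fun j _ => ?_
        split_ifs <;> ring

lemma gG_succ (N : ℕ) (B : ℕ → ℝ) (i : ℕ) (hi : i + 1 < N) :
    gG N B i - gG N B (i + 1) = B i + B (i + 1) := by
  have h1 : (range N).filter (fun x => i < x)
      = insert (i+1) ((range N).filter (fun x => i + 1 < x)) := by
    ext x
    simp only [Finset.mem_filter, Finset.mem_range, Finset.mem_insert]
    omega
  have h2 : (range N).filter (fun x => x < i + 1)
      = insert i ((range N).filter (fun x => x < i)) := by
    ext x
    simp only [Finset.mem_filter, Finset.mem_range, Finset.mem_insert]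
    omega
  have e1 : ∑ j ∈ (range N).filter (fun x => i < x), B j
      = B (i+1) + ∑ j ∈ (range N).filter (fun x => i + 1 < x), B j := by
    rw [h1, Finset.sum_insert (by simp)]
  have e2 : ∑ j ∈ (range N).filter (fun x => x < i + 1), B j
      = B i + ∑ j ∈ (range N).filter (fun x => x < i), B j := by
    rw [h2, Finset.sum_insert (by simp)]
  unfold gG
  rw [e1, e2]
  ring

/-- the two-point test function -/
noncomputable def pr (c1 c2 : ℝ) (j i : ℕ) : ℕ → ℝ :=
  fun x => c1 * (if x = j then 1 else 0) + c2 * (if x = i then 1 else 0)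

lemma pr_apply_zero (c1 c2 : ℝ) (j i x : ℕ) (hx1 : x ≠ j) (hx2 : x ≠ i) :
    pr c1 c2 j i x = 0 := by simp [pr, hx1, hx2]

lemma finsum_pr_weight (w : ℕ → ℝ) (c1 c2 : ℝ) (j i : ℕ) :
    ∑ᶠ x, w x * pr c1 c2 j i x = w j * c1 + w i * c2 := by
  have hN : ∀ x, max j i + 1 ≤ x → w x * pr c1 c2 j i x = 0 := by
    intro x hx
    rw [pr_apply_zero c1 c2 j i x (by omega) (by omega), mul_zero]
  rw [finsum_range hN]
  have hj : j ∈ range (max j i + 1) := by simp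
  have hi : i ∈ range (max j i + 1) := by simp
  simp only [pr, mul_add, ← mul_assoc, mul_ite, mul_one, mul_zero]
  rw [Finset.sum_add_distrib, Finset.sum_ite_eq' (range (max j i + 1)) j (fun x => w x * c1),
    Finset.sum_ite_eq' (range (max j i + 1)) i (fun x => w x * c2)]
  simp [hj, hi]

lemma sum_pr_weight (w : ℕ → ℝ) (c1 c2 : ℝ) {j i N : ℕ} (hj : j < N) (hi : i < N) :
    ∑ x ∈ range N, pr c1 c2 j i x * w x = c1 * w j + c2 * w i := by
  have hj' : j ∈ range N := mem_range.mpr hj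
  have hi' : i ∈ range N := mem_range.mpr hi
  simp only [pr, add_mul, mul_assoc, ite_mul, one_mul, zero_mul, mul_ite, mul_zero]
  rw [Finset.sum_add_distrib, Finset.sum_ite_eq' (range N) j (fun x => c1 * w x),
    Finset.sum_ite_eq' (range N) i (fun x => c2 * w x)]
  simp [hj', hi']

lemma pr_tests (M h : ℕ) (hM : 0 < M) (c1 c2 : ℝ) (j i : ℕ) (h1 : 0 ≤ c1) (h2 : 0 ≤ c2)
    (hpos : 0 < c1 + c2) (hCle : (j : ℝ) * c1 + (i : ℝ) * c2 ≤ (h : ℝ) * (c1 + c2)) :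
    IsDStrategy (pr c1 c2 j i) ∧ mcaD M (pr c1 c2 j i) ≤ (h : ℝ) / M := by
  have hMR : (0:ℝ) < M := by exact_mod_cast hM
  have htot : ∑ᶠ x, pr c1 c2 j i x = c1 + c2 := by
    have := finsum_pr_weight (fun _ => (1:ℝ)) c1 c2 j i
    simpa using this
  have hnum : ∑ᶠ x : ℕ, ((x : ℝ) / M) * pr c1 c2 j i x = (j : ℝ) / M * c1 + (i : ℝ) / M * c2 :=
    finsum_pr_weight (fun x => (x : ℝ) / M) c1 c2 j i
  refine ⟨⟨?_, ?_, ?_⟩, ?_⟩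
  · intro x
    unfold pr
    have : (0:ℝ) ≤ if x = j then (1:ℝ) else 0 := by split_ifs <;> norm_num
    have h2' : (0:ℝ) ≤ if x = i then (1:ℝ) else 0 := by split_ifs <;> norm_num
    exact add_nonneg (mul_nonneg h1 this) (mul_nonneg h2 h2')
  · apply Set.Finite.subset ((Set.finite_singleton i).insert j)
    intro x hx
    simp only [Function.mem_support] at hx
    by_contra hc
    simp only [Set.mem_insert_iff, Set.mem_singleton_iff, not_or] at hc
    exact hx (pr_apply_zero c1 c2 j i x hc.1 hc.2)
  · rw [htot]; exact hpos
  · unfold mcaD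
    rw [htot, hnum, div_le_div_iff₀ hpos hMR]
    have e1 : ((j : ℝ) / M * c1 + (i : ℝ) / M * c2) * M = (j : ℝ) * c1 + (i : ℝ) * c2 := by
      field_simp
    rw [e1]
    calc (j : ℝ) * c1 + (i : ℝ) * c2 ≤ (h : ℝ) * (c1 + c2) := hCle
      _ = (h : ℝ) / M * (c1 + c2) * M := by field_simp
      _ = (h : ℝ) / M * M * (c1 + c2) := by ring
      _ = (h : ℝ) * (c1 + c2) := by field_simp
  
lemma adm_core {M N : ℕ} (hM : 0 < M) {B : ℕ → ℝ} (hsupp : ∀ i, N ≤ i → B i = 0) (h : ℕ) :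
    (mcaD M B = (∑ i ∈ range N, ((i : ℝ) / M) * B i) / (∑ i ∈ range N, B i)) ∧
    (∑ i ∈ range N, ((i : ℝ) - h) * B i
      = M * (∑ i ∈ range N, ((i : ℝ) / M) * B i) - h * ∑ i ∈ range N, B i) := by
  have hM0 : (M:ℝ) ≠ 0 := by positivity
  constructor
  · unfold mcaD
    rw [finsum_range (f := fun j => ((j:ℝ)/M) * B j) (fun i hi => by simp only [hsupp i hi, mul_zero]),
      finsum_range hsupp]
  · rw [Finset.mul_sum, Finset.mul_sum, ← Finset.sum_sub_distrib]
    refine Finset.sum_congr rfl fun i _ => ?_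
    field_simp

lemma adm {M h N : ℕ} (hM : 0 < M) {B : ℕ → ℝ} (hsupp : ∀ i, N ≤ i → B i = 0)
    (hT : 0 < ∑ i ∈ range N, B i) (hmca : mcaD M B ≤ (h : ℝ) / M) :
    ∑ i ∈ range N, ((i : ℝ) - h) * B i ≤ 0 := by
  have hMR : (0:ℝ) < M := by exact_mod_cast hM
  obtain ⟨e1, e2⟩ := adm_core hM hsupp h
  rw [e1, div_le_div_iff₀ hT hMR] at hmca
  rw [e2]
  nlinarith [hmca]

lemma adm_eq {M h N : ℕ} (hM : 0 < M) {B : ℕ → ℝ} (hsupp : ∀ i, N ≤ i → B i = 0)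
    (hT : 0 < ∑ i ∈ range N, B i) (hz : ∑ i ∈ range N, ((i : ℝ) - h) * B i = 0) :
    mcaD M B = (h : ℝ) / M := by
  have hMR : (0:ℝ) < M := by exact_mod_cast hM
  obtain ⟨e1, e2⟩ := adm_core hM hsupp h
  rw [e1, div_eq_div_iff (ne_of_gt hT) (ne_of_gt hMR)]
  nlinarith [e2, hz]

theorem stmt4 (M k : ℕ) (hM : 0 < M) (hk : 0 < k) (heven : Even k)
    (C : ℝ) (hC : C = (k : ℝ) / (2 * M))
    (B : ℕ → ℝ) (hB : IsDStrategy B) (hBC : mcaD M B ≤ C) :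
    (∀ B' : ℕ → ℝ, IsDStrategy B' → mcaD M B' ≤ C → 0 ≤ wpD B B') ↔
      (mcaD M B = C ∧ (∀ j ≤ k, Even j → B j = B 0) ∧
        (∀ j ≤ k, Odd j → B j = B 1) ∧ (∀ j > k, B j = 0)) := by
  obtain ⟨h, hk2⟩ := heven
  have hh : 0 < h := by omega
  have hkr : (k : ℝ) = (h : ℝ) + (h : ℝ) := by rw [hk2]; push_cast; ring
  have hMR : (0:ℝ) < M := by exact_mod_cast hM
  have hCh : C = (h : ℝ) / M := by
    rw [hC, hkr]
    field_simp
    ring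
  obtain ⟨hBnn, hBfin, hBpos⟩ := hB
  -- choose a cutoff N beyond the support of B and beyond k+1
  obtain ⟨N0, hN0⟩ : ∃ N0 : ℕ, ∀ x ∈ Function.support B, x < N0 := by
    obtain ⟨n, hn⟩ := hBfin.bddAbove
    exact ⟨n + 1, fun x hx => Nat.lt_succ_of_le (hn hx)⟩
  set N := max N0 (k + 2) with hNdef
  have hNk : k + 2 ≤ N := le_max_right _ _
  have hNn0 : N0 ≤ N := le_max_left _ _
  have hsupp : ∀ i, N ≤ i → B i = 0 := by
    intro i hi
    by_contra hc
    have := hN0 i hc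
    omega
  have hT : 0 < ∑ i ∈ range N, B i := by
    rw [← finsum_range hsupp]; exact hBpos
  -- admissibility of B itself
  have hXB : ∑ i ∈ range N, ((i : ℝ) - h) * B i ≤ 0 :=
    adm hM hsupp hT (hCh ▸ hBC)
  constructor
  · -- equilibrium implies structure
    intro heqm
    -- F1 : single-point tests
    have hgnn : ∀ j : ℕ, j ≤ h → 0 ≤ gG N B j := by
      intro j hj
      have hCle : (j : ℝ) * 1 + (j : ℝ) * 0 ≤ (h : ℝ) * (1 + 0) := by
        have : (j : ℝ) ≤ h := by exact_mod_cast hj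
        linarith
      obtain ⟨hstrat, hmca⟩ := pr_tests M h hM 1 0 j j (by norm_num) (by norm_num)
        (by norm_num) hCle
      have hwp := heqm _ hstrat (by rw [hCh]; exact hmca)
      have hprsupp : ∀ x, N ≤ x → pr 1 0 j j x = 0 := by
        intro x hx
        exact pr_apply_zero 1 0 j j x (by omega) (by omega)
      rw [wpD_eq_sum B _ N hsupp hprsupp,
        sum_pr_weight (gG N B) 1 0 (by omega) (by omega)] at hwp
      linarith
    -- F2 : two-point tests
    have hpairs : ∀ j i : ℕ, j < h → h < i → i < N →
        0 ≤ ((i : ℝ) - h) * gG N B j + ((h : ℝ) - j) * gG N B i := by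
      intro j i hj hi hiN
      have hjR : (j : ℝ) < h := by exact_mod_cast hj
      have hiR : (h : ℝ) < i := by exact_mod_cast hi
      have hCle : (j : ℝ) * ((i : ℝ) - h) + (i : ℝ) * ((h : ℝ) - j)
          ≤ (h : ℝ) * (((i : ℝ) - h) + ((h : ℝ) - j)) := le_of_eq (by ring)
      obtain ⟨hstrat, hmca⟩ := pr_tests M h hM ((i : ℝ) - h) ((h : ℝ) - j) j i
        (by linarith) (by linarith) (by linarith) hCle
      have hwp := heqm _ hstrat (by rw [hCh]; exact hmca)
      have hprsupp : ∀ x, N ≤ x → pr ((i : ℝ) - h) ((h : ℝ) - j) j i x = 0 := by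
        intro x hx
        exact pr_apply_zero _ _ j i x (by omega) (by omega)
      rw [wpD_eq_sum B _ N hsupp hprsupp,
        sum_pr_weight (gG N B) _ _ (by omega) hiN] at hwp
      linarith
    -- sum identity
    have hgid : ∑ j ∈ range (k+1), gG N B j
        = ∑ i ∈ range N, (((min i (k+1) : ℕ) : ℝ) - ((k - i : ℕ) : ℝ)) * B i := by
      have hg_row : ∀ j, gG N B j
          = ∑ i ∈ range N, ((if j < i then (1:ℝ) else 0) - if i < j then 1 else 0) * B i := by
        intro j
        unfold gG
        rw [Finset.sum_filter, Finset.sum_filter, ← Finset.sum_sub_distrib]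
        refine Finset.sum_congr rfl fun i _ => by split_ifs <;> ring
      calc ∑ j ∈ range (k+1), gG N B j
          = ∑ j ∈ range (k+1), ∑ i ∈ range N,
              ((if j < i then (1:ℝ) else 0) - if i < j then 1 else 0) * B i :=
            Finset.sum_congr rfl fun j _ => hg_row j
        _ = ∑ i ∈ range N, ∑ j ∈ range (k+1),
              ((if j < i then (1:ℝ) else 0) - if i < j then 1 else 0) * B i :=
            Finset.sum_comm
        _ = ∑ i ∈ range N, (((min i (k+1) : ℕ) : ℝ) - ((k - i : ℕ) : ℝ)) * B i := by
            refine Finset.sum_congr rfl fun i _ => ?_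
            rw [← Finset.sum_mul]
            congr 1
            rw [Finset.sum_sub_distrib]
            have c1 : ∑ j ∈ range (k+1), (if j < i then (1:ℝ) else 0)
                = ((min i (k+1) : ℕ) : ℝ) := by
              rw [Finset.sum_boole]
              have : (range (k+1)).filter (fun j => j < i) = range (min i (k+1)) := by
                ext x
                simp only [Finset.mem_filter, Finset.mem_range]
                omega
              rw [this, card_range]
            have c2 : ∑ j ∈ range (k+1), (if i < j then (1:ℝ) else 0)
                = ((k - i : ℕ) : ℝ) := by
              rw [Finset.sum_boole]
              have : (range (k+1)).filter (fun j => i < j) = Finset.Ico (i+1) (k+1) := by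
                ext x
                simp only [Finset.mem_filter, Finset.mem_range, Finset.mem_Ico]
                omega
              rw [this, Nat.card_Ico]
              congr 1
              omega
            rw [c1, c2]
    -- pair nonnegativity
    have hpairnn : ∀ j, j ≤ k → 0 ≤ gG N B j + gG N B (k - j) := by
      have main : ∀ j, j < h → 0 ≤ gG N B j + gG N B (k - j) := by
        intro j hj
        have hik : h < k - j := by omega
        have hiN : k - j < N := by omega
        have hp := hpairs j (k - j) hj hik hiN
        have hcast : ((k - j : ℕ) : ℝ) = (k : ℝ) - j := by
          rw [Nat.cast_sub (by omega)]
        rw [hcast] at hp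
        have hcoef : (k : ℝ) - j - h = (h : ℝ) - j := by rw [hkr]; ring
        rw [hcoef] at hp
        have hjh : (0:ℝ) < (h : ℝ) - j := by
          have : (j : ℝ) < h := by exact_mod_cast hj
          linarith
        nlinarith [hp, hjh]
      intro j hj
      rcases lt_trichotomy j h with hlt | heq | hgt
      · exact main j hlt
      · subst heq
        have : k - j = j := by omega
        rw [this]
        have := hgnn j (le_refl j)
        linarith
      · have hlt : k - j < h := by omega
        have := main (k - j) hlt
        have hkk : k - (k - j) = j := by omega
        rw [hkk] at this
        linarith
    -- reflection
    have hreflect : ∑ j ∈ range (k+1), gG N B (k - j) = ∑ j ∈ range (k+1), gG N B j := by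
      have := Finset.sum_range_reflect (fun j => gG N B j) (k+1)
      calc ∑ j ∈ range (k+1), gG N B (k - j)
          = ∑ j ∈ range (k+1), gG N B (k + 1 - 1 - j) :=
            Finset.sum_congr rfl fun j hj => by congr 1
        _ = ∑ j ∈ range (k+1), gG N B j := this
    -- the three quantities
    set SG := ∑ j ∈ range (k+1), gG N B j with hSGdef
    set X := ∑ i ∈ range N, ((i : ℝ) - h) * B i with hXdef
    set Y := ∑ i ∈ (range N).filter (fun x => k < x), B i with hYdef
    have hYnn : 0 ≤ Y := Finset.sum_nonneg fun i _ => hBnn i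
    have hSGnn : 0 ≤ SG := by
      have h2 : SG + SG = ∑ j ∈ range (k+1), (gG N B j + gG N B (k - j)) := by
        rw [Finset.sum_add_distrib, hreflect]
      have h3 : 0 ≤ SG + SG := by
        rw [h2]
        exact Finset.sum_nonneg fun j hj => hpairnn j (by
          have := Finset.mem_range.mp hj; omega)
      linarith
    have hSGle : SG ≤ 2 * X - Y := by
      have hpoint : ∀ i ∈ range N, (((min i (k+1) : ℕ) : ℝ) - ((k - i : ℕ) : ℝ)) * B i
          ≤ (2 * ((i : ℝ) - h) - (if k < i then 1 else 0)) * B i := by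
        intro i _
        rcases le_or_gt i k with hik | hik
        · have hm : min i (k+1) = i := by omega
          have hcast : ((k - i : ℕ) : ℝ) = (k : ℝ) - i := by rw [Nat.cast_sub hik]
          rw [hm, hcast, if_neg (not_lt.mpr hik)]
          apply le_of_eq
          rw [hkr]
          ring
        · have hm : min i (k+1) = k + 1 := by omega
          have hki : k - i = 0 := by omega
          rw [hm, hki, if_pos hik]
          have hiR : (k : ℝ) + 1 ≤ i := by exact_mod_cast hik
          have hcoef : ((k + 1 : ℕ) : ℝ) - ((0:ℕ) : ℝ) ≤ 2 * ((i : ℝ) - h) - 1 := by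
            push_cast
            rw [hkr] at hiR ⊢
            linarith
          exact mul_le_mul_of_nonneg_right hcoef (hBnn i)
      have hsplit : ∑ i ∈ range N, (2 * ((i : ℝ) - h) - (if k < i then 1 else 0)) * B i
          = 2 * X - Y := by
        rw [hXdef, hYdef, Finset.mul_sum, Finset.sum_filter, ← Finset.sum_sub_distrib]
        refine Finset.sum_congr rfl fun i _ => by split_ifs <;> ring
      rw [hgid, ← hsplit]
      exact Finset.sum_le_sum hpoint
    have hX0 : X = 0 := by linarith
    have hY0 : Y = 0 := by linarith
    have hSG0 : SG = 0 := by linarith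
    -- B vanishes beyond k
    have hBzero : ∀ j, j > k → B j = 0 := by
      intro j hj
      rcases lt_or_ge j N with hjN | hjN
      · have := (Finset.sum_eq_zero_iff_of_nonneg (fun i _ => hBnn i)).mp hY0 j
          (Finset.mem_filter.mpr ⟨Finset.mem_range.mpr hjN, hj⟩)
        exact this
      · exact hsupp j hjN
    -- mca equality
    have hmcaeq : mcaD M B = C := by
      rw [hCh]
      exact adm_eq hM hsupp hT hX0
    -- each mirror pair vanishes
    have hpair0 : ∀ j, j ≤ k → gG N B j + gG N B (k - j) = 0 := by
      have hzz : ∑ j ∈ range (k+1), (gG N B j + gG N B (k - j)) = 0 := by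
        rw [Finset.sum_add_distrib, hreflect]
        rw [hSGdef] at hSG0
        linarith
      intro j hj
      exact (Finset.sum_eq_zero_iff_of_nonneg (fun i hi => hpairnn i (by
        have := Finset.mem_range.mp hi; omega))).mp hzz j
        (Finset.mem_range.mpr (by omega))
    -- linearity of gG on [0,k]
    set lam := gG N B (h - 1) with hlamdef
    have hcasth1 : ((h - 1 : ℕ) : ℝ) = (h : ℝ) - 1 := by
      rw [Nat.cast_sub (by omega)]
      norm_num
    have hmono : ∀ j j', j < h → j' < h →
        ((h : ℝ) - j') * gG N B j ≤ ((h : ℝ) - j) * gG N B j' := by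
      intro j j' hj hj'
      have hik : h < k - j := by omega
      have hiN : k - j < N := by omega
      have hp := hpairs j' (k - j) hj' hik hiN
      have hcast : ((k - j : ℕ) : ℝ) = (k : ℝ) - j := by rw [Nat.cast_sub (by omega)]
      rw [hcast] at hp
      have hcoef : (k : ℝ) - j - h = (h : ℝ) - j := by rw [hkr]; ring
      rw [hcoef] at hp
      have h0 := hpair0 j (by omega)
      have hneg : gG N B (k - j) = - gG N B j := by linarith
      rw [hneg] at hp
      linarith
    have hglin : ∀ j, j ≤ k → gG N B j = ((h : ℝ) - j) * lam := by
      have hlt : ∀ j, j < h → gG N B j = ((h : ℝ) - j) * lam := by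
        intro j hj
        have h1 := hmono j (h - 1) hj (by omega)
        have h2 := hmono (h - 1) j (by omega) hj
        rw [hcasth1] at h1 h2
        have e1 : (h : ℝ) - ((h : ℝ) - 1) = 1 := by ring
        rw [e1, one_mul] at h1 h2
        rw [hlamdef]
        linarith
      intro j hj
      rcases lt_trichotomy j h with hl | he | hg
      · exact hlt j hl
      · subst he
        have hkj : k - j = j := by omega
        have := hpair0 j hj
        rw [hkj] at this
        have : gG N B j = 0 := by linarith
        rw [this]
        ring
      · have hkj : k - j < h := by omega
        have h1 := hlt (k - j) hkj
        have h0 := hpair0 j hj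
        have hcast : ((k - j : ℕ) : ℝ) = (k : ℝ) - j := by rw [Nat.cast_sub (by omega)]
        rw [hcast] at h1
        have : (h : ℝ) - ((k:ℝ) - j) = -(((h : ℝ) - j)) := by rw [hkr]; ring
        rw [this] at h1
        linarith
    -- consecutive sums are constant
    have hstep : ∀ j, j + 1 ≤ k → B j + B (j + 1) = lam := by
      intro j hj
      have h1 := gG_succ N B j (by omega)
      have h2 := hglin j (by omega)
      have h3 := hglin (j+1) hj
      rw [h2, h3] at h1
      push_cast at h1
      linarith [h1]
    have hper : ∀ j, j + 2 ≤ k → B (j + 2) = B j := by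
      intro j hj
      have h1 := hstep j (by omega)
      have h2 := hstep (j+1) (by omega)
      have : j + 1 + 1 = j + 2 := by omega
      rw [this] at h2
      linarith
    have hevenc : ∀ j ≤ k, Even j → B j = B 0 := by
      have key : ∀ t, t + t ≤ k → B (t + t) = B 0 := by
        intro t
        induction t with
        | zero => intro _; rfl
        | succ n ih =>
          intro hle
          have he : n + 1 + (n + 1) = (n + n) + 2 := by omega
          rw [he, hper (n + n) (by omega)]
          exact ih (by omega)
      rintro j hj ⟨t, rfl⟩
      exact key t hj
    have hoddc : ∀ j ≤ k, Odd j → B j = B 1 := by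
      have key : ∀ t, t + t + 1 ≤ k → B (t + t + 1) = B 1 := by
        intro t
        induction t with
        | zero => intro _; rfl
        | succ n ih =>
          intro hle
          have he : n + 1 + (n + 1) + 1 = (n + n + 1) + 2 := by omega
          rw [he, hper (n + n + 1) (by omega)]
          exact ih (by omega)
      rintro j hj ⟨t, rfl⟩
      have : 2 * t + 1 = t + t + 1 := by omega
      rw [this] at hj ⊢
      exact key t hj
    exact ⟨hmcaeq, hevenc, hoddc, hBzero⟩
  · -- structure implies equilibrium
    rintro ⟨hmca, hev, hod, hz⟩ B' hB' hB'C
    obtain ⟨hB'nn, hB'fin, hB'pos⟩ := hB'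
    obtain ⟨N1, hN1⟩ : ∃ N1 : ℕ, ∀ x ∈ Function.support B', x < N1 := by
      obtain ⟨n, hn⟩ := hB'fin.bddAbove
      exact ⟨n + 1, fun x hx => Nat.lt_succ_of_le (hn hx)⟩
    set N' := max N N1 with hN'def
    have hNN' : N ≤ N' := le_max_left _ _
    have hsupp' : ∀ i, N' ≤ i → B' i = 0 := by
      intro i hi
      by_contra hc
      have := hN1 i hc
      have : N1 ≤ N' := le_max_right _ _
      omega
    have hsuppB : ∀ i, N' ≤ i → B i = 0 := fun i hi => hsupp i (by omega)
    have hT' : 0 < ∑ i ∈ range N', B' i := by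
      rw [← finsum_range hsupp']; exact hB'pos
    set a := B 0 with hadef
    set b := B 1 with hbdef
    have ha : 0 ≤ a := hBnn 0
    have hb : 0 ≤ b := hBnn 1
    have hstep : ∀ i, i + 1 ≤ k → B i + B (i + 1) = a + b := by
      intro i hi
      rcases Nat.even_or_odd i with he | ho
      · rw [hev i (by omega) he, hod (i+1) (by omega) (Even.add_one he)]
      · rw [hod i (by omega) ho, hev (i+1) (by omega) (Odd.add_one ho)]
        ring
    -- total mass
    have hTsum : ∑ i ∈ range N', B i = ((h : ℝ) + 1) * a + (h : ℝ) * b := by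
      have e1 : ∑ i ∈ range N', B i = ∑ i ∈ range (k+1), B i := by
        symm
        apply Finset.sum_subset (Finset.range_subset_range.mpr (by omega))
        intro x hx hnx
        exact hz x (by
          simp only [Finset.mem_range] at hx hnx
          omega)
      have aux : ∀ t, t ≤ h → ∑ i ∈ range (t + t + 1), B i = ((t : ℝ) + 1) * a + (t : ℝ) * b := by
        intro t
        induction t with
        | zero => intro _; simp [hadef]
        | succ n ih =>
          intro hle
          have he : n + 1 + (n + 1) + 1 = (n + n + 1) + 1 + 1 := by omega
          rw [he, Finset.sum_range_succ, Finset.sum_range_succ, ih (by omega)]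
          have hb1 : B (n + n + 1) = b := hod (n + n + 1) (by omega) ⟨n, by omega⟩
          have ha1 : B (n + n + 1 + 1) = a := hev (n + n + 1 + 1) (by omega) ⟨n + 1, by omega⟩
          rw [hb1, ha1]
          push_cast
          ring
      rw [e1, show k + 1 = h + h + 1 by omega]
      exact aux h (le_refl h)
    -- value of gG at 0
    have hg0 : gG N' B 0 = (h : ℝ) * (a + b) := by
      have e0 : (range N').filter (fun x => x < 0) = ∅ := by
        ext x; simp
      have efil : (range N').filter (fun x => 0 < x) = (range N').erase 0 := by
        ext x
        simp only [Finset.mem_filter, Finset.mem_range, Finset.mem_erase]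
        omega
      have e1 : ∑ j ∈ (range N').filter (fun x => 0 < x), B j
          = (∑ x ∈ range N', B x) - B 0 := by
        rw [efil]
        exact Finset.sum_erase_eq_sub (Finset.mem_range.mpr (by omega))
      unfold gG
      rw [e0]
      simp only [Finset.sum_empty, sub_zero]
      rw [e1, hTsum, ← hadef]
      ring
    -- gG is linear on [0, k]
    have hglin : ∀ i, i ≤ k → gG N' B i = ((h : ℝ) - i) * (a + b) := by
      intro i
      induction i with
      | zero =>
        intro _
        rw [hg0]
        norm_num
      | succ n ih =>
        intro hle
        have h1 := ih (by omega)
        have h2 := gG_succ N' B n (by omega)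
        have h3 := hstep n hle
        push_cast
        push_cast at h1 h2 h3
        linarith
    -- global lower bound
    have hgge : ∀ i, ((h : ℝ) - i) * (a + b) ≤ gG N' B i := by
      intro i
      rcases le_or_gt i k with hik | hik
      · rw [hglin i hik]
      · have hzero1 : ∑ j ∈ (range N').filter (fun x => i < x), B j = 0 :=
          Finset.sum_eq_zero fun x hx => hz x (by
            simp only [Finset.mem_filter, Finset.mem_range] at hx
            omega)
        have hzero2 : ∑ j ∈ (range N').filter (fun x => x < i), B j
            = ∑ j ∈ range N', B j := by
          apply Finset.sum_subset (Finset.filter_subset _ _)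
          intro x hx hnx
          simp only [Finset.mem_filter, Finset.mem_range] at hnx hx
          exact hz x (by omega)
        unfold gG
        rw [hzero1, hzero2, hTsum]
        have hiR : (k : ℝ) + 1 ≤ i := by exact_mod_cast hik
        rw [hkr] at hiR
        have hmul := mul_le_mul_of_nonneg_right
          (show (h:ℝ) + 1 ≤ (i:ℝ) - h by linarith) (add_nonneg ha hb)
        linarith
    -- conclude
    rw [wpD_eq_sum B B' N' hsuppB hsupp']
    have hterm : ∀ i ∈ range N', B' i * (((h : ℝ) - i) * (a + b)) ≤ B' i * gG N' B i :=
      fun i _ => mul_le_mul_of_nonneg_left (hgge i) (hB'nn i)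
    have hX' : ∑ i ∈ range N', ((i : ℝ) - h) * B' i ≤ 0 :=
      adm hM hsupp' hT' (by rw [← hCh]; exact hB'C)
    have hlow : ∑ i ∈ range N', B' i * (((h : ℝ) - i) * (a + b))
        = (a + b) * (- ∑ i ∈ range N', ((i : ℝ) - h) * B' i) := by
      rw [← Finset.sum_neg_distrib, Finset.mul_sum]
      refine Finset.sum_congr rfl fun i _ => by ring
    calc (0:ℝ) ≤ (a + b) * (- ∑ i ∈ range N', ((i : ℝ) - h) * B' i) :=
          mul_nonneg (by linarith) (by linarith)
      _ = ∑ i ∈ range N', B' i * (((h : ℝ) - i) * (a + b)) := hlow.symm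
      _ ≤ ∑ i ∈ range N', B' i * gG N' B i := Finset.sum_le_sum hterm
end

section
/- Fix a constraint value C > 0 and let n ≥ 2. If (f₁, …, fₙ) is a tuple of admissible bounded measurable strategies satisfying wp(fₖ; f_j) = 0 for all j, k ∈ {1, …, n} and wp(fₖ; g) ≥ 0 for every admissible bounded measurable strategy g and every k, then (f₁, …, fₙ) is an equilibrium point of the bounded measurable game. -/
open MeasureTheory Set

/-- sign kernel: `1` if `t ≤ x`, `-1` otherwise. -/
noncomputable def sgn2 (x t : ℝ) : ℝ := if t ≤ x then 1 else -1

lemma sgn2_abs_le (x t : ℝ) : |sgn2 x t| ≤ 1 := by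
  unfold sgn2; split <;> simp

lemma sgn2_anti {x t : ℝ} (h : t ≠ x) : sgn2 t x = - sgn2 x t := by
  unfold sgn2
  rcases lt_or_gt_of_ne h with h' | h'
  · rw [if_neg (not_le.mpr h'), if_pos h'.le]
  · rw [if_pos h'.le, if_neg (not_le.mpr h')]; norm_num

lemma measurable_sgn2 : Measurable (fun p : ℝ × ℝ => sgn2 p.1 p.2) := by
  unfold sgn2
  exact Measurable.ite (measurableSet_le measurable_snd measurable_fst)
    measurable_const measurable_const

lemma measurable_sgn2_right (x : ℝ) : Measurable (fun t => sgn2 x t) :=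
  measurable_sgn2.comp (measurable_const.prodMk measurable_id)

/-- A strategy is integrable. -/
lemma IsStrategy.integrable {f : ℝ → ℝ} (hf : IsStrategy f) : Integrable f := by
  obtain ⟨hm, ⟨Cb, hCb⟩, hpos, ⟨R, hR⟩, -⟩ := hf
  have hb : Integrable ((Icc (0:ℝ) R).indicator fun _ => Cb) := by
    rw [integrable_indicator_iff measurableSet_Icc]
    exact integrableOn_const measure_Icc_lt_top.ne
  refine Integrable.mono' hb hm.aestronglyMeasurable (Filter.Eventually.of_forall ?_)
  intro x
  by_cases hx : x ∈ Icc (0:ℝ) R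
  · rw [indicator_of_mem hx, Real.norm_eq_abs, abs_of_nonneg (hpos x)]
    exact hCb x
  · have h0 : f x = 0 := by
      by_contra h
      exact hx (hR h)
    rw [indicator_of_notMem hx, h0]
    simp

lemma integrable_mul_sgn2 {g : ℝ → ℝ} (hg : Integrable g) (hm : Measurable g) (x : ℝ) :
    Integrable (fun t => g t * sgn2 x t) := by
  refine Integrable.mono' hg.abs
    ((hm.mul (measurable_sgn2_right x)).aestronglyMeasurable)
    (Filter.Eventually.of_forall fun t => ?_)
  rw [Real.norm_eq_abs, abs_mul]
  calc |g t| * |sgn2 x t| ≤ |g t| * 1 :=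
        mul_le_mul_of_nonneg_left (sgn2_abs_le x t) (abs_nonneg _)
    _ = |g t| := mul_one _

lemma inner_eq {g : ℝ → ℝ} (hg : Integrable g) (hm : Measurable g) {x : ℝ} (hx : (0:ℝ) < x) :
    (∫ t in Ioc (0:ℝ) x, g t) - ∫ t in Ioi x, g t
      = ∫ t in Ioi (0:ℝ), g t * sgn2 x t := by
  have hu : Ioc (0:ℝ) x ∪ Ioi x = Ioi 0 := Ioc_union_Ioi_eq_Ioi hx.le
  have hint := integrable_mul_sgn2 hg hm x
  rw [← hu, setIntegral_union (Ioc_disjoint_Ioi le_rfl) measurableSet_Ioi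
    hint.integrableOn hint.integrableOn]
  have h1 : ∫ t in Ioc (0:ℝ) x, g t * sgn2 x t = ∫ t in Ioc (0:ℝ) x, g t := by
    refine setIntegral_congr_fun measurableSet_Ioc fun t ht => ?_
    simp [sgn2, ht.2]
  have h2 : ∫ t in Ioi x, g t * sgn2 x t = ∫ t in Ioi x, (-1 : ℝ) * g t := by
    refine setIntegral_congr_fun measurableSet_Ioi fun t ht => ?_
    rw [sgn2, if_neg (not_le.mpr ht)]; ring
  rw [h1, h2, integral_const_mul]
  ring

/-- `wp` as an iterated integral against the sign kernel. -/
lemma wp_eq_iter {f g : ℝ → ℝ} (hg : Integrable g) (hm : Measurable g) :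
    wp f g = ∫ x in Ioi (0:ℝ), ∫ t in Ioi (0:ℝ), f x * g t * sgn2 x t := by
  unfold wp
  refine setIntegral_congr_fun measurableSet_Ioi fun x hx => ?_
  rw [inner_eq hg hm hx, ← integral_const_mul]
  exact integral_congr_ae (Filter.Eventually.of_forall fun t => by ring)

/-- Product integrability of the kernel integrand for two strategies. -/
lemma prod_integrable {f g : ℝ → ℝ} (hf : IsStrategy f) (hg : IsStrategy g) :
    Integrable (fun p : ℝ × ℝ => f p.1 * g p.2 * sgn2 p.1 p.2)
      ((volume.restrict (Ioi (0:ℝ))).prod (volume.restrict (Ioi (0:ℝ)))) := by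
  obtain ⟨hmf, ⟨Cf, hCf⟩, hposf, ⟨Rf, hRf⟩, -⟩ := hf
  obtain ⟨hmg, ⟨Cg, hCg⟩, hposg, ⟨Rg, hRg⟩, -⟩ := hg
  have hmeas : Measurable (fun p : ℝ × ℝ => f p.1 * g p.2 * sgn2 p.1 p.2) :=
    ((hmf.comp measurable_fst).mul (hmg.comp measurable_snd)).mul measurable_sgn2
  set S : Set (ℝ × ℝ) := (Icc (0:ℝ) Rf) ×ˢ (Icc (0:ℝ) Rg) with hS
  have hSmeas : MeasurableSet S := measurableSet_Icc.prod measurableSet_Icc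
  have hb : Integrable (S.indicator fun _ => Cf * Cg)
      ((volume.restrict (Ioi (0:ℝ))).prod (volume.restrict (Ioi (0:ℝ)))) := by
    rw [Measure.prod_restrict]
    refine Integrable.restrict ?_
    rw [integrable_indicator_iff hSmeas]
    refine integrableOn_const ?_
    rw [hS, Measure.prod_prod]
    exact (ENNReal.mul_lt_top measure_Icc_lt_top measure_Icc_lt_top).ne
  refine Integrable.mono' hb hmeas.aestronglyMeasurable (Filter.Eventually.of_forall ?_)
  rintro ⟨x, t⟩
  by_cases hx : (x, t) ∈ S
  · rw [indicator_of_mem hx]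
    obtain ⟨hx1, hx2⟩ := hx
    have h1 : |f x * g t * sgn2 x t| = f x * g t * |sgn2 x t| := by
      rw [abs_mul, abs_mul, abs_of_nonneg (hposf x), abs_of_nonneg (hposg t)]
    rw [Real.norm_eq_abs, h1]
    calc f x * g t * |sgn2 x t| ≤ f x * g t * 1 := by
          exact mul_le_mul_of_nonneg_left (sgn2_abs_le x t)
            (mul_nonneg (hposf x) (hposg t))
      _ = f x * g t := by ring
      _ ≤ Cf * Cg := mul_le_mul (hCf x) (hCg t) (hposg t)
            (le_trans (hposf x) (hCf x))
  · rw [indicator_of_notMem hx]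
    have h0 : f x = 0 ∨ g t = 0 := by
      by_contra h
      push_neg at h
      exact hx ⟨hRf h.1, hRg h.2⟩
    rcases h0 with h0 | h0 <;> simp [h0]

/-- Antisymmetry of the payoff for strategies. -/
lemma wp_antisymm {f g : ℝ → ℝ} (hf : IsStrategy f) (hg : IsStrategy g) :
    wp g f = - wp f g := by
  rw [wp_eq_iter hf.integrable hf.1, wp_eq_iter hg.integrable hg.1]
  have hswap := MeasureTheory.integral_integral_swap
    (f := fun x t => g x * f t * sgn2 x t)
    (μ := volume.restrict (Ioi (0:ℝ))) (ν := volume.restrict (Ioi (0:ℝ)))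
    (prod_integrable hg hf)
  rw [hswap, ← integral_neg]
  refine integral_congr_ae (Filter.Eventually.of_forall fun x => ?_)
  show (∫ t in Ioi (0:ℝ), g t * f x * sgn2 t x)
      = -(∫ t in Ioi (0:ℝ), f x * g t * sgn2 x t)
  rw [← integral_neg]
  refine integral_congr_ae ?_
  have hx : ∀ᵐ t ∂(volume.restrict (Ioi (0:ℝ))), t ≠ x := by
    refine ae_restrict_of_ae ?_
    rw [Filter.Eventually]
    have : {t : ℝ | t ≠ x}ᶜ = {x} := by ext t; simp [Classical.not_not]
    rw [mem_ae_iff, this]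
    exact measure_singleton x
  refine hx.mono fun t ht => ?_
  show g t * f x * sgn2 t x = -(f x * g t * sgn2 x t)
  rw [sgn2_anti ht]
  ring

/-- Integrability of the `wp` integrand. -/
lemma wp_integrand_integrable {h g : ℝ → ℝ} (hh : IsStrategy h) (hg : Integrable g) :
    IntegrableOn
      (fun x => h x * ((∫ t in Ioc (0:ℝ) x, g t) - ∫ t in Ioi x, g t))
      (Ioi (0:ℝ)) := by
  obtain ⟨hm, ⟨Ch, hCh⟩, hpos, ⟨R, hR⟩, -⟩ := hh
  set I : ℝ := ∫ t in Ioi (0:ℝ), g t with hI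
  set M : ℝ := ∫ t, |g t| with hM
  have hM0 : 0 ≤ M := integral_nonneg fun t => abs_nonneg _
  -- the inner factor, rewritten using the primitive, is continuous
  have hcont : Continuous (fun x : ℝ => 2 * (∫ t in (0:ℝ)..x, g t) - I) := by
    have := hg.continuous_primitive 0
    fun_prop
  have heq : ∀ x ∈ Ioi (0:ℝ),
      h x * ((∫ t in Ioc (0:ℝ) x, g t) - ∫ t in Ioi x, g t)
        = h x * (2 * (∫ t in (0:ℝ)..x, g t) - I) := by
    intro x hx
    have hu : Ioc (0:ℝ) x ∪ Ioi x = Ioi 0 := Ioc_union_Ioi_eq_Ioi (le_of_lt hx)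
    have hsum : (∫ t in Ioc (0:ℝ) x, g t) + ∫ t in Ioi x, g t = I := by
      rw [hI, ← hu, setIntegral_union (Ioc_disjoint_Ioi le_rfl) measurableSet_Ioi
        hg.integrableOn hg.integrableOn]
    have hprim : ∫ t in (0:ℝ)..x, g t = ∫ t in Ioc (0:ℝ) x, g t :=
      intervalIntegral.integral_of_le (le_of_lt hx)
    rw [hprim]
    have : (∫ t in Ioi x, g t) = I - ∫ t in Ioc (0:ℝ) x, g t := by linarith
    rw [this]; ring
  have hsm : AEStronglyMeasurable
      (fun x => h x * ((∫ t in Ioc (0:ℝ) x, g t) - ∫ t in Ioi x, g t))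
      (volume.restrict (Ioi (0:ℝ))) := by
    refine AEStronglyMeasurable.congr
      ((hm.mul hcont.measurable).aestronglyMeasurable) ?_
    exact (ae_restrict_mem measurableSet_Ioi).mono fun x hx => (heq x hx).symm
  have hb : Integrable ((Icc (0:ℝ) R).indicator fun _ => Ch * (2 * M))
      (volume.restrict (Ioi (0:ℝ))) := by
    refine Integrable.restrict ?_
    rw [integrable_indicator_iff measurableSet_Icc]
    exact integrableOn_const measure_Icc_lt_top.ne
  refine Integrable.mono' hb hsm (Filter.Eventually.of_forall ?_)
  intro x
  have hbnd : |(∫ t in Ioc (0:ℝ) x, g t) - ∫ t in Ioi x, g t| ≤ 2 * M := by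
    have h1 : |∫ t in Ioc (0:ℝ) x, g t| ≤ M := by
      calc |∫ t in Ioc (0:ℝ) x, g t| ≤ ∫ t in Ioc (0:ℝ) x, |g t| := by
            simpa [Real.norm_eq_abs] using
              norm_integral_le_integral_norm (μ := volume.restrict (Ioc (0:ℝ) x)) g
        _ ≤ M := by
            rw [hM]
            exact setIntegral_le_integral hg.abs
              (Filter.Eventually.of_forall fun t => abs_nonneg _)
    have h2 : |∫ t in Ioi x, g t| ≤ M := by
      calc |∫ t in Ioi x, g t| ≤ ∫ t in Ioi x, |g t| := by
            simpa [Real.norm_eq_abs] using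
              norm_integral_le_integral_norm (μ := volume.restrict (Ioi x)) g
        _ ≤ M := by
            rw [hM]
            exact setIntegral_le_integral hg.abs
              (Filter.Eventually.of_forall fun t => abs_nonneg _)
    calc |(∫ t in Ioc (0:ℝ) x, g t) - ∫ t in Ioi x, g t|
        ≤ |∫ t in Ioc (0:ℝ) x, g t| + |∫ t in Ioi x, g t| := abs_sub _ _
      _ ≤ 2 * M := by linarith
  by_cases hx : x ∈ Icc (0:ℝ) R
  · rw [indicator_of_mem hx, Real.norm_eq_abs, abs_mul, abs_of_nonneg (hpos x)]
    exact mul_le_mul (hCh x) hbnd (abs_nonneg _) (le_trans (hpos x) (hCh x))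
  · have h0 : h x = 0 := by
      by_contra h
      exact hx (hR h)
    rw [indicator_of_notMem hx, h0]
    simp

/-- Finite additivity of `wp` in its second argument. -/
lemma wp_sum {h : ℝ → ℝ} (hh : IsStrategy h) {ι : Type*} (A : Finset ι)
    (F : ι → ℝ → ℝ) (hF : ∀ ℓ ∈ A, IsStrategy (F ℓ)) :
    wp h (fun x => ∑ ℓ ∈ A, F ℓ x) = ∑ ℓ ∈ A, wp h (F ℓ) := by
  unfold wp
  have hint : ∀ ℓ ∈ A, Integrable (F ℓ) := fun ℓ hℓ => (hF ℓ hℓ).integrable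
  have heq : ∀ x ∈ Ioi (0:ℝ),
      h x * ((∫ t in Ioc (0:ℝ) x, ∑ ℓ ∈ A, F ℓ t) - ∫ t in Ioi x, ∑ ℓ ∈ A, F ℓ t)
        = ∑ ℓ ∈ A, h x * ((∫ t in Ioc (0:ℝ) x, F ℓ t) - ∫ t in Ioi x, F ℓ t) := by
    intro x _
    rw [integral_finset_sum A fun ℓ hℓ => (hint ℓ hℓ).integrableOn,
      integral_finset_sum A fun ℓ hℓ => (hint ℓ hℓ).integrableOn,
      ← Finset.sum_sub_distrib, Finset.mul_sum]
  rw [setIntegral_congr_fun measurableSet_Ioi heq]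
  exact integral_finset_sum A fun ℓ hℓ => wp_integrand_integrable hh (hint ℓ hℓ)

theorem stmt8 (C : ℝ) (hC : 0 < C) (n : ℕ) (hn : 2 ≤ n) (f : Fin n → ℝ → ℝ)
    (hstrat : ∀ k, IsStrategy (f k)) (hadm : ∀ k, mca (f k) ≤ C)
    (hzero : ∀ j k, wp (f k) (f j) = 0)
    (hpos : ∀ k, ∀ g : ℝ → ℝ, IsStrategy g → mca g ≤ C → 0 ≤ wp (f k) g) :
    ∀ k, ∀ g : ℝ → ℝ, IsStrategy g → mca g ≤ C →
      wp g (fun x => ∑ ℓ ∈ Finset.univ.erase k, f ℓ x) ≤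
        wp (f k) (fun x => ∑ ℓ ∈ Finset.univ.erase k, f ℓ x) := by
  intro k g hg hgC
  have h1 : wp (f k) (fun x => ∑ ℓ ∈ Finset.univ.erase k, f ℓ x) = 0 := by
    rw [wp_sum (hstrat k) _ f (fun ℓ _ => hstrat ℓ)]
    exact Finset.sum_eq_zero fun ℓ _ => hzero ℓ k
  have h2 : wp g (fun x => ∑ ℓ ∈ Finset.univ.erase k, f ℓ x) ≤ 0 := by
    rw [wp_sum hg _ f (fun ℓ _ => hstrat ℓ)]
    refine Finset.sum_nonpos fun ℓ _ => ?_
    rw [wp_antisymm (hstrat ℓ) hg]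
    simpa using hpos ℓ g hg hgC
  rw [h1]
  exact h2
end
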